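/- arXiv:2112.01498 — 7 statements merged into one kernel-verified Lean document; each statement's English description precedes it below -/
import Mathlib

section
/- Covariance of (n,k;α)-U(1) codes (Proposition 1): let k, m, α be natural numbers and set n = k + m. On the index type (Fin k → Bool) × (Fin m → Bool) let Q := Matrix.diagonal (fun p => ((wt p.1 + wt p.2 : ℕ) : ℂ)) be the total Hamming-weight operator, and for θ : ℝ let D θ := Matrix.diagonal (fun p => Complex.exp (Complex.I * θ * (wt p.1 + wt p.2))) and Dk θ := Matrix.diagonal (fun x : Fin k → Bool => Complex.exp (Complex.I * θ * wt x)). Suppose U ∈ Matrix.unitaryGroup ((Fin k → Bool) × (Fin m → Bool)) ℂ satisfies ↑U * Q = Q * ↑U, and ψ : (Fin m → Bool) → ℂ satisfies ψ f = 0 whenever wt f ≠ α. Then for every θ : ℝ and every ρ : Matrix (Fin k → Bool) (Fin k → Bool) ℂ, D θ * (↑U * (ρ ⊗ₖ Ψ) * (↑U)ᴴ) * (D θ)ᴴ = ↑U * ((Dk θ * ρ * (Dk θ)ᴴ) ⊗ₖ Ψ) * (↑U)ᴴ, where Ψ : Matrix (Fin m → Bool) (Fin m → Bool) ℂ is the rank-one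 matrix Ψ f g = ψ f * star (ψ g). -/
open Matrix Kronecker

/-- The Hamming weight of a basis state of `m` qubits. -/
def wt {m : ℕ} (f : Fin m → Bool) : ℕ := (Finset.univ.filter (fun i => f i = true)).card

/-- The total Hamming-weight (charge) operator on `k + m` qubits. -/
noncomputable def Qtot (k m : ℕ) :
    Matrix ((Fin k → Bool) × (Fin m → Bool)) ((Fin k → Bool) × (Fin m → Bool)) ℂ :=
  Matrix.diagonal (fun p => ((wt p.1 + wt p.2 : ℕ) : ℂ))

/-- The physical `U(1)` group action `e^{-iθT}` on `k + m` qubits. -/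
noncomputable def D (k m : ℕ) (θ : ℝ) :
    Matrix ((Fin k → Bool) × (Fin m → Bool)) ((Fin k → Bool) × (Fin m → Bool)) ℂ :=
  Matrix.diagonal (fun p => Complex.exp (Complex.I * (θ : ℂ) * ((wt p.1 + wt p.2 : ℕ) : ℂ)))

/-- The logical `U(1)` group action on `k` qubits. -/
noncomputable def Dk (k : ℕ) (θ : ℝ) : Matrix (Fin k → Bool) (Fin k → Bool) ℂ :=
  Matrix.diagonal (fun x : Fin k → Bool => Complex.exp (Complex.I * (θ : ℂ) * ((wt x : ℕ) : ℂ)))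

lemma scalar_key (a : ℂ) (ha : star a = -a) (wp wq c : ℕ) (r s : ℂ) :
    Complex.exp (a * ((wp + c : ℕ) : ℂ)) * (r * s) * star (Complex.exp (a * ((wq + c : ℕ) : ℂ)))
      = Complex.exp (a * (wp : ℂ)) * r * star (Complex.exp (a * (wq : ℂ))) * s := by
  have ha' : (starRingEnd ℂ) a = -a := ha
  have hs : ∀ n : ℕ, star (Complex.exp (a * (n : ℂ))) = Complex.exp (-a * (n : ℂ)) := by
    intro n
    rw [Complex.star_def, ← Complex.exp_conj, _root_.map_mul, map_natCast, ha']
  calc Complex.exp (a * ((wp + c : ℕ) : ℂ)) * (r * s) * star (Complex.exp (a * ((wq + c : ℕ) : ℂ)))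
      = (Complex.exp (a * ((wp + c : ℕ) : ℂ)) * Complex.exp (-a * ((wq + c : ℕ) : ℂ))) * (r * s) := by
        rw [hs]; ring
    _ = Complex.exp (a * ((wp + c : ℕ) : ℂ) + -a * ((wq + c : ℕ) : ℂ)) * (r * s) := by
        rw [Complex.exp_add]
    _ = Complex.exp (a * (wp : ℂ) + -a * (wq : ℂ)) * (r * s) := by
        congr 1; push_cast; ring
    _ = Complex.exp (a * (wp : ℂ)) * r * star (Complex.exp (a * (wq : ℂ))) * s := by
        rw [Complex.exp_add, hs]; ring

/-- **Covariance of (n,k;α)-U(1) codes** (Proposition 1): if a unitary `U` on `n = k + m` qubits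
commutes with the total Hamming-weight operator and the ancilla state `ψ` has definite Hamming
weight `α`, then the encoding `ρ ↦ U (ρ ⊗ Ψ) U†` is covariant with respect to the `U(1)` actions
generated by the Hamming-weight charge operators. -/
theorem u1_code_covariant (k m α : ℕ)
    (U : Matrix.unitaryGroup ((Fin k → Bool) × (Fin m → Bool)) ℂ)
    (hUQ : (U : Matrix ((Fin k → Bool) × (Fin m → Bool)) ((Fin k → Bool) × (Fin m → Bool)) ℂ) *
      Qtot k m = Qtot k m * (U : Matrix _ _ ℂ))
    (ψ : (Fin m → Bool) → ℂ) (hψ : ∀ f, wt f ≠ α → ψ f = 0)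
    (Ψ : Matrix (Fin m → Bool) (Fin m → Bool) ℂ)
    (hΨ : ∀ f g, Ψ f g = ψ f * star (ψ g))
    (θ : ℝ) (ρ : Matrix (Fin k → Bool) (Fin k → Bool) ℂ) :
    D k m θ * ((U : Matrix _ _ ℂ) * (ρ ⊗ₖ Ψ) * (U : Matrix _ _ ℂ)ᴴ) * (D k m θ)ᴴ =
      (U : Matrix _ _ ℂ) * ((Dk k θ * ρ * (Dk k θ)ᴴ) ⊗ₖ Ψ) * (U : Matrix _ _ ℂ)ᴴ := by
  have hU0 : ∀ p q, wt p.1 + wt p.2 ≠ wt q.1 + wt q.2 →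
      (U : Matrix ((Fin k → Bool) × (Fin m → Bool)) ((Fin k → Bool) × (Fin m → Bool)) ℂ) p q = 0 := by
    intro p q h
    have h1 := Matrix.ext_iff.mpr hUQ p q
    simp only [Qtot, Matrix.mul_diagonal, Matrix.diagonal_mul] at h1
    have hne : ((wt q.1 + wt q.2 : ℕ) : ℂ) ≠ ((wt p.1 + wt p.2 : ℕ) : ℂ) := by
      exact_mod_cast fun hh => h (by exact_mod_cast hh.symm)
    by_contra h0
    exact hne (mul_left_cancel₀ h0 (by rw [h1]; ring_nf))
  have hcomm : D k m θ * (U : Matrix _ _ ℂ) = (U : Matrix _ _ ℂ) * D k m θ := by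
    ext p q
    simp only [D, Matrix.diagonal_mul, Matrix.mul_diagonal]
    by_cases h : wt p.1 + wt p.2 = wt q.1 + wt q.2
    · rw [h, mul_comm]
    · simp [hU0 p q h]
  have hcommH : (U : Matrix _ _ ℂ)ᴴ * (D k m θ)ᴴ = (D k m θ)ᴴ * (U : Matrix _ _ ℂ)ᴴ := by
    rw [← Matrix.conjTranspose_mul, ← Matrix.conjTranspose_mul, hcomm]
  have key : D k m θ * (ρ ⊗ₖ Ψ) * (D k m θ)ᴴ = (Dk k θ * ρ * (Dk k θ)ᴴ) ⊗ₖ Ψ := by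
    ext p q
    simp only [D, Dk, Matrix.diagonal_conjTranspose, Matrix.diagonal_mul, Matrix.mul_diagonal,
      Matrix.kroneckerMap_apply, Pi.star_apply, hΨ]
    rcases eq_or_ne (ψ p.2) 0 with h2 | h2
    · simp [h2]
    rcases eq_or_ne (ψ q.2) 0 with h3 | h3
    · simp [h3]
    have hp2 : wt p.2 = α := by by_contra hh; exact h2 (hψ _ hh)
    have hq2 : wt q.2 = α := by by_contra hh; exact h3 (hψ _ hh)
    rw [hp2, hq2]
    exact scalar_key (Complex.I * θ) (by simp [Complex.ext_iff]) (wt p.1) (wt q.1) α (ρ p.1 q.1) (ψ p.2 * star (ψ q.2))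
  calc D k m θ * ((U : Matrix _ _ ℂ) * (ρ ⊗ₖ Ψ) * (U : Matrix _ _ ℂ)ᴴ) * (D k m θ)ᴴ
      = (D k m θ * (U : Matrix _ _ ℂ)) * (ρ ⊗ₖ Ψ) * ((U : Matrix _ _ ℂ)ᴴ * (D k m θ)ᴴ) := by
        simp only [Matrix.mul_assoc]
    _ = (U : Matrix _ _ ℂ) * (D k m θ * (ρ ⊗ₖ Ψ) * (D k m θ)ᴴ) * (U : Matrix _ _ ℂ)ᴴ := by
        rw [hcomm, hcommH]; simp only [Matrix.mul_assoc]
    _ = (U : Matrix _ _ ℂ) * ((Dk k θ * ρ * (Dk k θ)ᴴ) ⊗ₖ Ψ) * (U : Matrix _ _ ℂ)ᴴ := by rw [key]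
end

section
/- Haar averaging over SU(d)-symmetric unitaries equals symmetric-group averaging (Lemma D.1, 'lem:avg'): let d ≥ 1 and n ≥ 1, let G be the subgroup of Matrix.unitaryGroup (Fin n → Fin d) ℂ consisting of all V such that ↑V * tp n ↑W = tp n ↑W * ↑V for every W ∈ Matrix.unitaryGroup (Fin d) ℂ, and let μ be a bi-invariant probability measure on G. Then for every M : Matrix (Fin n → Fin d) (Fin n → Fin d) ℂ, ∫ V, ↑V * M * (↑V)ᴴ ∂μ = ((n)! : ℂ)⁻¹ • ∑ π : Equiv.Perm (Fin n), O π * M * (O π)ᴴ. -/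
open Matrix Kronecker MeasureTheory

/-- Entrywise (Borel) measurable structure on complex matrices. -/
noncomputable instance matrixMeasurableSpace {m n : Type*} : MeasurableSpace (Matrix m n ℂ) :=
  inferInstanceAs (MeasurableSpace (m → n → ℂ))

/-- The `m`-fold tensor power of a `d × d` matrix, acting on `m` qudits. -/
def tp {d : ℕ} (m : ℕ) (W : Matrix (Fin d) (Fin d) ℂ) :
    Matrix (Fin m → Fin d) (Fin m → Fin d) ℂ :=
  Matrix.of fun f g => ∏ i, W (f i) (g i)

/-- The permutation operator on `n` qudits associated to `π : S_n`. -/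
def permOp {d n : ℕ} (π : Equiv.Perm (Fin n)) :
    Matrix (Fin n → Fin d) (Fin n → Fin d) ℂ :=
  Matrix.of fun f g => if g = f ∘ π then 1 else 0

/-- The subgroup of the unitary group on `n` qudits consisting of the unitaries commuting with
every collective unitary `W^{⊗n}`, i.e. the `SU(d)`-symmetric unitaries. -/
def sudSymmetricGroup (d n : ℕ) : Subgroup (Matrix.unitaryGroup (Fin n → Fin d) ℂ) where
  carrier := {V | ∀ W ∈ Matrix.unitaryGroup (Fin d) ℂ,
    (V : Matrix (Fin n → Fin d) (Fin n → Fin d) ℂ) * tp n W = tp n W * (V : Matrix _ _ ℂ)}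
  one_mem' := by intro W _; simp
  mul_mem' := by
    intro a b ha hb W hW
    have hab : ((a * b : Matrix.unitaryGroup (Fin n → Fin d) ℂ) :
        Matrix (Fin n → Fin d) (Fin n → Fin d) ℂ) = (a : Matrix _ _ ℂ) * (b : Matrix _ _ ℂ) := rfl
    rw [hab, mul_assoc, hb W hW, ← mul_assoc, ha W hW, mul_assoc]
  inv_mem' := by
    intro a ha W hW
    set A : Matrix (Fin n → Fin d) (Fin n → Fin d) ℂ :=
      ((a : Matrix.unitaryGroup (Fin n → Fin d) ℂ) : Matrix (Fin n → Fin d) (Fin n → Fin d) ℂ)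
      with hA
    set B : Matrix (Fin n → Fin d) (Fin n → Fin d) ℂ :=
      ((a⁻¹ : Matrix.unitaryGroup (Fin n → Fin d) ℂ) : Matrix (Fin n → Fin d) (Fin n → Fin d) ℂ)
      with hB
    have h1 : B * A = 1 := by
      have := congrArg (fun x : Matrix.unitaryGroup (Fin n → Fin d) ℂ =>
        (x : Matrix (Fin n → Fin d) (Fin n → Fin d) ℂ)) (inv_mul_cancel a)
      simpa [hA, hB] using this
    have h2 : A * B = 1 := by
      have := congrArg (fun x : Matrix.unitaryGroup (Fin n → Fin d) ℂ =>
        (x : Matrix (Fin n → Fin d) (Fin n → Fin d) ℂ)) (mul_inv_cancel a)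
      simpa [hA, hB] using this
    show B * tp n W = tp n W * B
    calc B * tp n W = B * tp n W * (A * B) := by rw [h2, mul_one]
      _ = B * (tp n W * A) * B := by simp only [mul_assoc]
      _ = B * (A * tp n W) * B := by rw [← ha W hW]
      _ = (B * A) * (tp n W * B) := by simp only [mul_assoc]
      _ = tp n W * B := by rw [h1, one_mul]

namespace HaarAvgAux

/-- Tensor product of a tuple of matrices, over any commutative semiring. -/
def tpv {R : Type*} [CommSemiring R] {d : ℕ} (m : ℕ) (A : Fin m → Matrix (Fin d) (Fin d) R) :
    Matrix (Fin m → Fin d) (Fin m → Fin d) R :=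
  Matrix.of fun f g => ∏ i, A i (f i) (g i)

lemma tp_eq_tpv {d : ℕ} (m : ℕ) (W : Matrix (Fin d) (Fin d) ℂ) :
    tp m W = tpv m (fun _ => W) := rfl

lemma tpv_map {R S : Type*} [CommSemiring R] [CommSemiring S] (φ : R →+* S) {d : ℕ} (m : ℕ)
    (A : Fin m → Matrix (Fin d) (Fin d) R) :
    (tpv m A).map φ = tpv m (fun i => (A i).map φ) := by
  ext f g
  simp [tpv, map_prod]

lemma infinite_unimodular : Set.Infinite {z : ℂ | ‖z‖ = 1} := by
  have h0 : ∀ t : ℝ, (1 - (t : ℂ) * Complex.I) ≠ 0 := by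
    intro t h
    have := congrArg Complex.re h
    simp at this
  apply Set.infinite_of_injective_forall_mem
    (f := fun t : ℝ => (1 + (t : ℂ) * Complex.I) / (1 - (t : ℂ) * Complex.I))
  case hi =>
    intro a b hab
    simp only at hab
    rw [div_eq_div_iff (h0 a) (h0 b)] at hab
    simp only [Complex.ext_iff, Complex.add_im, Complex.mul_im, Complex.sub_im, Complex.one_im,
      Complex.one_re, Complex.add_re, Complex.sub_re, Complex.mul_re, Complex.I_im, Complex.I_re,
      Complex.ofReal_re, Complex.ofReal_im] at hab
    obtain ⟨h1, h2⟩ := hab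
    ring_nf at h1 h2
    linarith
  case hf =>
    intro t
    simp only [Set.mem_setOf_eq, norm_div]
    rw [div_eq_one_iff_eq (norm_ne_zero_iff.2 (h0 t))]
    rw [Complex.norm_def, Complex.norm_def, Complex.normSq_apply, Complex.normSq_apply]
    simp only [Complex.add_re, Complex.add_im, Complex.sub_re, Complex.sub_im, Complex.one_re,
      Complex.one_im, Complex.mul_re, Complex.mul_im, Complex.I_re, Complex.I_im,
      Complex.ofReal_re, Complex.ofReal_im]
    ring_nf


end HaarAvgAux

lemma mv_eq_zero_of_pi {m : ℕ} (S : Fin m → Set ℂ) (hS : ∀ i, (S i).Infinite)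
    (p : MvPolynomial (Fin m) ℂ)
    (hp : ∀ z : Fin m → ℂ, (∀ i, z i ∈ S i) → MvPolynomial.eval z p = 0) : p = 0 := by
  induction m with
  | zero =>
    have h0 := hp (fun _ => 0) (fun i => i.elim0)
    rw [MvPolynomial.eq_C_of_isEmpty p] at h0 ⊢
    simpa using h0
  | succ m ih =>
    have key : ∀ k, ((MvPolynomial.finSuccEquiv ℂ m) p).coeff k = 0 := by
      intro k
      apply ih (fun i => S i.succ) (fun i => hS i.succ)
      intro w hw
      have hmap : (Polynomial.map (MvPolynomial.eval w) ((MvPolynomial.finSuccEquiv ℂ m) p)) = 0 := by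
        apply Polynomial.eq_zero_of_infinite_isRoot
        apply (hS 0).mono
        intro y hy
        show Polynomial.IsRoot _ y
        unfold Polynomial.IsRoot
        rw [← MvPolynomial.eval_eq_eval_mv_eval']
        apply hp
        intro i
        refine Fin.cases ?_ ?_ i
        · simpa using hy
        · intro j; simpa using hw j
      rw [← Polynomial.coeff_map (MvPolynomial.eval w), hmap]
      simp
    have hq : (MvPolynomial.finSuccEquiv ℂ m) p = 0 := Polynomial.ext (by simpa using key)
    exact (MvPolynomial.finSuccEquiv ℂ m).injective (by simpa using hq)


namespace HaarAvgAux

variable {d n : ℕ}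

lemma map_C_eval {k : ℕ} {R : Type*} [CommSemiring R] {a b : Type*} (z : Fin k → R)
    (M : Matrix a b R) :
    (M.map (MvPolynomial.C (σ := Fin k))).map (MvPolynomial.eval z) = M := by
  rw [Matrix.map_map]
  convert Matrix.map_id M
  funext a
  simp

lemma comm_tp_of_eval {m : ℕ} (V : Matrix (Fin n → Fin d) (Fin n → Fin d) ℂ)
    (P : Matrix (Fin d) (Fin d) (MvPolynomial (Fin m) ℂ))
    (S : Fin m → Set ℂ) (hS : ∀ i, (S i).Infinite)
    (h : ∀ z : Fin m → ℂ, (∀ i, z i ∈ S i) →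
      V * tp n (P.map (MvPolynomial.eval z)) = tp n (P.map (MvPolynomial.eval z)) * V)
    (z : Fin m → ℂ) :
    V * tp n (P.map (MvPolynomial.eval z)) = tp n (P.map (MvPolynomial.eval z)) * V := by
  set Q : Matrix _ _ (MvPolynomial (Fin m) ℂ) :=
    (V.map (MvPolynomial.C (σ := Fin m))) * tpv n (fun _ => P)
      - tpv n (fun _ => P) * (V.map MvPolynomial.C) with hQdef
  have hmap : ∀ y : Fin m → ℂ,
      Q.map (MvPolynomial.eval y)
        = V * tp n (P.map (MvPolynomial.eval y)) - tp n (P.map (MvPolynomial.eval y)) * V := by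
    intro y
    rw [hQdef, Matrix.map_sub _ (fun a b => by simp), Matrix.map_mul, Matrix.map_mul,
      map_C_eval, tpv_map, tp_eq_tpv]
  have hQ0 : Q = 0 := by
    have hent : ∀ f g, Q f g = 0 := by
      intro f g
      apply mv_eq_zero_of_pi S hS
      intro y hy
      have h1 : Q.map (MvPolynomial.eval y) = 0 := by
        rw [hmap y, sub_eq_zero]
        exact h y hy
      have := congrFun (congrFun h1 f) g
      simpa [Matrix.map_apply] using this
    ext f g
    rw [hent f g, Matrix.zero_apply]
  have := hmap z
  rw [hQ0] at this
  have h0 : (0 : Matrix (Fin n → Fin d) (Fin n → Fin d) ℂ)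
      = V * tp n (P.map (MvPolynomial.eval z)) - tp n (P.map (MvPolynomial.eval z)) * V := by
    simpa using this
  exact (sub_eq_zero.mp h0.symm)

open scoped ComplexOrder in
lemma diagonal_unimodular_mem (z : Fin d → ℂ) (hz : ∀ i, ‖z i‖ = 1) :
    diagonal z ∈ Matrix.unitaryGroup (Fin d) ℂ := by
  rw [Matrix.mem_unitaryGroup_iff']
  rw [Matrix.star_eq_conjTranspose, Matrix.diagonal_conjTranspose, Matrix.diagonal_mul_diagonal]
  have h1 : ∀ i, star z i * z i = 1 := by
    intro i
    rw [Pi.star_apply, RCLike.star_def, Complex.conj_mul']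
    rw [hz i]
    norm_num
  rw [show (fun i => star z i * z i) = fun _ => (1 : ℂ) from funext h1]
  exact Matrix.diagonal_one

lemma comm_tp_udv (V : Matrix (Fin n → Fin d) (Fin n → Fin d) ℂ)
    (hV : ∀ W ∈ Matrix.unitaryGroup (Fin d) ℂ, V * tp n W = tp n W * V)
    (U W : Matrix (Fin d) (Fin d) ℂ) (hU : U ∈ Matrix.unitaryGroup (Fin d) ℂ)
    (hW : W ∈ Matrix.unitaryGroup (Fin d) ℂ) (D : Fin d → ℂ) :
    V * tp n (U * diagonal D * W) = tp n (U * diagonal D * W) * V := by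
  set P : Matrix (Fin d) (Fin d) (MvPolynomial (Fin d) ℂ) :=
    (U.map MvPolynomial.C) * diagonal (fun i => MvPolynomial.X i) * (W.map MvPolynomial.C)
    with hPdef
  have hPmap : ∀ z : Fin d → ℂ, P.map (MvPolynomial.eval z) = U * diagonal z * W := by
    intro z
    rw [hPdef, Matrix.map_mul, Matrix.map_mul, map_C_eval, map_C_eval,
      Matrix.diagonal_map (by simp)]
    simp
  have key := comm_tp_of_eval V P (fun _ => {z : ℂ | ‖z‖ = 1})
    (fun _ => infinite_unimodular) ?_ D
  · rwa [hPmap] at key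
  · intro z hz
    rw [hPmap]
    exact hV _ (mul_mem (mul_mem hU (diagonal_unimodular_mem z hz)) hW)

open scoped ComplexOrder in
lemma comm_tp_invertible (V : Matrix (Fin n → Fin d) (Fin n → Fin d) ℂ)
    (hV : ∀ W ∈ Matrix.unitaryGroup (Fin d) ℂ, V * tp n W = tp n W * V)
    (B : Matrix (Fin d) (Fin d) ℂ) (hB : IsUnit B.det) :
    V * tp n B = tp n B * V := by
  have hH : (Bᴴ * B).PosSemidef := Matrix.posSemidef_conjTranspose_mul_self B
  have hHer : (Bᴴ * B).IsHermitian := hH.1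
  set ev : Fin d → ℝ := hHer.eigenvalues with hev
  have hdet : (Bᴴ * B).det = ∏ i, (ev i : ℂ) := hHer.det_eq_prod_eigenvalues
  have hdet' : IsUnit (Bᴴ * B).det := by
    rw [Matrix.det_mul, Matrix.det_conjTranspose]
    exact (hB.star).mul hB
  have hev0 : ∀ i, ev i ≠ 0 := by
    intro i hi
    have hz : (Bᴴ * B).det = 0 := by
      rw [hdet]
      apply Finset.prod_eq_zero (Finset.mem_univ i)
      rw [hi]
      exact Complex.ofReal_zero
    rw [hz] at hdet'
    simp at hdet'
  have hevnn : ∀ i, 0 ≤ ev i := fun i => hH.eigenvalues_nonneg i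
  set S : Matrix (Fin d) (Fin d) ℂ := (hHer.eigenvectorUnitary : Matrix (Fin d) (Fin d) ℂ)
    with hSdef
  have hSmem : S ∈ Matrix.unitaryGroup (Fin d) ℂ := hHer.eigenvectorUnitary.2
  have hSs : Sᴴ * S = 1 := by
    rw [← Matrix.star_eq_conjTranspose]
    exact Matrix.mem_unitaryGroup_iff'.mp hSmem
  have hSs' : S * Sᴴ = 1 := by
    rw [← Matrix.star_eq_conjTranspose]
    exact Matrix.mem_unitaryGroup_iff.mp hSmem
  have hspec : Bᴴ * B = S * diagonal (fun i => (ev i : ℂ)) * Sᴴ := by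
    have h := hHer.spectral_theorem
    rw [← Matrix.star_eq_conjTranspose S, hSdef]
    convert h using 2
    rw [Unitary.conjStarAlgAut_apply]; rfl
  set Dc : Fin d → ℂ := fun i => ((Real.sqrt (ev i) : ℝ) : ℂ) with hDc
  have hDc0 : ∀ i, Dc i ≠ 0 := by
    intro i
    simp only [hDc, ne_eq, Complex.ofReal_eq_zero]
    exact Real.sqrt_ne_zero'.mpr (lt_of_le_of_ne (hevnn i) (Ne.symm (hev0 i)))
  have hDcsq : ∀ i, Dc i * Dc i = (ev i : ℂ) := by
    intro i
    simp only [hDc]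
    rw [← Complex.ofReal_mul, Real.mul_self_sqrt (hevnn i)]
  have hDcstar : ∀ i, star (Dc i) = Dc i := by
    intro i
    rw [hDc, RCLike.star_def, Complex.conj_ofReal]
  set E : Matrix (Fin d) (Fin d) ℂ := diagonal Dc with hE
  set E' : Matrix (Fin d) (Fin d) ℂ := diagonal (fun i => (Dc i)⁻¹) with hE'
  have hE'E : E' * E = 1 := by
    rw [hE, hE', Matrix.diagonal_mul_diagonal,
      show (fun i => (Dc i)⁻¹ * Dc i) = fun _ => (1 : ℂ) from
        funext fun i => inv_mul_cancel₀ (hDc0 i)]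
    exact Matrix.diagonal_one
  have hE'H : E'ᴴ = E' := by
    rw [hE', Matrix.diagonal_conjTranspose,
      show (star fun i => (Dc i)⁻¹) = fun i => (Dc i)⁻¹ from
        funext fun i => by rw [Pi.star_apply, star_inv₀, hDcstar i]]
  set U : Matrix (Fin d) (Fin d) ℂ := B * S * E' with hU
  have hUU : Uᴴ * U = 1 := by
    rw [hU, Matrix.conjTranspose_mul, Matrix.conjTranspose_mul, hE'H]
    have step1 : E' * (Sᴴ * Bᴴ) * (B * S * E')
        = E' * (Sᴴ * ((Bᴴ * B) * (S * E'))) := by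
      simp only [Matrix.mul_assoc]
    rw [step1, hspec]
    have step2 : E' * (Sᴴ * (S * diagonal (fun i => (ev i : ℂ)) * Sᴴ * (S * E')))
        = E' * ((Sᴴ * S) * diagonal (fun i => (ev i : ℂ)) * ((Sᴴ * S) * E')) := by
      simp only [Matrix.mul_assoc]
    rw [step2, hSs, Matrix.one_mul, Matrix.one_mul, hE', Matrix.diagonal_mul_diagonal,
      Matrix.diagonal_mul_diagonal,
      show (fun i => (Dc i)⁻¹ * ((ev i : ℂ) * (Dc i)⁻¹)) = fun _ => (1 : ℂ) from ?_]
    · exact Matrix.diagonal_one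
    · funext i
      rw [← hDcsq i]
      field_simp
      exact div_self (hDc0 i)
  have hUmem : U ∈ Matrix.unitaryGroup (Fin d) ℂ := by
    rw [Matrix.mem_unitaryGroup_iff', Matrix.star_eq_conjTranspose]
    exact hUU
  have hBdecomp : B = U * E * Sᴴ := by
    have h1 : U * E * Sᴴ = B * S * (E' * E) * Sᴴ := by
      rw [hU]; simp only [Matrix.mul_assoc]
    rw [h1, hE'E, Matrix.mul_one, Matrix.mul_assoc, hSs', Matrix.mul_one]
  rw [hBdecomp, hE]
  exact comm_tp_udv V hV U Sᴴ hUmem (by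
    rw [← Matrix.star_eq_conjTranspose]
    exact Unitary.star_mem hSmem) Dc

lemma det_shift_eq (A : Matrix (Fin d) (Fin d) ℂ) (c : ℂ) :
    A.charpoly.eval (-c) = (-1 : ℂ) ^ d * (A + diagonal (fun _ => c)).det := by
  have h1 : A.charpoly.eval (-c) = ((Matrix.charmatrix A).map (Polynomial.evalRingHom (-c))).det := by
    rw [Matrix.charpoly]
    exact (RingHom.map_det (Polynomial.evalRingHom (-c)) (Matrix.charmatrix A)) ▸ rfl
  have h2 : (Matrix.charmatrix A).map (Polynomial.evalRingHom (-c))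
      = -(A + diagonal (fun _ => c)) := by
    ext i j
    by_cases hij : i = j
    · subst hij
      simp [Matrix.charmatrix_apply_eq, Matrix.diagonal_apply_eq]
      ring
    · simp [Matrix.charmatrix_apply_ne _ _ _ hij, Matrix.diagonal_apply_ne _ hij]
  rw [h1, h2, Matrix.det_neg]
  simp

lemma comm_tp_all (V : Matrix (Fin n → Fin d) (Fin n → Fin d) ℂ)
    (hV : ∀ W ∈ Matrix.unitaryGroup (Fin d) ℂ, V * tp n W = tp n W * V)
    (A : Matrix (Fin d) (Fin d) ℂ) :
    V * tp n A = tp n A * V := by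
  set S0 : Set ℂ := {c | IsUnit (A + diagonal (fun _ : Fin d => c)).det} with hS0
  have hS0inf : S0.Infinite := by
    have hcp : A.charpoly ≠ 0 := A.charpoly_monic.ne_zero
    have hroots : {x : ℂ | A.charpoly.IsRoot x}.Finite := Polynomial.finite_setOf_isRoot hcp
    have hpre : {c : ℂ | A.charpoly.IsRoot (-c)}.Finite :=
      hroots.preimage (Function.Injective.injOn neg_injective)
    apply hpre.infinite_compl.mono
    intro c hc
    simp only [Set.mem_compl_iff, Set.mem_setOf_eq] at hc
    rw [hS0, Set.mem_setOf_eq, isUnit_iff_ne_zero]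
    intro h0
    apply hc
    show A.charpoly.eval (-c) = 0
    rw [det_shift_eq, h0, mul_zero]
  set P : Matrix (Fin d) (Fin d) (MvPolynomial (Fin 1) ℂ) :=
    A.map MvPolynomial.C + diagonal (fun _ => MvPolynomial.X 0) with hPdef
  have hPmap : ∀ z : Fin 1 → ℂ, P.map (MvPolynomial.eval z)
      = A + diagonal (fun _ => z 0) := by
    intro z
    rw [hPdef, Matrix.map_add _ (fun a b => by simp), map_C_eval,
      Matrix.diagonal_map (by simp)]
    simp
  have key := comm_tp_of_eval V P (fun _ => S0) (fun _ => hS0inf) ?_ (fun _ => 0)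
  · rw [hPmap] at key
    simpa using key
  · intro z hz
    rw [hPmap]
    exact comm_tp_invertible V hV _ (hz 0)

/-- The symmetrization of a tuple of matrices. -/
noncomputable def SymT (A : Fin n → Matrix (Fin d) (Fin d) ℂ) : Matrix (Fin n → Fin d) (Fin n → Fin d) ℂ :=
  ∑ π : Equiv.Perm (Fin n), tpv n (A ∘ π)

lemma sum_powerset_neg_one_pow_card_complex {α : Type*} [DecidableEq α] (x : Finset α) :
    (∑ T ∈ x.powerset, (-1 : ℂ) ^ T.card) = if x = ∅ then 1 else 0 := by
  have h := Finset.sum_powerset_neg_one_pow_card (x := x)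
  have h2 := congrArg (Int.cast : ℤ → ℂ) h
  push_cast at h2
  simpa using h2

lemma alt_count (R : Finset (Fin n)) :
    (∑ S ∈ Finset.univ.powerset.filter (fun S => R ⊆ S), ((-1 : ℂ)) ^ (n - S.card))
      = if R = Finset.univ then 1 else 0 := by
  have hcardRc : Rᶜ.card = n - R.card := by
    rw [Finset.card_compl, Fintype.card_fin]
  have key : (∑ S ∈ Finset.univ.powerset.filter (fun S => R ⊆ S), ((-1 : ℂ)) ^ (n - S.card))
      = ∑ T ∈ Rᶜ.powerset, ((-1 : ℂ)) ^ (Rᶜ.card - T.card) := by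
    apply Finset.sum_nbij' (i := fun S => S \ R) (j := fun T => R ∪ T)
    · intro S hS
      rw [Finset.mem_powerset]
      intro x hx
      rw [Finset.mem_sdiff] at hx
      rw [Finset.mem_compl]
      exact hx.2
    · intro T hT
      rw [Finset.mem_filter, Finset.mem_powerset]
      exact ⟨Finset.subset_univ _, Finset.subset_union_left⟩
    · intro S hS
      rw [Finset.mem_filter] at hS
      exact Finset.union_sdiff_of_subset hS.2
    · intro T hT
      rw [Finset.mem_powerset] at hT
      apply Finset.union_sdiff_cancel_left
      rw [Finset.disjoint_left]
      intro a haR haT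
      have := hT haT
      rw [Finset.mem_compl] at this
      exact this haR
    · intro S hS
      rw [Finset.mem_filter, Finset.mem_powerset] at hS
      have hsub : S \ R ⊆ Rᶜ := by
        intro x hx
        rw [Finset.mem_sdiff] at hx
        rw [Finset.mem_compl]
        exact hx.2
      congr 1
      rw [Finset.card_sdiff_of_subset hS.2, hcardRc]
      have h1 : S.card ≤ n := by
        have := Finset.card_le_card (Finset.subset_univ S)
        simpa using this
      have h2 : R.card ≤ S.card := Finset.card_le_card hS.2
      omega
  rw [key]
  have step : ∀ T ∈ Rᶜ.powerset, ((-1 : ℂ)) ^ (Rᶜ.card - T.card)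
      = ((-1 : ℂ)) ^ Rᶜ.card * ((-1 : ℂ)) ^ T.card := by
    intro T hT
    rw [Finset.mem_powerset] at hT
    have hle : T.card ≤ Rᶜ.card := Finset.card_le_card hT
    have : ((-1 : ℂ)) ^ (Rᶜ.card - T.card) * ((-1 : ℂ)) ^ T.card = ((-1 : ℂ)) ^ Rᶜ.card := by
      rw [← pow_add]
      congr 1
      omega
    have hsq : ((-1 : ℂ)) ^ T.card * ((-1 : ℂ)) ^ T.card = 1 := by
      rw [← pow_add, Even.neg_one_pow ⟨T.card, rfl⟩]
    calc ((-1 : ℂ)) ^ (Rᶜ.card - T.card)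
        = ((-1 : ℂ)) ^ (Rᶜ.card - T.card) * (((-1 : ℂ)) ^ T.card * ((-1 : ℂ)) ^ T.card) := by
          rw [hsq, mul_one]
      _ = ((-1 : ℂ)) ^ Rᶜ.card * ((-1 : ℂ)) ^ T.card := by rw [← mul_assoc, this]
  rw [Finset.sum_congr rfl step, ← Finset.mul_sum, sum_powerset_neg_one_pow_card_complex]
  by_cases hR : R = Finset.univ
  · subst hR
    simp
  · have hne : Rᶜ ≠ ∅ := by
      intro h
      exact hR ((Finset.compl_eq_empty_iff R).mp h)
    rw [if_neg hne, if_neg hR, mul_zero]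

lemma sym_eq (A : Fin n → Matrix (Fin d) (Fin d) ℂ) :
    SymT A = ∑ S ∈ (Finset.univ : Finset (Fin n)).powerset,
      ((-1 : ℂ) ^ (n - S.card)) • tp n (∑ j ∈ S, A j) := by
  classical
  ext f g
  rw [Matrix.sum_apply]
  have hterm : ∀ S ∈ (Finset.univ : Finset (Fin n)).powerset,
      (((-1 : ℂ) ^ (n - S.card)) • tp n (∑ j ∈ S, A j)) f g
        = ∑ φ : Fin n → Fin n,
            (if ∀ i, φ i ∈ S then (-1 : ℂ) ^ (n - S.card) else 0)
              * ∏ i, A (φ i) (f i) (g i) := by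
    intro S _
    rw [Matrix.smul_apply, smul_eq_mul]
    have h1 : tp n (∑ j ∈ S, A j) f g = ∑ φ ∈ Fintype.piFinset (fun _ : Fin n => S),
        ∏ i, A (φ i) (f i) (g i) := by
      show (∏ i, (∑ j ∈ S, A j) (f i) (g i)) = _
      simp only [Matrix.sum_apply]
      rw [Finset.prod_univ_sum]
    rw [h1, Finset.mul_sum]
    rw [show (∑ φ ∈ Fintype.piFinset (fun _ : Fin n => S),
          (-1 : ℂ) ^ (n - S.card) * ∏ i, A (φ i) (f i) (g i))
        = ∑ φ ∈ Finset.univ ∩ Fintype.piFinset (fun _ : Fin n => S),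
          (-1 : ℂ) ^ (n - S.card) * ∏ i, A (φ i) (f i) (g i) from by
      rw [Finset.univ_inter]]
    rw [← Finset.sum_ite_mem]
    apply Finset.sum_congr rfl
    intro φ _
    by_cases hc : ∀ i, φ i ∈ S
    · rw [if_pos (Fintype.mem_piFinset.mpr hc), if_pos hc]
    · rw [if_neg (fun hmem => hc (fun i => Fintype.mem_piFinset.mp hmem i)),
        if_neg hc, zero_mul]
  rw [Finset.sum_congr rfl hterm, Finset.sum_comm]
  show _ = ∑ φ : Fin n → Fin n, _
  have hφterm : ∀ φ : Fin n → Fin n,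
      (∑ S ∈ (Finset.univ : Finset (Fin n)).powerset,
        (if ∀ i, φ i ∈ S then (-1 : ℂ) ^ (n - S.card) else 0) * ∏ i, A (φ i) (f i) (g i))
      = (if Finset.image φ Finset.univ = Finset.univ then (1:ℂ) else 0)
          * ∏ i, A (φ i) (f i) (g i) := by
    intro φ
    rw [← Finset.sum_mul]
    congr 1
    rw [show (∑ S ∈ (Finset.univ : Finset (Fin n)).powerset,
          if ∀ i, φ i ∈ S then (-1 : ℂ) ^ (n - S.card) else 0)
        = ∑ S ∈ (Finset.univ : Finset (Fin n)).powerset,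
          if Finset.image φ Finset.univ ⊆ S then (-1 : ℂ) ^ (n - S.card) else 0 from
      Finset.sum_congr rfl fun S _ => if_congr (by simp [Finset.image_subset_iff]) rfl rfl]
    rw [← Finset.sum_filter]
    exact alt_count (Finset.image φ Finset.univ)
  rw [Finset.sum_congr rfl (fun φ _ => hφterm φ)]
  rw [show (∑ φ : Fin n → Fin n,
        (if Finset.image φ Finset.univ = Finset.univ then (1:ℂ) else 0)
          * ∏ i, A (φ i) (f i) (g i))
      = ∑ φ ∈ Finset.univ.filter (fun φ : Fin n → Fin n =>
          Finset.image φ Finset.univ = Finset.univ), ∏ i, A (φ i) (f i) (g i) from by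
    rw [Finset.sum_filter]
    exact Finset.sum_congr rfl fun φ _ => by rw [ite_mul, one_mul, zero_mul]]
  show SymT A f g = _
  rw [SymT, Matrix.sum_apply]
  apply Finset.sum_nbij' (i := fun (π : Equiv.Perm (Fin n)) => (π : Fin n → Fin n))
    (j := fun φ => if h : Function.Bijective φ then Equiv.ofBijective φ h else 1)
  · intro π _
    rw [Finset.mem_filter]
    refine ⟨Finset.mem_univ _, ?_⟩
    apply Finset.eq_univ_of_forall
    intro y
    exact Finset.mem_image.mpr ⟨π.symm y, Finset.mem_univ _, π.apply_symm_apply y⟩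
  · intro φ _
    exact Finset.mem_univ _
  · intro π _
    have hb : Function.Bijective (π : Fin n → Fin n) := π.bijective
    rw [dif_pos hb]
    exact Equiv.ext fun x => rfl
  · intro φ hφ
    rw [Finset.mem_filter] at hφ
    have hsurj : Function.Surjective φ := by
      intro y
      have hy : y ∈ Finset.image φ Finset.univ := by
        rw [hφ.2]; exact Finset.mem_univ y
      rcases Finset.mem_image.mp hy with ⟨x, _, hx⟩
      exact ⟨x, hx⟩
    have hb : Function.Bijective φ := Finite.surjective_iff_bijective.mp hsurj
    rw [dif_pos hb]
    rfl
  · intro π _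
    show (tpv n (A ∘ π)) f g = _
    rfl

lemma comm_SymT (V : Matrix (Fin n → Fin d) (Fin n → Fin d) ℂ)
    (hV : ∀ W ∈ Matrix.unitaryGroup (Fin d) ℂ, V * tp n W = tp n W * V)
    (A : Fin n → Matrix (Fin d) (Fin d) ℂ) :
    V * SymT A = SymT A * V := by
  rw [sym_eq, Finset.mul_sum, Finset.sum_mul]
  apply Finset.sum_congr rfl
  intro S _
  rw [mul_smul_comm, smul_mul_assoc, comm_tp_all V hV]

lemma comp_perm_eq_iff (σ : Equiv.Perm (Fin n)) (f g : Fin n → Fin d) :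
    g = f ∘ ⇑σ ↔ f = g ∘ ⇑σ⁻¹ := by
  constructor <;> rintro rfl <;> funext x <;> simp

lemma permOp_mul_apply (σ : Equiv.Perm (Fin n)) (M : Matrix (Fin n → Fin d) (Fin n → Fin d) ℂ)
    (f g : Fin n → Fin d) : (permOp (d := d) σ * M) f g = M (f ∘ ⇑σ) g := by
  rw [Matrix.mul_apply]
  rw [Finset.sum_congr rfl (fun h _ => by
    show permOp (d := d) σ f h * M h g = if h = f ∘ ⇑σ then M h g else 0
    by_cases hc : h = f ∘ ⇑σ
    · rw [if_pos hc]; show (if h = f ∘ ⇑σ then (1:ℂ) else 0) * M h g = M h g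
      rw [if_pos hc, one_mul]
    · rw [if_neg hc]; show (if h = f ∘ ⇑σ then (1:ℂ) else 0) * M h g = 0
      rw [if_neg hc, zero_mul])]
  rw [Finset.sum_ite_eq' Finset.univ (f ∘ ⇑σ) (fun h => M h g),
    if_pos (Finset.mem_univ _)]

lemma mul_permOp_apply (σ : Equiv.Perm (Fin n)) (M : Matrix (Fin n → Fin d) (Fin n → Fin d) ℂ)
    (f g : Fin n → Fin d) : (M * permOp (d := d) σ) f g = M f (g ∘ ⇑σ⁻¹) := by
  rw [Matrix.mul_apply]
  rw [Finset.sum_congr rfl (fun h _ => by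
    show M f h * permOp (d := d) σ h g = if h = g ∘ ⇑σ⁻¹ then M f h else 0
    by_cases hc : h = g ∘ ⇑σ⁻¹
    · rw [if_pos hc]
      show M f h * (if g = h ∘ ⇑σ then (1:ℂ) else 0) = M f h
      rw [if_pos ((comp_perm_eq_iff σ h g).mpr hc), mul_one]
    · rw [if_neg hc]
      show M f h * (if g = h ∘ ⇑σ then (1:ℂ) else 0) = 0
      rw [if_neg (fun hgh => hc ((comp_perm_eq_iff σ h g).mp hgh)), mul_zero])]
  rw [Finset.sum_ite_eq' Finset.univ (g ∘ ⇑σ⁻¹) (fun h => M f h),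
    if_pos (Finset.mem_univ _)]

lemma permOp_mul_tpv (σ : Equiv.Perm (Fin n)) (A : Fin n → Matrix (Fin d) (Fin d) ℂ) :
    permOp (d := d) σ * tpv n A = tpv n (A ∘ ⇑σ⁻¹) * permOp (d := d) σ := by
  ext f g
  rw [permOp_mul_apply, mul_permOp_apply]
  show (∏ i, A i (f (σ i)) (g i)) = ∏ i, A (σ⁻¹ i) (f i) (g (σ⁻¹ i))
  rw [← Equiv.prod_comp σ (fun i => A (σ⁻¹ i) (f i) (g (σ⁻¹ i)))]
  apply Finset.prod_congr rfl
  intro i _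
  rw [← Equiv.Perm.mul_apply, inv_mul_cancel, Equiv.Perm.one_apply]

lemma permOp_conjTranspose (σ : Equiv.Perm (Fin n)) :
    (permOp (d := d) σ)ᴴ = permOp (d := d) σ⁻¹ := by
  ext f g
  rw [Matrix.conjTranspose_apply]
  show star (if f = g ∘ ⇑σ then (1:ℂ) else 0) = (if g = f ∘ ⇑σ⁻¹ then (1:ℂ) else 0)
  by_cases hc : f = g ∘ ⇑σ
  · rw [if_pos hc, if_pos ((comp_perm_eq_iff σ g f).mp hc)]
    exact star_one ℂ
  · rw [if_neg hc, if_neg (fun h => hc ((comp_perm_eq_iff σ g f).mpr h))]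
    exact star_zero ℂ

lemma permOp_mul_permOp (σ τ : Equiv.Perm (Fin n)) :
    permOp (d := d) σ * permOp (d := d) τ = permOp (d := d) (σ * τ) := by
  ext f g
  rw [permOp_mul_apply]
  show (if g = (f ∘ ⇑σ) ∘ ⇑τ then (1:ℂ) else 0) = (if g = f ∘ ⇑(σ * τ) then (1:ℂ) else 0)
  rw [Equiv.Perm.coe_mul]
  rfl

lemma permOp_one : permOp (d := d) (1 : Equiv.Perm (Fin n)) = 1 := by
  ext f g
  show (if g = f ∘ id then (1:ℂ) else 0) = _
  rw [Matrix.one_apply]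
  simp [eq_comm]

lemma permOp_mem_unitaryGroup (σ : Equiv.Perm (Fin n)) :
    permOp (d := d) σ ∈ Matrix.unitaryGroup (Fin n → Fin d) ℂ := by
  rw [Matrix.mem_unitaryGroup_iff', Matrix.star_eq_conjTranspose, permOp_conjTranspose,
    permOp_mul_permOp, inv_mul_cancel, permOp_one]

lemma permOp_comm_tp (σ : Equiv.Perm (Fin n)) (W : Matrix (Fin d) (Fin d) ℂ) :
    permOp (d := d) σ * tp n W = tp n W * permOp (d := d) σ := by
  rw [tp_eq_tpv]
  have := permOp_mul_tpv σ (fun _ => W)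
  rw [this]
  rfl

lemma conj_perm_apply (π : Equiv.Perm (Fin n)) (M : Matrix (Fin n → Fin d) (Fin n → Fin d) ℂ)
    (f g : Fin n → Fin d) :
    (permOp (d := d) π * M * (permOp (d := d) π)ᴴ) f g = M (f ∘ ⇑π) (g ∘ ⇑π) := by
  rw [permOp_conjTranspose, mul_permOp_apply, permOp_mul_apply, inv_inv]

lemma sum_comp_inv_eq (M : Matrix (Fin n → Fin d) (Fin n → Fin d) ℂ) (f g : Fin n → Fin d) :
    ∑ π : Equiv.Perm (Fin n), M (f ∘ ⇑π) (g ∘ ⇑π)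
      = ∑ π : Equiv.Perm (Fin n), M (f ∘ ⇑π⁻¹) (g ∘ ⇑π⁻¹) := by
  apply Finset.sum_nbij' (i := fun π : Equiv.Perm (Fin n) => π⁻¹)
    (j := fun π : Equiv.Perm (Fin n) => π⁻¹)
  all_goals intro π _
  · exact Finset.mem_univ _
  · exact Finset.mem_univ _
  · exact inv_inv π
  · exact inv_inv π
  · rw [inv_inv]

lemma sum_conj_perm (M : Matrix (Fin n → Fin d) (Fin n → Fin d) ℂ) :
    ∑ π : Equiv.Perm (Fin n), permOp (d := d) π * M * (permOp (d := d) π)ᴴ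
      = ∑ p : (Fin n → Fin d) × (Fin n → Fin d), M p.1 p.2 •
          SymT (fun i => Matrix.single (p.1 i) (p.2 i) (1 : ℂ)) := by
  ext f g
  rw [Matrix.sum_apply, Matrix.sum_apply]
  rw [Finset.sum_congr rfl (fun π _ => conj_perm_apply π M f g)]
  have hrhs : ∀ p : (Fin n → Fin d) × (Fin n → Fin d),
      (M p.1 p.2 • SymT (fun i => Matrix.single (p.1 i) (p.2 i) (1 : ℂ))) f g
        = ∑ π : Equiv.Perm (Fin n),
            M p.1 p.2 * (if p = (f ∘ ⇑π⁻¹, g ∘ ⇑π⁻¹) then 1 else 0) := by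
    intro p
    rw [Matrix.smul_apply, smul_eq_mul, SymT, Matrix.sum_apply, Finset.mul_sum]
    apply Finset.sum_congr rfl
    intro π _
    congr 1
    show (∏ i, Matrix.single (p.1 (π i)) (p.2 (π i)) (1:ℂ) (f i) (g i)) = _
    have hsb : ∀ i, Matrix.single (p.1 (π i)) (p.2 (π i)) (1:ℂ) (f i) (g i)
        = if p.1 (π i) = f i ∧ p.2 (π i) = g i then (1:ℂ) else 0 := fun i => rfl
    rw [Finset.prod_congr rfl (fun i _ => hsb i)]
    by_cases hc : p = (f ∘ ⇑π⁻¹, g ∘ ⇑π⁻¹)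
    · rw [if_pos hc]
      apply Finset.prod_eq_one
      intro i _
      rw [if_pos]
      constructor
      · rw [hc]; show f (π⁻¹ (π i)) = f i; rw [← Equiv.Perm.mul_apply, inv_mul_cancel, Equiv.Perm.one_apply]
      · rw [hc]; show g (π⁻¹ (π i)) = g i; rw [← Equiv.Perm.mul_apply, inv_mul_cancel, Equiv.Perm.one_apply]
    · rw [if_neg hc]
      have hnall : ¬ ∀ i, (p.1 (π i) = f i ∧ p.2 (π i) = g i) := by
        intro hall
        apply hc
        have h1 : p.1 = f ∘ ⇑π⁻¹ := funext fun j => by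
          have := (hall (π⁻¹ j)).1
          rwa [← Equiv.Perm.mul_apply, mul_inv_cancel, Equiv.Perm.one_apply] at this
        have h2 : p.2 = g ∘ ⇑π⁻¹ := funext fun j => by
          have := (hall (π⁻¹ j)).2
          rwa [← Equiv.Perm.mul_apply, mul_inv_cancel, Equiv.Perm.one_apply] at this
        exact Prod.ext h1 h2
      push_neg at hnall
      obtain ⟨i, hi⟩ := hnall
      by_cases h1 : p.1 (π i) = f i
      · exact Finset.prod_eq_zero (Finset.mem_univ i) (if_neg (fun hand => (hi h1) hand.2))
      · exact Finset.prod_eq_zero (Finset.mem_univ i) (if_neg (fun hand => h1 hand.1))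
  rw [Finset.sum_congr rfl (fun p _ => hrhs p), Finset.sum_comm]
  have hin : ∀ π : Equiv.Perm (Fin n),
      (∑ p : (Fin n → Fin d) × (Fin n → Fin d),
        M p.1 p.2 * (if p = (f ∘ ⇑π⁻¹, g ∘ ⇑π⁻¹) then 1 else 0))
        = M (f ∘ ⇑π⁻¹) (g ∘ ⇑π⁻¹) := by
    intro π
    rw [Finset.sum_congr rfl (fun p (_ : p ∈ Finset.univ) => by
      rw [mul_ite, mul_one, mul_zero]), Finset.sum_ite_eq' Finset.univ
        ((f ∘ ⇑π⁻¹, g ∘ ⇑π⁻¹) : (Fin n → Fin d) × (Fin n → Fin d)) (fun p => M p.1 p.2),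
      if_pos (Finset.mem_univ _)]
  rw [Finset.sum_congr rfl (fun π _ => hin π)]
  exact sum_comp_inv_eq M f g


section Measure

variable {d n : ℕ}

/-- Coercion of an element of the SU(d)-symmetric group to a matrix. -/
def emb (V : sudSymmetricGroup d n) : Matrix (Fin n → Fin d) (Fin n → Fin d) ℂ :=
  ((V : Matrix.unitaryGroup (Fin n → Fin d) ℂ) : Matrix (Fin n → Fin d) (Fin n → Fin d) ℂ)

lemma emb_mul (g V : sudSymmetricGroup d n) : emb (g * V) = emb g * emb V := rfl

lemma emb_mem (V : sudSymmetricGroup d n) :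
    emb V ∈ Matrix.unitaryGroup (Fin n → Fin d) ℂ := V.1.2

lemma emb_star_mul (V : sudSymmetricGroup d n) : (emb V)ᴴ * emb V = 1 := by
  rw [← Matrix.star_eq_conjTranspose]
  exact (Unitary.mem_iff.mp (emb_mem V)).1

lemma emb_mul_star (V : sudSymmetricGroup d n) : emb V * (emb V)ᴴ = 1 := by
  rw [← Matrix.star_eq_conjTranspose]
  exact (Unitary.mem_iff.mp (emb_mem V)).2

lemma emb_inv (V : sudSymmetricGroup d n) : emb V⁻¹ = (emb V)ᴴ := by
  rw [← Matrix.star_eq_conjTranspose]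
  rfl

lemma emb_comm_tp (V : sudSymmetricGroup d n) (W : Matrix (Fin d) (Fin d) ℂ)
    (hW : W ∈ Matrix.unitaryGroup (Fin d) ℂ) :
    emb V * tp n W = tp n W * emb V := V.2 W hW

/-- The permutation operators as elements of the SU(d)-symmetric group. -/
def permElem (π : Equiv.Perm (Fin n)) : sudSymmetricGroup d n :=
  ⟨⟨permOp π, permOp_mem_unitaryGroup π⟩, fun W hW => permOp_comm_tp π W⟩

lemma emb_permElem (π : Equiv.Perm (Fin n)) : emb (permElem (d := d) π) = permOp π := rfl

lemma measurable_emb : Measurable (emb (d := d) (n := n)) :=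
  measurable_subtype_coe.comp measurable_subtype_coe

lemma measurable_entry (a b : Fin n → Fin d) :
    Measurable fun V : sudSymmetricGroup d n => emb V a b :=
  (measurable_pi_apply b).comp ((measurable_pi_apply a).comp measurable_emb)

lemma measurable_sandwich (M : Matrix (Fin n → Fin d) (Fin n → Fin d) ℂ)
    (a b : Fin n → Fin d) :
    Measurable fun V : sudSymmetricGroup d n => (emb V * M * (emb V)ᴴ) a b := by
  have hfun : (fun V : sudSymmetricGroup d n => (emb V * M * (emb V)ᴴ) a b)
      = fun V => ∑ c, (∑ e, emb V a e * M e c) * (starRingEnd ℂ) (emb V b c) := by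
    funext V
    simp [Matrix.mul_apply, Matrix.conjTranspose_apply, RCLike.star_def]
  rw [hfun]
  apply Finset.measurable_sum
  intro c _
  apply Measurable.mul
  · apply Finset.measurable_sum
    intro e _
    exact (measurable_entry a e).mul_const _
  · exact Complex.continuous_conj.measurable.comp (measurable_entry b c)

lemma norm_entry_le_one (V : sudSymmetricGroup d n) (a b : Fin n → Fin d) :
    ‖emb V a b‖ ≤ 1 :=
  entry_norm_bound_of_unitary (emb_mem V) a b

lemma norm_sandwich_le (M : Matrix (Fin n → Fin d) (Fin n → Fin d) ℂ)
    (V : sudSymmetricGroup d n) (a b : Fin n → Fin d) :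
    ‖(emb V * M * (emb V)ᴴ) a b‖ ≤ ∑ c, ∑ e, ‖M e c‖ := by
  have h1 : (emb V * M * (emb V)ᴴ) a b
      = ∑ c, (∑ e, emb V a e * M e c) * (starRingEnd ℂ) (emb V b c) := by
    simp [Matrix.mul_apply, Matrix.conjTranspose_apply, RCLike.star_def]
  rw [h1]
  refine (norm_sum_le _ _).trans (Finset.sum_le_sum fun c _ => ?_)
  rw [norm_mul]
  have h2 : ‖∑ e, emb V a e * M e c‖ ≤ ∑ e, ‖M e c‖ := by
    refine (norm_sum_le _ _).trans (Finset.sum_le_sum fun e _ => ?_)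
    rw [norm_mul]
    calc ‖emb V a e‖ * ‖M e c‖ ≤ 1 * ‖M e c‖ :=
          mul_le_mul_of_nonneg_right (norm_entry_le_one V a e) (norm_nonneg _)
      _ = ‖M e c‖ := one_mul _
  calc ‖∑ e, emb V a e * M e c‖ * ‖(starRingEnd ℂ) (emb V b c)‖
      ≤ (∑ e, ‖M e c‖) * 1 := by
        apply mul_le_mul h2 ?_ (norm_nonneg _) (Finset.sum_nonneg fun e _ => norm_nonneg _)
        rw [RCLike.norm_conj]
        exact norm_entry_le_one V b c
    _ = ∑ e, ‖M e c‖ := mul_one _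

variable (μ : Measure (sudSymmetricGroup d n)) [IsProbabilityMeasure μ]

set_option synthInstance.maxHeartbeats 1000000 in
lemma integrable_sandwich (M : Matrix (Fin n → Fin d) (Fin n → Fin d) ℂ)
    (a b : Fin n → Fin d) :
    Integrable (fun V : sudSymmetricGroup d n => (emb V * M * (emb V)ᴴ) a b) μ := by
  refine Integrable.mono' (integrable_const (∑ c, ∑ e, ‖M e c‖))
    (measurable_sandwich M a b).aestronglyMeasurable ?_
  exact ae_of_all μ fun V => norm_sandwich_le M V a b

lemma integral_sandwich (K : sudSymmetricGroup d n → Matrix (Fin n → Fin d) (Fin n → Fin d) ℂ)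
    (hint : ∀ a b, Integrable (fun V => K V a b) μ)
    (B C : Matrix (Fin n → Fin d) (Fin n → Fin d) ℂ) (f g : Fin n → Fin d) :
    ∫ V, (B * K V * C) f g ∂μ
      = (B * (Matrix.of fun a b => ∫ V, K V a b ∂μ) * C) f g := by
  have hexp : ∀ (N : Matrix (Fin n → Fin d) (Fin n → Fin d) ℂ),
      (B * N * C) f g = ∑ c, ∑ a, (B f a * C c g) * N a c := by
    intro N
    rw [Matrix.mul_apply]
    apply Finset.sum_congr rfl
    intro c _
    rw [Matrix.mul_apply, Finset.sum_mul]
    apply Finset.sum_congr rfl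
    intro a _
    ring
  have h1 : (fun V => (B * K V * C) f g)
      = fun V => ∑ c, ∑ a, (B f a * C c g) * K V a c := by
    funext V; exact hexp (K V)
  rw [h1, integral_finset_sum _ (fun c _ => integrable_finset_sum _
    (fun a _ => ((hint a c).const_mul _)))]
  rw [Finset.sum_congr rfl (fun c (_ : c ∈ Finset.univ) =>
    integral_finset_sum _ (fun a _ => ((hint a c).const_mul _)))]
  rw [hexp]
  apply Finset.sum_congr rfl
  intro c _
  apply Finset.sum_congr rfl
  intro a _
  rw [MeasureTheory.integral_const_mul, Matrix.of_apply]

lemma measurable_mul_left (g : sudSymmetricGroup d n) :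
    Measurable fun x : sudSymmetricGroup d n => g * x := by
  have h1 : Measurable fun x : sudSymmetricGroup d n => emb g * emb x := by
    apply measurable_pi_lambda
    intro a
    apply measurable_pi_lambda
    intro b
    have : (fun x : sudSymmetricGroup d n => (emb g * emb x) a b)
        = fun x => ∑ c, emb g a c * emb x c b := by
      funext x; rw [Matrix.mul_apply]
    rw [this]
    exact Finset.measurable_sum _ (fun c _ => (measurable_entry c b).const_mul _)
  exact (h1.subtype_mk).subtype_mk


/-- The twirl of `M` by `μ`, entrywise Bochner integral. -/
noncomputable def twirl (M : Matrix (Fin n → Fin d) (Fin n → Fin d) ℂ) :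
    Matrix (Fin n → Fin d) (Fin n → Fin d) ℂ :=
  Matrix.of fun a b => ∫ V, (emb V * M * (emb V)ᴴ) a b ∂μ

set_option synthInstance.maxHeartbeats 1000000 in
lemma twirl_invar (M : Matrix (Fin n → Fin d) (Fin n → Fin d) ℂ)
    (hleft : ∀ g : sudSymmetricGroup d n, μ.map (fun x => g * x) = μ)
    (g : sudSymmetricGroup d n) :
    emb g * twirl μ M * (emb g)ᴴ = twirl μ M := by
  have key : ∀ a b : Fin n → Fin d, ∫ V, (emb V * M * (emb V)ᴴ) a b ∂μ
      = (emb g * twirl μ M * (emb g)ᴴ) a b := by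
    intro a b
    conv_lhs => rw [← hleft g]
    rw [MeasureTheory.integral_map (measurable_mul_left g).aemeasurable
      (measurable_sandwich M a b).aestronglyMeasurable]
    have h2 : (fun V : sudSymmetricGroup d n => (emb (g * V) * M * (emb (g * V))ᴴ) a b)
        = fun V : sudSymmetricGroup d n
          => (emb g * (emb V * M * (emb V)ᴴ) * (emb g)ᴴ) a b := by
      funext V
      rw [emb_mul, Matrix.conjTranspose_mul]
      simp only [Matrix.mul_assoc]
    rw [h2]
    exact integral_sandwich μ _ (integrable_sandwich μ M) (emb g) ((emb g)ᴴ) a b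
  ext a b
  rw [show (twirl μ M) a b = ∫ V, (emb V * M * (emb V)ᴴ) a b ∂μ from rfl, key a b]

set_option synthInstance.maxHeartbeats 1000000 in
lemma twirl_comm (M : Matrix (Fin n → Fin d) (Fin n → Fin d) ℂ)
    (hleft : ∀ g : sudSymmetricGroup d n, μ.map (fun x => g * x) = μ)
    (g : sudSymmetricGroup d n) :
    emb g * twirl μ M = twirl μ M * emb g := by
  have h := twirl_invar μ M hleft g
  calc emb g * twirl μ M = emb g * twirl μ M * ((emb g)ᴴ * emb g) := by
        rw [emb_star_mul, Matrix.mul_one]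
    _ = (emb g * twirl μ M * (emb g)ᴴ) * emb g := by simp only [Matrix.mul_assoc]
    _ = twirl μ M * emb g := by rw [h]

set_option synthInstance.maxHeartbeats 1000000 in
set_option maxHeartbeats 2000000 in
lemma trace_twirl (M B : Matrix (Fin n → Fin d) (Fin n → Fin d) ℂ)
    (hB : ∀ V : sudSymmetricGroup d n, emb V * B = B * emb V) :
    Matrix.trace (twirl μ M * B) = Matrix.trace (M * B) := by
  have h1 : Matrix.trace (twirl μ M * B)
      = ∑ a, ∑ c, (∫ V, (emb V * M * (emb V)ᴴ) a c ∂μ) * B c a := by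
    rw [Matrix.trace]
    apply Finset.sum_congr rfl
    intro a _
    rw [Matrix.diag_apply, Matrix.mul_apply]
    rfl
  have h2 : ∀ a c : Fin n → Fin d, (∫ V, (emb V * M * (emb V)ᴴ) a c ∂μ) * B c a
      = ∫ V, (emb V * M * (emb V)ᴴ) a c * B c a ∂μ := by
    intro a c
    rw [MeasureTheory.integral_mul_const]
  rw [h1, Finset.sum_congr rfl (fun a (_ : a ∈ Finset.univ) => Finset.sum_congr rfl
    (fun c (_ : c ∈ Finset.univ) => h2 a c))]
  rw [Finset.sum_congr rfl (fun a (_ : a ∈ Finset.univ) =>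
    (integral_finset_sum _ (fun c _ => (integrable_sandwich μ M a c).mul_const _)).symm)]
  rw [(integral_finset_sum _ (fun a _ => integrable_finset_sum _
    (fun c _ => (integrable_sandwich μ M a c).mul_const _))).symm]
  have hpt : ∀ V : sudSymmetricGroup d n,
      (∑ a, ∑ c, (emb V * M * (emb V)ᴴ) a c * B c a) = Matrix.trace (M * B) := by
    intro V
    have e1 : (∑ a, ∑ c, (emb V * M * (emb V)ᴴ) a c * B c a)
        = Matrix.trace ((emb V * M * (emb V)ᴴ) * B) := by
      rw [Matrix.trace]
      apply Finset.sum_congr rfl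
      intro a _
      rw [Matrix.diag_apply, Matrix.mul_apply]
    have hswap : (emb V)ᴴ * B * emb V = B := by
      rw [Matrix.mul_assoc, ← hB V, ← Matrix.mul_assoc, emb_star_mul, Matrix.one_mul]
    rw [e1]
    calc Matrix.trace (emb V * M * (emb V)ᴴ * B)
        = Matrix.trace (emb V * (M * ((emb V)ᴴ * B))) := by simp only [Matrix.mul_assoc]
      _ = Matrix.trace ((M * ((emb V)ᴴ * B)) * emb V) := Matrix.trace_mul_comm _ _
      _ = Matrix.trace (M * ((emb V)ᴴ * B * emb V)) := by simp only [Matrix.mul_assoc]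
      _ = Matrix.trace (M * B) := by rw [hswap]
  have hconst : ∫ V, (∑ a, ∑ c, (emb V * M * (emb V)ᴴ) a c * B c a) ∂μ
      = ∫ _ : sudSymmetricGroup d n, Matrix.trace (M * B) ∂μ :=
    MeasureTheory.integral_congr_ae (MeasureTheory.ae_of_all μ hpt)
  rw [hconst, MeasureTheory.integral_const, probReal_univ, one_smul]

lemma trace_perm_sum (M B : Matrix (Fin n → Fin d) (Fin n → Fin d) ℂ)
    (hB : ∀ π : Equiv.Perm (Fin n), permOp (d := d) π * B = B * permOp (d := d) π) :
    Matrix.trace ((∑ π : Equiv.Perm (Fin n), permOp (d := d) π * M * (permOp (d := d) π)ᴴ) * B)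
      = (n.factorial : ℂ) * Matrix.trace (M * B) := by
  rw [Finset.sum_mul, Matrix.trace_sum]
  have hterm : ∀ π : Equiv.Perm (Fin n),
      Matrix.trace (permOp (d := d) π * M * (permOp (d := d) π)ᴴ * B)
        = Matrix.trace (M * B) := by
    intro π
    have hswap : (permOp (d := d) π)ᴴ * B * permOp (d := d) π = B := by
      rw [Matrix.mul_assoc, ← hB π, ← Matrix.mul_assoc, permOp_conjTranspose,
        permOp_mul_permOp, inv_mul_cancel, permOp_one, Matrix.one_mul]
    calc Matrix.trace (permOp (d := d) π * M * (permOp (d := d) π)ᴴ * B)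
        = Matrix.trace (permOp (d := d) π * (M * ((permOp (d := d) π)ᴴ * B))) := by
          simp only [Matrix.mul_assoc]
      _ = Matrix.trace ((M * ((permOp (d := d) π)ᴴ * B)) * permOp (d := d) π) :=
          Matrix.trace_mul_comm _ _
      _ = Matrix.trace (M * ((permOp (d := d) π)ᴴ * B * permOp (d := d) π)) := by
          simp only [Matrix.mul_assoc]
      _ = Matrix.trace (M * B) := by rw [hswap]
  rw [Finset.sum_congr rfl (fun π _ => hterm π), Finset.sum_const, Finset.card_univ,
    Fintype.card_perm, Fintype.card_fin, nsmul_eq_mul]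

lemma emb_comm_symsum (V : sudSymmetricGroup d n)
    (M : Matrix (Fin n → Fin d) (Fin n → Fin d) ℂ) :
    emb V * (∑ π : Equiv.Perm (Fin n), permOp (d := d) π * M * (permOp (d := d) π)ᴴ)
      = (∑ π : Equiv.Perm (Fin n), permOp (d := d) π * M * (permOp (d := d) π)ᴴ) * emb V := by
  rw [sum_conj_perm, Finset.mul_sum, Finset.sum_mul]
  apply Finset.sum_congr rfl
  intro p _
  rw [mul_smul_comm, smul_mul_assoc, comm_SymT (emb V) (fun W hW => emb_comm_tp V W hW)]

lemma eq_zero_of_trace_mul_conjT (Δ : Matrix (Fin n → Fin d) (Fin n → Fin d) ℂ)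
    (h : Matrix.trace (Δ * Δᴴ) = 0) : Δ = 0 := by
  have hform : Matrix.trace (Δ * Δᴴ) = ((∑ a, ∑ c, Complex.normSq (Δ a c) : ℝ) : ℂ) := by
    rw [Matrix.trace]
    push_cast
    apply Finset.sum_congr rfl
    intro a _
    rw [Matrix.diag_apply, Matrix.mul_apply]
    apply Finset.sum_congr rfl
    intro c _
    rw [Matrix.conjTranspose_apply, RCLike.star_def, Complex.mul_conj]
  rw [hform, Complex.ofReal_eq_zero] at h
  have hnn : ∀ a ∈ (Finset.univ : Finset (Fin n → Fin d)),
      (0:ℝ) ≤ ∑ c, Complex.normSq (Δ a c) :=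
    fun a _ => Finset.sum_nonneg fun c _ => Complex.normSq_nonneg _
  ext a c
  have h1 := (Finset.sum_eq_zero_iff_of_nonneg hnn).mp h a (Finset.mem_univ a)
  have h2 := (Finset.sum_eq_zero_iff_of_nonneg
    (fun c _ => Complex.normSq_nonneg _)).mp h1 c (Finset.mem_univ c)
  rw [Matrix.zero_apply]
  exact Complex.normSq_eq_zero.mp h2

end Measure

end HaarAvgAux

open HaarAvgAux in
/-- **Haar averaging over SU(d)-symmetric unitaries equals symmetric-group averaging**
(Lemma D.1): for any bi-invariant probability measure `μ` on the group of `SU(d)`-symmetric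
unitaries on `n` qudits and any matrix `M`, the twirl `∫ V M V† dμ(V)` equals the average of
`O_π M O_π†` over all permutations `π ∈ S_n` (entrywise Bochner integrals). -/
theorem haar_avg_eq_perm_avg (d n : ℕ) (hd : 1 ≤ d) (hn : 1 ≤ n)
    (μ : Measure (sudSymmetricGroup d n)) [IsProbabilityMeasure μ]
    (hleft : ∀ g : sudSymmetricGroup d n, μ.map (fun x => g * x) = μ)
    (hright : ∀ g : sudSymmetricGroup d n, μ.map (fun x => x * g) = μ)
    (M : Matrix (Fin n → Fin d) (Fin n → Fin d) ℂ) (f g : Fin n → Fin d) :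
    ∫ V : sudSymmetricGroup d n,
        (((V : Matrix.unitaryGroup (Fin n → Fin d) ℂ) : Matrix (Fin n → Fin d) (Fin n → Fin d) ℂ) *
          M * ((V : Matrix.unitaryGroup (Fin n → Fin d) ℂ) :
            Matrix (Fin n → Fin d) (Fin n → Fin d) ℂ)ᴴ) f g ∂μ =
      (((n.factorial : ℂ))⁻¹ •
        ∑ π : Equiv.Perm (Fin n), permOp (d := d) π * M * (permOp (d := d) π)ᴴ) f g := by
  classical
  set TM : Matrix (Fin n → Fin d) (Fin n → Fin d) ℂ :=
    ∑ π : Equiv.Perm (Fin n), permOp (d := d) π * M * (permOp (d := d) π)ᴴ with hTM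
  set T : Matrix (Fin n → Fin d) (Fin n → Fin d) ℂ := ((n.factorial : ℂ))⁻¹ • TM with hT
  set X : Matrix (Fin n → Fin d) (Fin n → Fin d) ℂ := twirl μ M with hX
  have hfact : (n.factorial : ℂ) ≠ 0 := Nat.cast_ne_zero.mpr (Nat.factorial_ne_zero n)
  have hXc : ∀ V : sudSymmetricGroup d n, emb V * X = X * emb V :=
    fun V => twirl_comm μ M hleft V
  have hTMc : ∀ V : sudSymmetricGroup d n, emb V * TM = TM * emb V :=
    fun V => emb_comm_symsum V M
  have hTc : ∀ V : sudSymmetricGroup d n, emb V * T = T * emb V := by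
    intro V
    rw [hT, mul_smul_comm, smul_mul_assoc, hTMc V]
  set Δ : Matrix (Fin n → Fin d) (Fin n → Fin d) ℂ := X - T with hΔ
  have hΔc : ∀ V : sudSymmetricGroup d n, emb V * Δ = Δ * emb V := by
    intro V
    rw [hΔ, Matrix.mul_sub, Matrix.sub_mul, hXc, hTc]
  have hΔHc : ∀ V : sudSymmetricGroup d n, emb V * Δᴴ = Δᴴ * emb V := by
    intro V
    have h1 := hΔc V⁻¹
    rw [emb_inv] at h1
    have h2 := congrArg Matrix.conjTranspose h1
    rw [Matrix.conjTranspose_mul, Matrix.conjTranspose_mul,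
      Matrix.conjTranspose_conjTranspose] at h2
    exact h2.symm
  have htX : Matrix.trace (X * Δᴴ) = Matrix.trace (M * Δᴴ) := trace_twirl μ M Δᴴ hΔHc
  have htT : Matrix.trace (T * Δᴴ) = Matrix.trace (M * Δᴴ) := by
    rw [hT, Matrix.smul_mul, Matrix.trace_smul, hTM]
    rw [trace_perm_sum M Δᴴ (fun π => by
      have h3 := hΔHc (permElem π)
      rwa [emb_permElem] at h3)]
    rw [smul_eq_mul, ← mul_assoc, inv_mul_cancel₀ hfact, one_mul]
  have hΔ0 : Δ = 0 := by
    apply eq_zero_of_trace_mul_conjT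
    have h4 : Matrix.trace (Δ * Δᴴ) = Matrix.trace (X * Δᴴ) - Matrix.trace (T * Δᴴ) := by
      rw [hΔ, Matrix.sub_mul, Matrix.trace_sub]
    rw [h4, htX, htT, sub_self]
  have hXT : X = T := sub_eq_zero.mp hΔ0
  exact congrFun (congrFun hXT f) g
end

section
/- Average conjugated outer product over Hamming-weight-preserving unitaries (Eq. (eq:avg-rhoxx)): let n, w, w' : ℕ, let G be the subgroup of Matrix.unitaryGroup (Fin n → Bool) ℂ consisting of all U that commute with Q := Matrix.diagonal (fun f => ((wt f : ℕ) : ℂ)), and let μ be a bi-invariant probability measure on G. Let u, v : (Fin n → Bool) → ℂ satisfy u f = 0 whenever wt f ≠ w and v f = 0 whenever wt f ≠ w', and let M : Matrix (Fin n → Bool) (Fin n → Bool) ℂ be M f g = u f * star (v g). Then ∫ U, ↑U * M * (↑U)ᴴ ∂μ = if w = w' then ((∑ f, star (v f) * u f) / (n.choose w : ℂ)) • Π else 0, where Π := Matrix.diagonal (fun f => if wt f = w then (1 : ℂ) else 0) is the projector onto the subspace of Hamming weight w. -/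
open Matrix MeasureTheory
set_option maxHeartbeats 1000000
set_option synthInstance.maxHeartbeats 400000

/-- The Hamming-weight (charge) operator on `n` qubits. -/
noncomputable def Qn (n : ℕ) : Matrix (Fin n → Bool) (Fin n → Bool) ℂ :=
  Matrix.diagonal (fun f => ((wt f : ℕ) : ℂ))

/-- The subgroup of the unitary group on `n` qubits consisting of the unitaries commuting with
the Hamming-weight operator, i.e. the charge-conserving unitaries. -/
noncomputable def u1SymmetricGroup (n : ℕ) : Subgroup (Matrix.unitaryGroup (Fin n → Bool) ℂ) where
  carrier := {U | (U : Matrix (Fin n → Bool) (Fin n → Bool) ℂ) * Qn n =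
    Qn n * (U : Matrix _ _ ℂ)}
  one_mem' := by simp
  mul_mem' := by
    intro a b ha hb
    have hab : ((a * b : Matrix.unitaryGroup (Fin n → Bool) ℂ) :
        Matrix (Fin n → Bool) (Fin n → Bool) ℂ) = (a : Matrix _ _ ℂ) * (b : Matrix _ _ ℂ) := rfl
    show ((a * b : Matrix.unitaryGroup (Fin n → Bool) ℂ) : Matrix _ _ ℂ) * Qn n =
      Qn n * ((a * b : Matrix.unitaryGroup (Fin n → Bool) ℂ) : Matrix _ _ ℂ)
    rw [hab, mul_assoc, hb, ← mul_assoc, ha, mul_assoc]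
  inv_mem' := by
    intro a ha
    set A : Matrix (Fin n → Bool) (Fin n → Bool) ℂ :=
      ((a : Matrix.unitaryGroup (Fin n → Bool) ℂ) : Matrix (Fin n → Bool) (Fin n → Bool) ℂ)
      with hA
    set B : Matrix (Fin n → Bool) (Fin n → Bool) ℂ :=
      ((a⁻¹ : Matrix.unitaryGroup (Fin n → Bool) ℂ) : Matrix (Fin n → Bool) (Fin n → Bool) ℂ)
      with hB
    have h1 : B * A = 1 := by
      have := congrArg (fun x : Matrix.unitaryGroup (Fin n → Bool) ℂ =>
        (x : Matrix (Fin n → Bool) (Fin n → Bool) ℂ)) (inv_mul_cancel a)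
      simpa [hA, hB] using this
    have h2 : A * B = 1 := by
      have := congrArg (fun x : Matrix.unitaryGroup (Fin n → Bool) ℂ =>
        (x : Matrix (Fin n → Bool) (Fin n → Bool) ℂ)) (mul_inv_cancel a)
      simpa [hA, hB] using this
    have ha' : A * Qn n = Qn n * A := ha
    show B * Qn n = Qn n * B
    calc B * Qn n = B * Qn n * (A * B) := by rw [h2, mul_one]
      _ = B * (Qn n * A) * B := by simp only [mul_assoc]
      _ = B * (A * Qn n) * B := by rw [← ha']
      _ = (B * A) * (Qn n * B) := by simp only [mul_assoc]
      _ = Qn n * B := by rw [h1, one_mul]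

section Helpers

variable {n : ℕ}

/-- coercion of a group element to a matrix. -/
noncomputable def cm (U : u1SymmetricGroup n) : Matrix (Fin n → Bool) (Fin n → Bool) ℂ :=
  ((U : Matrix.unitaryGroup (Fin n → Bool) ℂ) : Matrix (Fin n → Bool) (Fin n → Bool) ℂ)

lemma cm_mul (x y : u1SymmetricGroup n) : cm (x * y) = cm x * cm y := rfl

lemma cm_comm (U : u1SymmetricGroup n) : cm U * Qn n = Qn n * cm U := U.2

lemma cm_entry_zero (U : u1SymmetricGroup n) {a b : Fin n → Bool} (h : wt a ≠ wt b) :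
    cm U a b = 0 := by
  have h2 := congrFun (congrFun (cm_comm U) a) b
  rw [Qn, Matrix.mul_diagonal, Matrix.diagonal_mul] at h2
  have hc : ((wt a : ℂ)) ≠ (wt b : ℂ) := by exact_mod_cast h
  have : cm U a b * ((wt b : ℂ) - (wt a : ℂ)) = 0 := by ring_nf; linear_combination h2
  rcases mul_eq_zero.1 this with h' | h'
  · exact h'
  · exact absurd (sub_eq_zero.1 h').symm hc

lemma cm_star_mul (U : u1SymmetricGroup n) : (cm U)ᴴ * cm U = 1 := by
  have := Matrix.UnitaryGroup.star_mul_self U.1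
  simpa [Matrix.star_eq_conjTranspose, cm] using this

lemma unitary_entry_norm_le (U : Matrix.unitaryGroup (Fin n → Bool) ℂ) (a b : Fin n → Bool) :
    ‖(U : Matrix (Fin n → Bool) (Fin n → Bool) ℂ) a b‖ ≤ 1 := by
  have h := Matrix.UnitaryGroup.star_mul_self U
  have h2 := congrFun (congrFun h b) b
  rw [Matrix.mul_apply, Matrix.one_apply_eq] at h2
  have h3 : (∑ c, (Complex.normSq ((U : Matrix (Fin n → Bool) (Fin n → Bool) ℂ) c b) : ℂ)) = 1 := by
    rw [← h2]
    refine Finset.sum_congr rfl (fun c _ => ?_)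
    rw [Matrix.star_apply, mul_comm, Complex.star_def, Complex.mul_conj]
  have h4 : (∑ c, Complex.normSq ((U : Matrix (Fin n → Bool) (Fin n → Bool) ℂ) c b)) = 1 := by
    exact_mod_cast h3
  have h5 : Complex.normSq ((U : Matrix (Fin n → Bool) (Fin n → Bool) ℂ) a b) ≤ 1 := by
    rw [← h4]
    exact Finset.single_le_sum
      (f := fun c => Complex.normSq ((U : Matrix (Fin n → Bool) (Fin n → Bool) ℂ) c b))
      (fun c _ => Complex.normSq_nonneg _) (Finset.mem_univ a)
  have h6 : ‖(U : Matrix (Fin n → Bool) (Fin n → Bool) ℂ) a b‖ ^ 2 ≤ 1 := by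
    rw [Complex.sq_norm]
    exact h5
  nlinarith [norm_nonneg ((U : Matrix (Fin n → Bool) (Fin n → Bool) ℂ) a b)]

lemma conj_apply (A X : Matrix (Fin n → Bool) (Fin n → Bool) ℂ) (f g : Fin n → Bool) :
    (A * X * Aᴴ) f g = ∑ b, ∑ a, A f a * X a b * star (A g b) := by
  simp [Matrix.mul_apply, Matrix.conjTranspose_apply, Finset.sum_mul]

/-- the integrand. -/
noncomputable def Ffun (M : Matrix (Fin n → Bool) (Fin n → Bool) ℂ) (f g : Fin n → Bool)
    (U : u1SymmetricGroup n) : ℂ :=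
  (cm U * M * (cm U)ᴴ) f g

lemma measurable_cm_entry (a b : Fin n → Bool) :
    Measurable (fun U : u1SymmetricGroup n => cm U a b) :=
  (measurable_pi_apply b).comp ((measurable_pi_apply a).comp
    ((measurable_subtype_coe (α := Matrix (Fin n → Bool) (Fin n → Bool) ℂ)).comp measurable_subtype_coe))

lemma measurable_Ffun (M : Matrix (Fin n → Bool) (Fin n → Bool) ℂ) (f g : Fin n → Bool) :
    Measurable (Ffun M f g) := by
  have : Ffun M f g = fun U => ∑ b, ∑ a, cm U f a * M a b * star (cm U g b) := by
    funext U; exact conj_apply _ _ _ _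
  rw [this]
  exact Finset.measurable_sum _ (fun b _ => Finset.measurable_sum _ (fun a _ =>
    (((measurable_cm_entry f a).mul_const (M a b)).mul (continuous_star.measurable.comp (measurable_cm_entry g b)))))

lemma norm_Ffun_le (M : Matrix (Fin n → Bool) (Fin n → Bool) ℂ) (f g : Fin n → Bool)
    (U : u1SymmetricGroup n) : ‖Ffun M f g U‖ ≤ ∑ b, ∑ a, ‖M a b‖ := by
  rw [Ffun, conj_apply]
  refine le_trans (norm_sum_le _ _) (Finset.sum_le_sum fun b _ => ?_)
  refine le_trans (norm_sum_le _ _) (Finset.sum_le_sum fun a _ => ?_)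
  rw [norm_mul, norm_mul, norm_star]
  calc ‖cm U f a‖ * ‖M a b‖ * ‖cm U g b‖
      ≤ 1 * ‖M a b‖ * 1 := by
        refine mul_le_mul (mul_le_mul (unitary_entry_norm_le _ _ _) le_rfl (norm_nonneg _)
          (by linarith [unitary_entry_norm_le U.1 f a])) (unitary_entry_norm_le _ _ _)
          (norm_nonneg _) (by positivity)
    _ = ‖M a b‖ := by ring

lemma integrable_Ffun (μ : Measure (u1SymmetricGroup n)) [IsProbabilityMeasure μ]
    (M : Matrix (Fin n → Bool) (Fin n → Bool) ℂ) (f g : Fin n → Bool) :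
    Integrable (Ffun M f g) μ :=
  (integrable_const (∑ b, ∑ a, ‖M a b‖)).mono'
    (measurable_Ffun M f g).aestronglyMeasurable
    (Filter.Eventually.of_forall (norm_Ffun_le M f g))

lemma measurable_mul_left (P : u1SymmetricGroup n) :
    Measurable (fun x : u1SymmetricGroup n => P * x) := by
  have h0 : Measurable (fun x : u1SymmetricGroup n => cm P * cm x) := by
    apply measurable_pi_lambda
    intro a
    apply measurable_pi_lambda
    intro b
    have : (fun x : u1SymmetricGroup n => (cm P * cm x) a b)
        = fun x => ∑ c, cm P a c * cm x c b := by
      funext x; rw [Matrix.mul_apply]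
    rw [this]
    exact Finset.measurable_sum _ (fun c _ => (measurable_cm_entry c b).const_mul _)
  exact (h0.subtype_mk).subtype_mk

lemma Ffun_mul (M : Matrix (Fin n → Bool) (Fin n → Bool) ℂ) (f g : Fin n → Bool)
    (P U : u1SymmetricGroup n) :
    Ffun M f g (P * U) = ∑ b, ∑ a, cm P f a * Ffun M a b U * star (cm P g b) := by
  have h1 : cm (P * U) * M * (cm (P * U))ᴴ
      = cm P * (cm U * M * (cm U)ᴴ) * (cm P)ᴴ := by
    rw [cm_mul, Matrix.conjTranspose_mul]
    noncomm_ring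
  rw [Ffun, h1, conj_apply]
  rfl

lemma conj_invariance (μ : Measure (u1SymmetricGroup n)) [IsProbabilityMeasure μ]
    (hleft : ∀ g : u1SymmetricGroup n, μ.map (fun x => g * x) = μ)
    (M : Matrix (Fin n → Bool) (Fin n → Bool) ℂ) (P : u1SymmetricGroup n) (f g : Fin n → Bool) :
    ∫ U, Ffun M f g U ∂μ
      = ∑ b, ∑ a, cm P f a * (∫ U, Ffun M a b U ∂μ) * star (cm P g b) := by
  have step1 : ∫ U, Ffun M f g U ∂μ = ∫ U, Ffun M f g (P * U) ∂μ := by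
    conv_lhs => rw [← hleft P]
    refine integral_map (measurable_mul_left P).aemeasurable ?_
    rw [hleft P]
    exact (measurable_Ffun M f g).aestronglyMeasurable
  rw [step1]
  have step2 : ∫ U, Ffun M f g (P * U) ∂μ
      = ∫ U, ∑ b, ∑ a, cm P f a * Ffun M a b U * star (cm P g b) ∂μ := by
    refine integral_congr_ae (Filter.Eventually.of_forall fun U => ?_)
    exact Ffun_mul M f g P U
  rw [step2]
  rw [integral_finset_sum _ (fun b _ => integrable_finset_sum _ (fun a _ =>
    (((integrable_Ffun μ M a b).const_mul _).mul_const _)))]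
  refine Finset.sum_congr rfl fun b _ => ?_
  rw [integral_finset_sum _ (fun a _ => (((integrable_Ffun μ M a b).const_mul _).mul_const _))]
  refine Finset.sum_congr rfl fun a _ => ?_
  rw [integral_mul_const, integral_const_mul]

lemma diag_mem_unitary (d : (Fin n → Bool) → ℂ) (hd : ∀ x, d x * star (d x) = 1) :
    Matrix.diagonal d ∈ Matrix.unitaryGroup (Fin n → Bool) ℂ := by
  rw [Matrix.mem_unitaryGroup_iff, Matrix.star_eq_conjTranspose, Matrix.diagonal_conjTranspose,
    Matrix.diagonal_mul_diagonal]
  have : (fun x => d x * star d x) = fun _ => (1 : ℂ) := funext fun x => hd x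
  rw [this]
  exact Matrix.diagonal_one

lemma diag_comm_Qn (d : (Fin n → Bool) → ℂ) :
    Matrix.diagonal d * Qn n = Qn n * Matrix.diagonal d := by
  rw [Qn, Matrix.diagonal_mul_diagonal, Matrix.diagonal_mul_diagonal]
  exact congrArg Matrix.diagonal (funext fun x => mul_comm _ _)

/-- the diagonal element of the symmetric group. -/
noncomputable def diagEl (d : (Fin n → Bool) → ℂ) (hd : ∀ x, d x * star (d x) = 1) :
    u1SymmetricGroup n :=
  ⟨⟨Matrix.diagonal d, diag_mem_unitary d hd⟩, diag_comm_Qn d⟩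

lemma cm_diagEl (d : (Fin n → Bool) → ℂ) (hd : ∀ x, d x * star (d x) = 1) :
    cm (diagEl d hd) = Matrix.diagonal d := rfl

lemma diag_collapse (d : (Fin n → Bool) → ℂ) (I : (Fin n → Bool) → (Fin n → Bool) → ℂ)
    (f g : Fin n → Bool) :
    ∑ b, ∑ a, Matrix.diagonal d f a * I a b * star (Matrix.diagonal d g b)
      = d f * I f g * star (d g) := by
  simp [Matrix.diagonal_apply, apply_ite (star : ℂ → ℂ), ite_mul, mul_ite,
    Finset.sum_ite_eq, Finset.sum_ite_eq']

lemma signEntryZero (μ : Measure (u1SymmetricGroup n)) [IsProbabilityMeasure μ]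
    (hleft : ∀ g : u1SymmetricGroup n, μ.map (fun x => g * x) = μ)
    (M : Matrix (Fin n → Bool) (Fin n → Bool) ℂ) (f g : Fin n → Bool) (hfg : f ≠ g) :
    ∫ U, Ffun M f g U ∂μ = 0 := by
  obtain ⟨i0, hi0⟩ := Function.ne_iff.1 hfg
  set d : (Fin n → Bool) → ℂ := fun h => if h i0 = true then (-1 : ℂ) else 1 with hdd
  have hd : ∀ x, d x * star (d x) = 1 := by
    intro x; by_cases h : x i0 = true <;> simp [hdd, h]
  have h := conj_invariance μ hleft M (diagEl d hd) f g
  rw [cm_diagEl, diag_collapse] at h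
  have hneg : d f * star (d g) = -1 := by
    rcases Bool.eq_false_or_eq_true (f i0) with h1 | h1 <;>
      rcases Bool.eq_false_or_eq_true (g i0) with h2 | h2 <;>
      simp [hdd, h1, h2] at hi0 ⊢
  have h2 : ∫ U, Ffun M f g U ∂μ = -∫ U, Ffun M f g U ∂μ := by
    calc ∫ U, Ffun M f g U ∂μ = d f * (∫ U, Ffun M f g U ∂μ) * star (d g) := h
      _ = (d f * star (d g)) * ∫ U, Ffun M f g U ∂μ := by ring
      _ = -∫ U, Ffun M f g U ∂μ := by rw [hneg]; ring
  linear_combination h2 / 2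

/-- the permutation matrix of a Hamming-weight-preserving permutation of basis states. -/
noncomputable def permMat (e : Equiv.Perm (Fin n → Bool)) :
    Matrix (Fin n → Bool) (Fin n → Bool) ℂ :=
  Matrix.of fun a b => if e a = b then 1 else 0

lemma permMat_mem_unitary (e : Equiv.Perm (Fin n → Bool)) :
    permMat e ∈ Matrix.unitaryGroup (Fin n → Bool) ℂ := by
  rw [Matrix.mem_unitaryGroup_iff]
  ext a b
  rw [Matrix.mul_apply, Matrix.one_apply]
  simp only [permMat, Matrix.star_apply, Matrix.of_apply, apply_ite (star : ℂ → ℂ),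
    star_one, star_zero, ite_mul, mul_ite, one_mul, mul_one, zero_mul, mul_zero]
  rw [Finset.sum_ite_eq (Finset.univ) (e b) (fun c => if e a = c then (1:ℂ) else 0)]
  simp [e.injective.eq_iff, eq_comm]

lemma permMat_comm_Qn (e : Equiv.Perm (Fin n → Bool)) (he : ∀ x, wt (e x) = wt x) :
    permMat e * Qn n = Qn n * permMat e := by
  ext a b
  rw [Qn, Matrix.mul_diagonal, Matrix.diagonal_mul]
  simp only [permMat, Matrix.of_apply]
  by_cases h : e a = b
  · simp [h, ← he a]
  · simp [h]

noncomputable def permEl (e : Equiv.Perm (Fin n → Bool)) (he : ∀ x, wt (e x) = wt x) :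
    u1SymmetricGroup n :=
  ⟨⟨permMat e, permMat_mem_unitary e⟩, permMat_comm_Qn e he⟩

lemma perm_collapse (e : Equiv.Perm (Fin n → Bool))
    (I : (Fin n → Bool) → (Fin n → Bool) → ℂ) (f g : Fin n → Bool) :
    ∑ b, ∑ a, permMat e f a * I a b * star (permMat e g b) = I (e f) (e g) := by
  simp [permMat, apply_ite (star : ℂ → ℂ), ite_mul, mul_ite,
    Finset.sum_ite_eq, Finset.sum_ite_eq']

lemma perm_invariance (μ : Measure (u1SymmetricGroup n)) [IsProbabilityMeasure μ]
    (hleft : ∀ g : u1SymmetricGroup n, μ.map (fun x => g * x) = μ)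
    (M : Matrix (Fin n → Bool) (Fin n → Bool) ℂ) (e : Equiv.Perm (Fin n → Bool))
    (he : ∀ x, wt (e x) = wt x) (f g : Fin n → Bool) :
    ∫ U, Ffun M f g U ∂μ = ∫ U, Ffun M (e f) (e g) U ∂μ := by
  have h := conj_invariance μ hleft M (permEl e he) f g
  have hcm : cm (permEl e he) = permMat e := rfl
  rw [hcm, perm_collapse] at h
  exact h

lemma wt_le (f : Fin n → Bool) : wt f ≤ n := by
  calc wt f ≤ (Finset.univ : Finset (Fin n)).card := Finset.card_filter_le _ _
    _ = n := by simp

lemma wt_swap (f g : Fin n → Bool) (hfg : wt f = wt g) (x : Fin n → Bool) :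
    wt (Equiv.swap f g x) = wt x := by
  rcases eq_or_ne x f with h | h
  · subst h; rw [Equiv.swap_apply_left, ← hfg]
  · rcases eq_or_ne x g with h2 | h2
    · subst h2; rw [Equiv.swap_apply_right, hfg]
    · rw [Equiv.swap_apply_of_ne_of_ne h h2]

lemma card_wt (w : ℕ) :
    (Finset.univ.filter (fun f : Fin n → Bool => wt f = w)).card = n.choose w := by
  have h : (Finset.univ.filter (fun f : Fin n → Bool => wt f = w)).card
      = (Finset.powersetCard w (Finset.univ : Finset (Fin n))).card := by
    apply Finset.card_bij (fun f _ => Finset.univ.filter (fun i => f i = true))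
    · intro f hf
      rw [Finset.mem_powersetCard]
      refine ⟨Finset.filter_subset _ _, ?_⟩
      rw [Finset.mem_filter] at hf
      exact hf.2
    · intro f hf g hg hfg
      funext i
      have h1 : (f i = true) ↔ (g i = true) := by
        constructor <;> intro h'
        · have : i ∈ Finset.univ.filter (fun j => g j = true) := by
            rw [← hfg, Finset.mem_filter]; exact ⟨Finset.mem_univ i, h'⟩
          exact (Finset.mem_filter.1 this).2
        · have : i ∈ Finset.univ.filter (fun j => f j = true) := by
            rw [hfg, Finset.mem_filter]; exact ⟨Finset.mem_univ i, h'⟩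
          exact (Finset.mem_filter.1 this).2
      cases hfi : f i <;> cases hgi : g i <;> simp_all
    · intro s hs
      rw [Finset.mem_powersetCard] at hs
      refine ⟨fun i => decide (i ∈ s), ?_, ?_⟩
      · rw [Finset.mem_filter]
        refine ⟨Finset.mem_univ _, ?_⟩
        rw [wt, ← hs.2]
        congr 1
        ext i
        simp
      · ext i
        simp
  rw [h, Finset.card_powersetCard]
  simp

lemma support_zero (μ : Measure (u1SymmetricGroup n)) [IsProbabilityMeasure μ]
    {w w' : ℕ} (u v : (Fin n → Bool) → ℂ)
    (hu : ∀ f, wt f ≠ w → u f = 0) (hv : ∀ f, wt f ≠ w' → v f = 0)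
    (M : Matrix (Fin n → Bool) (Fin n → Bool) ℂ)
    (hM : ∀ f g, M f g = u f * star (v g))
    (a b : Fin n → Bool) (h : wt a ≠ w ∨ wt b ≠ w') :
    ∫ U, Ffun M a b U ∂μ = 0 := by
  have hzero : ∀ U, Ffun M a b U = 0 := by
    intro U
    rw [Ffun, conj_apply]
    refine Finset.sum_eq_zero fun c _ => Finset.sum_eq_zero fun x _ => ?_
    rcases h with h | h
    · by_cases hx : wt x = w
      · rw [cm_entry_zero U (by rw [hx]; exact h), zero_mul, zero_mul]
      · rw [hM, hu x hx, zero_mul, mul_zero, zero_mul]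
    · by_cases hc : wt c = w'
      · rw [cm_entry_zero U (show wt b ≠ wt c by rw [hc]; exact h), star_zero, mul_zero]
      · rw [hM, hv c hc, star_zero, mul_zero, mul_zero, zero_mul]
  calc ∫ U, Ffun M a b U ∂μ = ∫ _U, (0 : ℂ) ∂μ := by
        exact integral_congr_ae (Filter.Eventually.of_forall hzero)
    _ = 0 := integral_zero _ _

lemma trace_sum (μ : Measure (u1SymmetricGroup n)) [IsProbabilityMeasure μ]
    (u v : (Fin n → Bool) → ℂ)
    (M : Matrix (Fin n → Bool) (Fin n → Bool) ℂ)
    (hM : ∀ f g, M f g = u f * star (v g)) :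
    ∑ f : Fin n → Bool, ∫ U, Ffun M f f U ∂μ = ∑ f : Fin n → Bool, star (v f) * u f := by
  rw [← integral_finset_sum _ (fun f _ => integrable_Ffun μ M f f)]
  have hpt : ∀ U : u1SymmetricGroup n,
      (∑ f : Fin n → Bool, Ffun M f f U) = ∑ f : Fin n → Bool, star (v f) * u f := by
    intro U
    have h1 : (∑ f : Fin n → Bool, Ffun M f f U) = (cm U * M * (cm U)ᴴ).trace := by
      rw [Matrix.trace]; rfl
    rw [h1, Matrix.trace_mul_cycle, cm_star_mul, one_mul, Matrix.trace]
    refine Finset.sum_congr rfl fun f _ => ?_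
    show M f f = _
    rw [hM]; ring
  calc (∫ U, ∑ f : Fin n → Bool, Ffun M f f U ∂μ)
      = ∫ _U, ∑ f : Fin n → Bool, star (v f) * u f ∂μ :=
        integral_congr_ae (Filter.Eventually.of_forall hpt)
    _ = ∑ f : Fin n → Bool, star (v f) * u f := by
        rw [integral_const]; simp

end Helpers

/-- **Average conjugated outer product over Hamming-weight-preserving unitaries**
(Eq. (eq:avg-rhoxx)): for a bi-invariant probability measure on the group of charge-conserving
unitaries, the twirl of an outer product `|u⟩⟨v|` of states of definite Hamming weights `w`, `w'`
vanishes if `w ≠ w'` and equals `(⟨v|u⟩ / C(n,w))` times the weight-`w` projector if `w = w'`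
(entrywise Bochner integrals). -/
theorem avg_outer_product_u1 (n w w' : ℕ)
    (μ : Measure (u1SymmetricGroup n)) [IsProbabilityMeasure μ]
    (hleft : ∀ g : u1SymmetricGroup n, μ.map (fun x => g * x) = μ)
    (hright : ∀ g : u1SymmetricGroup n, μ.map (fun x => x * g) = μ)
    (u v : (Fin n → Bool) → ℂ)
    (hu : ∀ f, wt f ≠ w → u f = 0) (hv : ∀ f, wt f ≠ w' → v f = 0)
    (M : Matrix (Fin n → Bool) (Fin n → Bool) ℂ)
    (hM : ∀ f g, M f g = u f * star (v g))
    (f g : Fin n → Bool) :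
    ∫ U : u1SymmetricGroup n,
        (((U : Matrix.unitaryGroup (Fin n → Bool) ℂ) : Matrix (Fin n → Bool) (Fin n → Bool) ℂ) *
          M * ((U : Matrix.unitaryGroup (Fin n → Bool) ℂ) :
            Matrix (Fin n → Bool) (Fin n → Bool) ℂ)ᴴ) f g ∂μ =
      (if w = w' then
          ((∑ f' : Fin n → Bool, star (v f') * u f') / (n.choose w : ℂ)) •
            Matrix.diagonal (fun f' : Fin n → Bool => if wt f' = w then (1 : ℂ) else 0)
        else 0) f g := by
  show (∫ U, Ffun M f g U ∂μ) = _
  by_cases hw : w = w'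
  · subst hw
    rw [if_pos rfl]
    by_cases hfg : f = g
    · subst hfg
      by_cases hwf : wt f = w
      · -- main computation
        have hT := trace_sum μ u v M hM
        set T := ∑ f' : Fin n → Bool, star (v f') * u f' with hTdef
        set S := Finset.univ.filter (fun f' : Fin n → Bool => wt f' = w) with hS
        have hfilter : ∑ f' ∈ S, ∫ U, Ffun M f' f' U ∂μ
            = ∑ f' : Fin n → Bool, ∫ U, Ffun M f' f' U ∂μ := by
          refine Finset.sum_filter_of_ne fun x _ hx => ?_
          by_contra hxw
          exact hx (support_zero μ u v hu hv M hM x x (Or.inl hxw))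
        have hconst : ∀ f' ∈ S, (∫ U, Ffun M f' f' U ∂μ) = ∫ U, Ffun M f f U ∂μ := by
          intro f' hf'
          rw [hS, Finset.mem_filter] at hf'
          have he : ∀ x, wt ((Equiv.swap f f') x) = wt x :=
            wt_swap f f' (by rw [hwf, hf'.2])
          have := perm_invariance μ hleft M (Equiv.swap f f') he f f
          rw [Equiv.swap_apply_left] at this
          exact this.symm
        have hcardS : S.card = n.choose w := card_wt w
        have hsum : (S.card : ℂ) * (∫ U, Ffun M f f U ∂μ) = T := by
          rw [← hT, ← hfilter, Finset.sum_congr rfl hconst, Finset.sum_const, nsmul_eq_mul]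
        have hwle : w ≤ n := hwf ▸ wt_le f
        have hchoose : ((n.choose w : ℕ) : ℂ) ≠ 0 :=
          Nat.cast_ne_zero.2 (Nat.choose_pos hwle).ne'
        rw [hcardS] at hsum
        have hgoal : (∫ U, Ffun M f f U ∂μ) = T / (n.choose w : ℂ) := by
          rw [← hsum, mul_comm, mul_div_assoc, div_self hchoose, mul_one]
        rw [hgoal, Matrix.smul_apply, Matrix.diagonal_apply_eq, hwf, if_pos rfl,
          smul_eq_mul, mul_one]
      · rw [support_zero μ u v hu hv M hM f f (Or.inl hwf), Matrix.smul_apply,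
          Matrix.diagonal_apply_eq, if_neg hwf, smul_eq_mul, mul_zero]
    · rw [signEntryZero μ hleft M f g hfg, Matrix.smul_apply, Matrix.diagonal_apply_ne _ hfg,
        smul_eq_mul, mul_zero]
  · rw [if_neg hw, Matrix.zero_apply]
    by_cases hfg : f = g
    · subst hfg
      by_cases hwf : wt f = w
      · exact support_zero μ u v hu hv M hM f f (Or.inr (hwf ▸ hw))
      · exact support_zero μ u v hu hv M hM f f (Or.inl hwf)
    · exact signEntryZero μ hleft M f g hfg
end

section
/- SDP decomposition bounds for the conditional min-entropy (Lemma B.1, 'lem:sum'): let P₁, P₂, Q be nonempty finite types and m ≥ 1. For each i : Fin m let Π i : Matrix P₁ P₁ ℂ be a nonzero orthogonal projection ((Π i)ᴴ = Π i, (Π i) * (Π i) = Π i, Π i ≠ 0) with (Π i) * (Π j) = 0 whenever i ≠ j, and let ρ i : Matrix (P₂ × Q) (P₂ × Q) ℂ be positive semidefinite. Define ρtot : Matrix ((P₁ × P₂) × Q) ((P₁ × P₂) × Q) ℂ by ρtot (((p₁,p₂),q), ((p₁',p₂'),q')) = ∑ i, (Π i) p₁ p₁' * (ρ i) ((p₂,q))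 ((p₂',q')). Then (1/m) * ∑ i, sdp(ρ i) ≤ sdp(ρtot) ≤ ∑ i, sdp(ρ i), where sdp(ρ i) is taken with conditioning system Q and ambient system P₂, and sdp(ρtot) with conditioning system Q and ambient system P₁ × P₂. -/
open Matrix Kronecker
open scoped ComplexOrder

/-- The value of the semidefinite program whose negative base-2 logarithm is the conditional
quantum min-entropy `H_min(P|Q)_τ`: the infimum of `Tr σ` over positive semidefinite `σ` on `Q`
with `1_P ⊗ σ ≥ τ`. -/
noncomputable def sdp {P Q : Type*} [Fintype P] [Fintype Q] [DecidableEq P] [DecidableEq Q]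
    (τ : Matrix (P × Q) (P × Q) ℂ) : ℝ :=
  sInf { x : ℝ | ∃ σ : Matrix Q Q ℂ, σ.PosSemidef ∧
    ((1 : Matrix P P ℂ) ⊗ₖ σ - τ).PosSemidef ∧ x = σ.trace.re }

namespace SdpAux

lemma conjTranspose_kron {l m p q : Type*} (A : Matrix l m ℂ) (B : Matrix p q ℂ) :
    (A ⊗ₖ B)ᴴ = Aᴴ ⊗ₖ Bᴴ := by
  ext ⟨i, j⟩ ⟨k, l⟩
  simp [conjTranspose_apply, kroneckerMap_apply, star_mul']

lemma kron_posSemidef {m p : Type*} [Fintype m] [Fintype p] {A : Matrix m m ℂ}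
    {B : Matrix p p ℂ} (hA : A.PosSemidef) (hB : B.PosSemidef) : (A ⊗ₖ B).PosSemidef := by
  exact hA.kronecker hB

lemma proj_psd {n : Type*} [Fintype n] {A : Matrix n n ℂ} (hH : Aᴴ = A) (hI : A * A = A) :
    A.PosSemidef := by
  have : A = Aᴴ * A := by rw [hH, hI]
  rw [this]; exact posSemidef_conjTranspose_mul_self _

lemma quad_conj {n : Type*} [Fintype n] {M : Matrix n n ℂ} (hM : Mᴴ = M) (x : n → ℂ) :
    star (star x ⬝ᵥ M *ᵥ x) = star x ⬝ᵥ M *ᵥ x := by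
  conv_lhs => rw [star_dotProduct, star_star, star_mulVec, hM, ← dotProduct_mulVec]

lemma psd_of {n : Type*} [Fintype n] {M : Matrix n n ℂ} (hM : Mᴴ = M)
    (h : ∀ x : n → ℂ, 0 ≤ (star x ⬝ᵥ M *ᵥ x).re) : M.PosSemidef := by
  refine Matrix.PosSemidef.of_dotProduct_mulVec_nonneg hM fun x => ?_
  rw [Complex.nonneg_iff]
  refine ⟨h x, ?_⟩
  have := quad_conj hM x
  have h2 := congrArg Complex.im this
  simp only [Complex.star_def, Complex.conj_im] at h2
  linarith

lemma trace_re_nonneg {n : Type*} [Fintype n] [DecidableEq n] {M : Matrix n n ℂ}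
    (hM : M.PosSemidef) : 0 ≤ M.trace.re := by
  have : M.trace = ∑ i, M i i := rfl
  rw [this, Complex.re_sum]
  refine Finset.sum_nonneg fun i _ => ?_
  have h := hM.dotProduct_mulVec_nonneg (Pi.single i 1)
  rw [Complex.nonneg_iff] at h
  have : star (Pi.single i 1 : n → ℂ) ⬝ᵥ M *ᵥ Pi.single i 1 = M i i := by
    simp [dotProduct, mulVec, Pi.single_apply]
  rw [this] at h
  exact h.1

end SdpAux

namespace SdpAux2
open SdpAux

lemma abs_mul_abs_le_sum {n : Type*} [Fintype n] (x : n → ℂ) (a b : n) :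
    ‖x a‖ * ‖x b‖ ≤ ∑ c, ‖x c‖ ^ 2 := by
  have ha : ‖x a‖ ^ 2 ≤ ∑ c, ‖x c‖ ^ 2 :=
    Finset.single_le_sum (f := fun c => ‖x c‖ ^ 2) (fun c _ => sq_nonneg _)
      (Finset.mem_univ a)
  have hb : ‖x b‖ ^ 2 ≤ ∑ c, ‖x c‖ ^ 2 :=
    Finset.single_le_sum (f := fun c => ‖x c‖ ^ 2) (fun c _ => sq_nonneg _)
      (Finset.mem_univ b)
  nlinarith [norm_nonneg (x a), norm_nonneg (x b),
    Finset.sum_nonneg (fun c (_ : c ∈ Finset.univ) => sq_nonneg (‖x c‖))]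

lemma feas_nonempty {P Q : Type*} [Fintype P] [Fintype Q] [DecidableEq P] [DecidableEq Q]
    (τ : Matrix (P × Q) (P × Q) ℂ) (hτ : τᴴ = τ) :
    ∃ σ : Matrix Q Q ℂ, σ.PosSemidef ∧ ((1 : Matrix P P ℂ) ⊗ₖ σ - τ).PosSemidef := by
  set c : ℝ := ∑ a : P × Q, ∑ b : P × Q, ‖τ a b‖ with hc
  have hc0 : 0 ≤ c := Finset.sum_nonneg fun a _ => Finset.sum_nonneg fun b _ => (norm_nonneg _)
  refine ⟨(c : ℂ) • 1, ?_, ?_⟩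
  · rw [smul_one_eq_diagonal]
    exact PosSemidef.diagonal fun i => by
      simpa using Complex.real_le_real.mpr hc0
  · have hker : (1 : Matrix P P ℂ) ⊗ₖ ((c : ℂ) • (1 : Matrix Q Q ℂ)) = (c : ℂ) • 1 := by
      rw [kronecker_smul, one_kronecker_one]
    rw [hker]
    refine psd_of ?_ ?_
    · rw [conjTranspose_sub, hτ, conjTranspose_smul, conjTranspose_one]
      simp
    · intro x
      have hquad : star x ⬝ᵥ ((c : ℂ) • (1 : Matrix (P × Q) (P × Q) ℂ) - τ) *ᵥ x
          = (c : ℂ) * (star x ⬝ᵥ x) - star x ⬝ᵥ τ *ᵥ x := by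
        rw [sub_mulVec, dotProduct_sub, smul_mulVec, one_mulVec, dotProduct_smul,
          smul_eq_mul]
      rw [hquad]
      have hxx : (star x ⬝ᵥ x) = ((∑ a, ‖x a‖ ^ 2 : ℝ) : ℂ) := by
        push_cast
        refine Finset.sum_congr rfl fun a _ => ?_
        rw [Pi.star_apply, Complex.star_def, ← Complex.normSq_eq_conj_mul_self, ← Complex.sq_norm]
        norm_cast
      set N : ℝ := ∑ a, ‖x a‖ ^ 2 with hN
      have hbound : (star x ⬝ᵥ τ *ᵥ x).re ≤ c * N := by
        have h1 : ‖star x ⬝ᵥ τ *ᵥ x‖ ≤ ∑ a, ∑ b, ‖τ a b‖ * N := by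
          calc ‖star x ⬝ᵥ τ *ᵥ x‖
              = ‖∑ a, ∑ b, star (x a) * τ a b * x b‖ := by
                congr 1
                simp [dotProduct, mulVec, Finset.mul_sum, mul_assoc]
            _ ≤ ∑ a, ∑ b, ‖star (x a) * τ a b * x b‖ := by
                refine (norm_sum_le _ _).trans ?_
                exact Finset.sum_le_sum fun a _ => norm_sum_le _ _
            _ ≤ ∑ a, ∑ b, ‖τ a b‖ * N := by
                refine Finset.sum_le_sum fun a _ => Finset.sum_le_sum fun b _ => ?_
                rw [norm_mul, norm_mul, Complex.star_def, Complex.norm_conj]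
                calc ‖x a‖ * ‖τ a b‖ * ‖x b‖
                    = ‖τ a b‖ * (‖x a‖ * ‖x b‖) := by ring
                  _ ≤ ‖τ a b‖ * N :=
                      mul_le_mul_of_nonneg_left (abs_mul_abs_le_sum x a b) (norm_nonneg _)
        have h2 : (star x ⬝ᵥ τ *ᵥ x).re ≤ ‖star x ⬝ᵥ τ *ᵥ x‖ := Complex.re_le_norm _
        calc (star x ⬝ᵥ τ *ᵥ x).re ≤ ‖star x ⬝ᵥ τ *ᵥ x‖ := h2
          _ ≤ ∑ a, ∑ b, ‖τ a b‖ * N := h1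
          _ = c * N := by simp only [← Finset.sum_mul]; rfl
      rw [hxx]
      have : ((c : ℂ) * (N : ℂ) - star x ⬝ᵥ τ *ᵥ x).re = c * N - (star x ⬝ᵥ τ *ᵥ x).re := by
        simp [Complex.sub_re, Complex.mul_re]
      rw [this]
      linarith

end SdpAux2

namespace SdpAux3
open SdpAux SdpAux2

lemma kron_mulVec_factored {α β : Type*} [Fintype α] [Fintype β]
    (A : Matrix α α ℂ) (B : Matrix β β ℂ) (v : α → ℂ) (u : β → ℂ) :
    (A ⊗ₖ B) *ᵥ (fun z : α × β => v z.1 * u z.2)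
      = fun z : α × β => (A *ᵥ v) z.1 * (B *ᵥ u) z.2 := by
  funext z
  show ∑ z' : α × β, (A ⊗ₖ B) z z' * (v z'.1 * u z'.2) = _
  rw [Fintype.sum_prod_type]
  show ∑ a, ∑ b, A z.1 a * B z.2 b * (v a * u b) = (∑ a, A z.1 a * v a) * ∑ b, B z.2 b * u b
  rw [Finset.sum_mul_sum]
  exact Finset.sum_congr rfl fun a _ => Finset.sum_congr rfl fun b _ => by ring

lemma dot_factored {α β : Type*} [Fintype α] [Fintype β]
    (a c : α → ℂ) (b d : β → ℂ) :
    (fun z : α × β => a z.1 * b z.2) ⬝ᵥ (fun z : α × β => c z.1 * d z.2)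
      = (a ⬝ᵥ c) * (b ⬝ᵥ d) := by
  show ∑ z : α × β, (a z.1 * b z.2) * (c z.1 * d z.2) = (∑ x, a x * c x) * ∑ y, b y * d y
  rw [Fintype.sum_prod_type, Finset.sum_mul_sum]
  exact Finset.sum_congr rfl fun x _ => Finset.sum_congr rfl fun y _ => by ring

lemma quad_kron_factored {α β : Type*} [Fintype α] [Fintype β]
    (A : Matrix α α ℂ) (B : Matrix β β ℂ) (v : α → ℂ) (u : β → ℂ) :
    star (fun z : α × β => v z.1 * u z.2) ⬝ᵥ ((A ⊗ₖ B) *ᵥ (fun z : α × β => v z.1 * u z.2))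
      = (star v ⬝ᵥ A *ᵥ v) * (star u ⬝ᵥ B *ᵥ u) := by
  rw [kron_mulVec_factored]
  have hstar : star (fun z : α × β => v z.1 * u z.2)
      = fun z : α × β => star v z.1 * star u z.2 := by
    funext z; simp [star_mul']
  rw [hstar]
  exact dot_factored _ _ _ _

lemma quad_submatrix_equiv {α β : Type*} [Fintype α] [Fintype β] (e : α ≃ β)
    (M : Matrix β β ℂ) (x : β → ℂ) :
    star (x ∘ e) ⬝ᵥ (M.submatrix e e *ᵥ (x ∘ e)) = star x ⬝ᵥ M *ᵥ x := by
  have hmv : M.submatrix e e *ᵥ (x ∘ e) = (M *ᵥ x) ∘ e := by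
    funext a
    show ∑ a', M (e a) (e a') * x (e a') = ∑ b', M (e a) b' * x b'
    exact Fintype.sum_equiv e _ _ fun a' => rfl
  rw [hmv]
  exact Fintype.sum_equiv e _ _ fun a => rfl

end SdpAux3

namespace SdpAux4
open SdpAux SdpAux2 SdpAux3

lemma psd_sum {n ι : Type*} [Fintype n] (s : Finset ι) (f : ι → Matrix n n ℂ)
    (h : ∀ i ∈ s, (f i).PosSemidef) : (∑ i ∈ s, f i).PosSemidef :=
  Finset.sum_induction f _ (fun _ _ ha hb => ha.add hb) Matrix.PosSemidef.zero h

lemma sum_mulVec {n ι : Type*} [Fintype n] (s : Finset ι) (f : ι → Matrix n n ℂ) (x : n → ℂ) :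
    (∑ i ∈ s, f i) *ᵥ x = ∑ i ∈ s, f i *ᵥ x := by
  funext k
  show ∑ j, (∑ i ∈ s, f i) k j * x j = _
  simp only [Matrix.sum_apply, Finset.sum_mul]
  rw [Finset.sum_comm, Finset.sum_apply]
  rfl

lemma dot_sum {n ι : Type*} [Fintype n] (s : Finset ι) (v : n → ℂ) (w : ι → n → ℂ) :
    v ⬝ᵥ (∑ i ∈ s, w i) = ∑ i ∈ s, v ⬝ᵥ w i := by
  show ∑ j, v j * (∑ i ∈ s, w i) j = _
  simp only [Finset.sum_apply, Finset.mul_sum]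
  rw [Finset.sum_comm]
  rfl

lemma one_minus_proj_psd {n : Type*} [Fintype n] [DecidableEq n] {A : Matrix n n ℂ}
    (hH : Aᴴ = A) (hI : A * A = A) : (1 - A).PosSemidef := by
  refine proj_psd ?_ ?_
  · rw [conjTranspose_sub, conjTranspose_one, hH]
  · rw [sub_mul, one_mul, mul_sub, mul_one, hI, sub_self, sub_zero]

end SdpAux4

open SdpAux SdpAux2 SdpAux3 SdpAux4

/-- **SDP decomposition bounds for the conditional min-entropy** (Lemma B.1): if
`ρtot = ∑ i, Π i ⊗ ρ i` with pairwise-orthogonal nonzero projectors `Π i` on `P₁` and positive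
semidefinite `ρ i` on `P₂ × Q`, then the SDP value of `ρtot` (with conditioning system `Q`) is
between `(1/m) ∑ i sdp(ρ i)` and `∑ i sdp(ρ i)`. -/
theorem sdp_sum_bounds (P₁ P₂ Q : Type*)
    [Fintype P₁] [Fintype P₂] [Fintype Q]
    [DecidableEq P₁] [DecidableEq P₂] [DecidableEq Q]
    [Nonempty P₁] [Nonempty P₂] [Nonempty Q]
    (m : ℕ) (hm : 1 ≤ m)
    (Pr : Fin m → Matrix P₁ P₁ ℂ)
    (hPrHerm : ∀ i, (Pr i)ᴴ = Pr i)
    (hPrIdem : ∀ i, Pr i * Pr i = Pr i)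
    (hPrNe : ∀ i, Pr i ≠ 0)
    (hPrOrth : ∀ i j, i ≠ j → Pr i * Pr j = 0)
    (ρ : Fin m → Matrix (P₂ × Q) (P₂ × Q) ℂ)
    (hρ : ∀ i, (ρ i).PosSemidef)
    (ρtot : Matrix ((P₁ × P₂) × Q) ((P₁ × P₂) × Q) ℂ)
    (hρtot : ∀ x y : (P₁ × P₂) × Q,
      ρtot x y = ∑ i, (Pr i) x.1.1 y.1.1 * (ρ i) (x.1.2, x.2) (y.1.2, y.2)) :
    (1 / m : ℝ) * ∑ i, sdp (ρ i) ≤ sdp ρtot ∧ sdp ρtot ≤ ∑ i, sdp (ρ i) := by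
  classical
  have hm0 : (0 : ℝ) < m := by exact_mod_cast Nat.lt_of_lt_of_le Nat.zero_lt_one hm
  set e : (P₁ × P₂) × Q ≃ P₁ × (P₂ × Q) := Equiv.prodAssoc P₁ P₂ Q with he
  have kro_psd : ∀ (A : Matrix P₁ P₁ ℂ) (B : Matrix (P₂ × Q) (P₂ × Q) ℂ),
      A.PosSemidef → B.PosSemidef → ((A ⊗ₖ B).submatrix e e).PosSemidef :=
    fun A B hA hB => (kron_posSemidef hA hB).submatrix e
  have one_split : ∀ (y y' : P₁ × P₂), (1 : Matrix (P₁ × P₂) (P₁ × P₂) ℂ) y y'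
      = (1 : Matrix P₁ P₁ ℂ) y.1 y'.1 * (1 : Matrix P₂ P₂ ℂ) y.2 y'.2 := by
    intro y y'
    by_cases h1 : y.1 = y'.1 <;> by_cases h2 : y.2 = y'.2 <;>
      simp [Matrix.one_apply, Prod.ext_iff, h1, h2]
  have hρtot_eq : ρtot = ∑ i, ((Pr i ⊗ₖ ρ i).submatrix e e) := by
    ext w w'
    rw [Matrix.sum_apply, hρtot]
    rfl
  have hρtot_psd : ρtot.PosSemidef := by
    rw [hρtot_eq]
    exact psd_sum _ _ fun i _ => kro_psd _ _ (proj_psd (hPrHerm i) (hPrIdem i)) (hρ i)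
  set Stot := {x : ℝ | ∃ σ : Matrix Q Q ℂ, σ.PosSemidef ∧
    ((1 : Matrix (P₁ × P₂) (P₁ × P₂) ℂ) ⊗ₖ σ - ρtot).PosSemidef ∧ x = σ.trace.re} with hStot
  set Si : Fin m → Set ℝ := fun i => {x : ℝ | ∃ σ : Matrix Q Q ℂ, σ.PosSemidef ∧
    ((1 : Matrix P₂ P₂ ℂ) ⊗ₖ σ - ρ i).PosSemidef ∧ x = σ.trace.re} with hSi
  have hsdp_tot : sdp ρtot = sInf Stot := rfl
  have hsdp_i : ∀ i, sdp (ρ i) = sInf (Si i) := fun i => rfl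
  have hbdd_tot : BddBelow Stot := by
    refine ⟨0, fun x hx => ?_⟩
    obtain ⟨σ, h1, _, rfl⟩ := hx
    exact trace_re_nonneg h1
  have hbdd_i : ∀ i, BddBelow (Si i) := by
    intro i
    refine ⟨0, fun x hx => ?_⟩
    obtain ⟨σ, h1, _, rfl⟩ := hx
    exact trace_re_nonneg h1
  have hne_i : ∀ i, (Si i).Nonempty := by
    intro i
    obtain ⟨σ, h1, h2⟩ := feas_nonempty (ρ i) (hρ i).1
    exact ⟨σ.trace.re, σ, h1, h2, rfl⟩
  have hne_tot : Stot.Nonempty := by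
    obtain ⟨σ, h1, h2⟩ := feas_nonempty ρtot hρtot_psd.1
    exact ⟨σ.trace.re, σ, h1, h2, rfl⟩
  -- KEY: any feasible σ for ρtot is feasible for each ρ i
  have key : ∀ σ : Matrix Q Q ℂ, σ.PosSemidef →
      ((1 : Matrix (P₁ × P₂) (P₁ × P₂) ℂ) ⊗ₖ σ - ρtot).PosSemidef →
      ∀ i, sdp (ρ i) ≤ σ.trace.re := by
    intro σ hσ hT i
    suffices hD : ((1 : Matrix P₂ P₂ ℂ) ⊗ₖ σ - ρ i).PosSemidef by
      rw [hsdp_i]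
      exact csInf_le (hbdd_i i) ⟨σ, hσ, hD, rfl⟩
    obtain ⟨p0, p1, hp⟩ : ∃ p0 p1, Pr i p0 p1 ≠ 0 := by
      by_contra h
      push_neg at h
      exact hPrNe i (by ext a b; simpa using h a b)
    set v : P₁ → ℂ := fun p => Pr i p p1 with hv
    have hviv : Pr i *ᵥ v = v := by
      funext p
      show ∑ k, Pr i p k * Pr i k p1 = Pr i p p1
      rw [← Matrix.mul_apply, hPrIdem i]
    have hvjv : ∀ j, j ≠ i → Pr j *ᵥ v = 0 := by
      intro j hj
      funext p
      show ∑ k, Pr j p k * Pr i k p1 = 0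
      rw [← Matrix.mul_apply, hPrOrth j i hj]
      simp
    set c : ℝ := ∑ p, Complex.normSq (v p) with hcdef
    have hvc : star v ⬝ᵥ v = (c : ℂ) := by
      rw [hcdef]
      push_cast
      refine Finset.sum_congr rfl fun p _ => ?_
      rw [Pi.star_apply, Complex.star_def, ← Complex.normSq_eq_conj_mul_self]
    have hc_pos : 0 < c :=
      Finset.sum_pos' (fun p _ => Complex.normSq_nonneg _)
        ⟨p0, Finset.mem_univ p0, Complex.normSq_pos.mpr hp⟩
    have hDh : ((1 : Matrix P₂ P₂ ℂ) ⊗ₖ σ - ρ i)ᴴ = (1 : Matrix P₂ P₂ ℂ) ⊗ₖ σ - ρ i := by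
      rw [conjTranspose_sub, conjTranspose_kron, conjTranspose_one, hσ.1, (hρ i).1]
    refine psd_of hDh ?_
    intro u
    have hTeq2 : (1 : Matrix (P₁ × P₂) (P₁ × P₂) ℂ) ⊗ₖ σ - ρtot
        = (((1 : Matrix P₁ P₁ ℂ) ⊗ₖ ((1 : Matrix P₂ P₂ ℂ) ⊗ₖ σ))
            - ∑ j, (Pr j) ⊗ₖ (ρ j)).submatrix e e := by
      ext ⟨⟨p₁, p₂⟩, q⟩ ⟨⟨p₁', p₂'⟩, q'⟩
      simp only [Matrix.sub_apply, Matrix.submatrix_apply, Matrix.kroneckerMap_apply,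
        Matrix.sum_apply, hρtot, one_split, he, Equiv.prodAssoc_apply]
      ring
    have hquad : star ((fun w : P₁ × (P₂ × Q) => v w.1 * u w.2) ∘ e)
          ⬝ᵥ (((1 : Matrix (P₁ × P₂) (P₁ × P₂) ℂ) ⊗ₖ σ - ρtot)
            *ᵥ ((fun w : P₁ × (P₂ × Q) => v w.1 * u w.2) ∘ e))
        = (c : ℂ) * (star u ⬝ᵥ (((1 : Matrix P₂ P₂ ℂ) ⊗ₖ σ - ρ i) *ᵥ u)) := by
      rw [hTeq2, quad_submatrix_equiv e _ (fun w : P₁ × (P₂ × Q) => v w.1 * u w.2)]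
      rw [sub_mulVec, dotProduct_sub, SdpAux4.sum_mulVec, dot_sum]
      rw [quad_kron_factored]
      have hsum : ∀ j ∈ Finset.univ, j ≠ i →
          star (fun z : P₁ × (P₂ × Q) => v z.1 * u z.2)
            ⬝ᵥ ((Pr j ⊗ₖ ρ j) *ᵥ fun z : P₁ × (P₂ × Q) => v z.1 * u z.2) = 0 := by
        intro j _ hj
        rw [quad_kron_factored, hvjv j hj]
        simp
      rw [Finset.sum_eq_single i hsum (fun h => absurd (Finset.mem_univ i) h)]
      rw [quad_kron_factored, hviv, hvc, one_mulVec, hvc]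
      rw [sub_mulVec, dotProduct_sub]
      ring
    have h0 := hT.dotProduct_mulVec_nonneg ((fun w : P₁ × (P₂ × Q) => v w.1 * u w.2) ∘ e)
    rw [hquad, Complex.nonneg_iff] at h0
    have hre : ((c : ℂ) * (star u ⬝ᵥ (((1 : Matrix P₂ P₂ ℂ) ⊗ₖ σ - ρ i) *ᵥ u))).re
        = c * (star u ⬝ᵥ (((1 : Matrix P₂ P₂ ℂ) ⊗ₖ σ - ρ i) *ᵥ u)).re := by
      simp [Complex.mul_re]
    rw [hre] at h0
    nlinarith [h0.1, hc_pos]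
  constructor
  · -- lower bound
    rw [hsdp_tot]
    refine le_csInf hne_tot ?_
    rintro y ⟨σ, hσ, hT, rfl⟩
    have h2 : ∑ i, sdp (ρ i) ≤ m * σ.trace.re := by
      calc ∑ i, sdp (ρ i) ≤ ∑ _i : Fin m, σ.trace.re :=
            Finset.sum_le_sum fun i _ => key σ hσ hT i
        _ = m * σ.trace.re := by
            rw [Finset.sum_const, Finset.card_univ, Fintype.card_fin, nsmul_eq_mul]
    rw [one_div, inv_mul_le_iff₀ hm0]
    exact h2
  · -- upper bound
    have hub : ∀ δ : ℝ, 0 < δ → sdp ρtot ≤ (∑ i, sdp (ρ i)) + δ := by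
      intro δ hδ
      have hδm : 0 < δ / m := by positivity
      have hchoice : ∀ i : Fin m, ∃ t ∈ Si i, t < sInf (Si i) + δ / m := fun i =>
        Real.lt_sInf_add_pos (hne_i i) hδm
      choose t ht htlt using hchoice
      have hunpack : ∀ i, ∃ σ : Matrix Q Q ℂ, σ.PosSemidef ∧
          ((1 : Matrix P₂ P₂ ℂ) ⊗ₖ σ - ρ i).PosSemidef ∧ t i = σ.trace.re := fun i => ht i
      choose σs hσ1 hσ2 hσ3 using hunpack
      have hσpsd : (∑ i, σs i).PosSemidef := psd_sum _ _ fun i _ => hσ1 i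
      have hTeq : (1 : Matrix (P₁ × P₂) (P₁ × P₂) ℂ) ⊗ₖ (∑ i, σs i) - ρtot
          = ∑ i, (((Pr i) ⊗ₖ ((1 : Matrix P₂ P₂ ℂ) ⊗ₖ σs i - ρ i)).submatrix e e
              + (((1 - Pr i) ⊗ₖ ((1 : Matrix P₂ P₂ ℂ) ⊗ₖ σs i)).submatrix e e)) := by
        ext ⟨⟨p₁, p₂⟩, q⟩ ⟨⟨p₁', p₂'⟩, q'⟩
        simp only [Matrix.sub_apply, Matrix.sum_apply, Matrix.add_apply,
          Matrix.submatrix_apply, Matrix.kroneckerMap_apply, hρtot, one_split, he,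
          Equiv.prodAssoc_apply]
        rw [Finset.mul_sum, ← Finset.sum_sub_distrib]
        refine Finset.sum_congr rfl fun j _ => by ring
      have hTpsd : ((1 : Matrix (P₁ × P₂) (P₁ × P₂) ℂ) ⊗ₖ (∑ i, σs i) - ρtot).PosSemidef := by
        rw [hTeq]
        refine psd_sum _ _ fun i _ => Matrix.PosSemidef.add ?_ ?_
        · exact kro_psd _ _ (proj_psd (hPrHerm i) (hPrIdem i)) (hσ2 i)
        · exact kro_psd _ _ (one_minus_proj_psd (hPrHerm i) (hPrIdem i))
            (kron_posSemidef Matrix.PosSemidef.one (hσ1 i))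
      have hmemb : (∑ i, σs i).trace.re ∈ Stot := ⟨∑ i, σs i, hσpsd, hTpsd, rfl⟩
      have hle : sdp ρtot ≤ (∑ i, σs i).trace.re := by
        rw [hsdp_tot]
        exact csInf_le hbdd_tot hmemb
      have htr : (∑ i, σs i).trace.re = ∑ i, t i := by
        rw [Matrix.trace_sum, Complex.re_sum]
        exact Finset.sum_congr rfl fun i _ => (hσ3 i).symm
      calc sdp ρtot ≤ (∑ i, σs i).trace.re := hle
        _ = ∑ i, t i := htr
        _ ≤ ∑ i, (sdp (ρ i) + δ / m) :=
            Finset.sum_le_sum fun i _ => le_of_lt (by rw [hsdp_i]; exact htlt i)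
        _ = (∑ i, sdp (ρ i)) + δ := by
            rw [Finset.sum_add_distrib, Finset.sum_const, Finset.card_univ, Fintype.card_fin,
              nsmul_eq_mul, mul_div_cancel₀ _ (ne_of_gt hm0)]
    by_contra hcon
    push_neg at hcon
    have := hub ((sdp ρtot - ∑ i, sdp (ρ i)) / 2) (by linarith)
    linarith
end

section
/- Min-entropy–operator-norm sandwich (Lemma A.1, 'lem:entropy'): let P, Q be nonempty finite types and let ρ : Matrix (P × Q) (P × Q) ℂ be positive semidefinite. Then ‖ρ‖ ≤ sdp(ρ) ≤ (Fintype.card Q) * ‖ρ‖, where ‖·‖ denotes the ℓ²-operator norm (largest singular value) of a matrix. Equivalently, −log₂ ‖ρ‖ − log₂ (Fintype.card Q) ≤ H_min(P|Q)_ρ ≤ −log₂ ‖ρ‖. -/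
set_option maxHeartbeats 1000000
set_option synthInstance.maxHeartbeats 1000000

open Matrix Kronecker ComplexConjugate
open scoped ComplexOrder Matrix.Norms.L2Operator InnerProductSpace

namespace SdpSandwichAux

lemma psd_iff_clm {n : Type*} [Fintype n] [DecidableEq n] (M : Matrix n n ℂ) :
    M.PosSemidef ↔ 0 ≤ toEuclideanCLM (𝕜 := ℂ) M := by
  rw [ContinuousLinearMap.nonneg_iff_isPositive, ← Matrix.isPositive_toEuclideanLin_iff,
    ← coe_toEuclideanCLM_eq_toEuclideanLin]
  exact Iff.rfl

lemma algebraMap_real_clm {n : Type*} [Fintype n] [DecidableEq n] (t : ℝ) :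
    algebraMap ℝ (EuclideanSpace ℂ n →L[ℂ] EuclideanSpace ℂ n) t
      = toEuclideanCLM (𝕜 := ℂ) ((t : ℂ) • (1 : Matrix n n ℂ)) := by
  rw [_root_.map_smul, _root_.map_one, IsScalarTower.algebraMap_apply ℝ ℂ
    (EuclideanSpace ℂ n →L[ℂ] EuclideanSpace ℂ n), Algebra.algebraMap_eq_smul_one,
    Complex.coe_algebraMap]

/-- For a PSD matrix `A`, `‖A‖ ≤ t` iff `t • 1 - A` is PSD. -/
lemma psd_norm_le_iff {n : Type*} [Fintype n] [DecidableEq n] {A : Matrix n n ℂ}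
    (hA : A.PosSemidef) {t : ℝ} (ht : 0 ≤ t) :
    ‖A‖ ≤ t ↔ ((t : ℂ) • (1 : Matrix n n ℂ) - A).PosSemidef := by
  have h0 : 0 ≤ toEuclideanCLM (𝕜 := ℂ) A := (psd_iff_clm A).mp hA
  have hnorm : ‖A‖ = ‖toEuclideanCLM (𝕜 := ℂ) A‖ := rfl
  rw [hnorm, CStarAlgebra.norm_le_iff_le_algebraMap _ ht h0, psd_iff_clm, map_sub,
    ← algebraMap_real_clm, ← sub_nonneg]

lemma one_kronecker_posSemidef {P Q : Type*} [Fintype P] [Fintype Q] [DecidableEq P]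
    [DecidableEq Q] {M : Matrix Q Q ℂ} (hM : M.PosSemidef) :
    ((1 : Matrix P P ℂ) ⊗ₖ M).PosSemidef := by
  constructor
  · ext ⟨p, q⟩ ⟨p', q'⟩
    simp only [conjTranspose_apply, kroneckerMap_apply, Matrix.one_apply, eq_comm,
      star_zero, star_one, mul_ite, ite_mul, one_mul, zero_mul, mul_zero, star_mul']
    split_ifs with h
    · exact (congrFun (congrFun hM.1 q) q').symm
    · simp
  · exact ((PosSemidef.one (n := P) (R := ℂ)).kronecker hM).2

lemma kron_smul_one_sub {P Q : Type*} [DecidableEq P] [DecidableEq Q]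
    (c : ℂ) (σ : Matrix Q Q ℂ) :
    (1 : Matrix P P ℂ) ⊗ₖ ((c • (1 : Matrix Q Q ℂ)) - σ)
      = c • (1 : Matrix (P × Q) (P × Q) ℂ) - (1 : Matrix P P ℂ) ⊗ₖ σ := by
  ext ⟨p, q⟩ ⟨p', q'⟩
  simp only [kroneckerMap_apply, Matrix.one_apply, Matrix.sub_apply, Matrix.smul_apply,
    Prod.mk.injEq, smul_eq_mul]
  by_cases h : p = p' <;> by_cases h' : q = q' <;> simp [h, h', Matrix.one_apply]

lemma one_kron_smul_one {P Q : Type*} [DecidableEq P] [DecidableEq Q] (c : ℂ) :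
    (1 : Matrix P P ℂ) ⊗ₖ (c • (1 : Matrix Q Q ℂ))
      = c • (1 : Matrix (P × Q) (P × Q) ℂ) := by
  rw [kronecker_smul, one_kronecker_one]

lemma trace_re_eq_sum_eigenvalues {n : Type*} [Fintype n] [DecidableEq n] {M : Matrix n n ℂ}
    (hM : M.IsHermitian) : M.trace.re = ∑ i, hM.eigenvalues i := by
  have : M.trace = ∑ i, (hM.eigenvalues i : ℂ) := by
    exact hM.trace_eq_sum_eigenvalues
  rw [this]
  simp

lemma norm_le_trace_re {n : Type*} [Fintype n] [DecidableEq n] [Nonempty n]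
    {M : Matrix n n ℂ} (hM : M.PosSemidef) : ‖M‖ ≤ M.trace.re := by
  have h0 : 0 ≤ toEuclideanCLM (𝕜 := ℂ) M := (psd_iff_clm M).mp hM
  have hmem : ‖toEuclideanCLM (𝕜 := ℂ) M‖ ∈ spectrum ℝ (toEuclideanCLM (𝕜 := ℂ) M) :=
    CStarAlgebra.norm_mem_spectrum_of_nonneg h0
  have hspec : spectrum ℝ (toEuclideanCLM (𝕜 := ℂ) M) = spectrum ℝ M := by
    have h1 := spectrum.preimage_algebraMap (R := ℝ) ℂ
      (a := toEuclideanCLM (𝕜 := ℂ) (n := n) M)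
    have h2 := spectrum.preimage_algebraMap (R := ℝ) ℂ (a := M)
    rw [← h1, ← h2, AlgEquiv.spectrum_eq (toEuclideanCLM (𝕜 := ℂ) (n := n)) M]
  rw [hspec, hM.1.spectrum_real_eq_range_eigenvalues] at hmem
  obtain ⟨i, hi⟩ := hmem
  have hnorm : ‖M‖ = ‖toEuclideanCLM (𝕜 := ℂ) M‖ := rfl
  rw [hnorm, ← hi, trace_re_eq_sum_eigenvalues hM.1]
  exact Finset.single_le_sum (fun j _ => hM.eigenvalues_nonneg j) (Finset.mem_univ i)

end SdpSandwichAux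

open SdpSandwichAux in
/-- **Min-entropy–operator-norm sandwich** (Lemma A.1): for a positive semidefinite bipartite
state `ρ` on `P × Q`, the SDP value defining the conditional min-entropy is sandwiched between
the ℓ²-operator norm `‖ρ‖` and `|Q| ⬝ ‖ρ‖`; equivalently
`−log₂ ‖ρ‖ − log₂ |Q| ≤ H_min(P|Q)_ρ ≤ −log₂ ‖ρ‖`. -/
theorem sdp_opNorm_sandwich (P Q : Type*)
    [Fintype P] [Fintype Q] [DecidableEq P] [DecidableEq Q] [Nonempty P] [Nonempty Q]
    (ρ : Matrix (P × Q) (P × Q) ℂ) (hρ : ρ.PosSemidef) :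
    ‖ρ‖ ≤ sdp ρ ∧ sdp ρ ≤ (Fintype.card Q : ℝ) * ‖ρ‖ := by
  set S := { x : ℝ | ∃ σ : Matrix Q Q ℂ, σ.PosSemidef ∧
    ((1 : Matrix P P ℂ) ⊗ₖ σ - ρ).PosSemidef ∧ x = σ.trace.re } with hS
  -- every feasible point is at least ‖ρ‖
  have claim : ∀ x ∈ S, ‖ρ‖ ≤ x := by
    rintro x ⟨σ, hσ, hfeas, rfl⟩
    set t := σ.trace.re with htdef
    have htσ : ‖σ‖ ≤ t := norm_le_trace_re hσ
    have ht0 : (0 : ℝ) ≤ t := le_trans (norm_nonneg σ) htσ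
    have hσ1 : ((t : ℂ) • (1 : Matrix Q Q ℂ) - σ).PosSemidef :=
      (psd_norm_le_iff hσ ht0).mp htσ
    have hks : ((t : ℂ) • (1 : Matrix (P × Q) (P × Q) ℂ)
        - (1 : Matrix P P ℂ) ⊗ₖ σ).PosSemidef := by
      rw [← kron_smul_one_sub]
      exact one_kronecker_posSemidef hσ1
    have hps : ((t : ℂ) • (1 : Matrix (P × Q) (P × Q) ℂ) - ρ).PosSemidef := by
      have := hks.add hfeas
      rwa [sub_add_sub_cancel] at this
    exact (psd_norm_le_iff hρ ht0).mpr hps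
  -- the scaled identity is feasible
  have hmem : (Fintype.card Q : ℝ) * ‖ρ‖ ∈ S := by
    refine ⟨(‖ρ‖ : ℂ) • (1 : Matrix Q Q ℂ), ?_, ?_, ?_⟩
    · have h := (psd_norm_le_iff (Matrix.PosSemidef.zero (n := Q) (R := ℂ))
        (norm_nonneg ρ)).mp (by rw [norm_zero]; exact norm_nonneg ρ)
      simpa using h
    · rw [one_kron_smul_one]
      exact (psd_norm_le_iff hρ (norm_nonneg ρ)).mp le_rfl
    · rw [trace_smul, trace_one]
      simp [mul_comm]
  constructor
  · exact le_csInf ⟨_, hmem⟩ claim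
  · exact csInf_le ⟨‖ρ‖, claim⟩ hmem
end

section
/- Conditional min-entropy of pure bipartite states (Eq. (eq:pure-min)): let P, Q be nonempty finite types and M : Matrix P Q ℂ. Let ψ : Matrix (P × Q) (P × Q) ℂ be the rank-one matrix ψ (p,q) (p',q') = M p q * star (M p' q'). Then sdp(ψ) = (((hM.sqrt).trace).re)², where hM : (Mᴴ * M).PosSemidef and hM.sqrt denotes the positive semidefinite square root of Mᴴ * M; that is, the SDP value equals the square of the sum of the singular values (Schmidt coefficients) of M, so that H_min(P|Q)_ψ = −2 log₂ (∑ of the singular values of M). -/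
open Matrix Kronecker
open scoped ComplexOrder

/-- The positive semidefinite square root of a positive semidefinite matrix (as in the older
Mathlib, where `Matrix.PosSemidef.sqrt` existed). -/
noncomputable def Matrix.PosSemidef.sqrt {n 𝕜 : Type*} [Fintype n] [DecidableEq n] [RCLike 𝕜]
    {A : Matrix n n 𝕜} (hA : A.PosSemidef) : Matrix n n 𝕜 :=
  hA.1.eigenvectorUnitary.1 * diagonal ((↑) ∘ (√·) ∘ hA.1.eigenvalues) *
  (star hA.1.eigenvectorUnitary : Matrix n n 𝕜)

lemma Matrix.PosSemidef.posSemidef_sqrt {n 𝕜 : Type*} [Fintype n] [DecidableEq n] [RCLike 𝕜]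
    {A : Matrix n n 𝕜} (hA : A.PosSemidef) : hA.sqrt.PosSemidef := by
  unfold Matrix.PosSemidef.sqrt
  have hD : (diagonal ((↑) ∘ (√·) ∘ hA.1.eigenvalues : n → 𝕜)).PosSemidef :=
    Matrix.PosSemidef.diagonal fun i => by
      simp only [Pi.zero_apply, Function.comp_apply]
      exact RCLike.ofReal_nonneg.mpr (Real.sqrt_nonneg _)
  exact hD.mul_mul_conjTranspose_same _

lemma Matrix.PosSemidef.sqrt_mul_self {n 𝕜 : Type*} [Fintype n] [DecidableEq n] [RCLike 𝕜]
    {A : Matrix n n 𝕜} (hA : A.PosSemidef) : hA.sqrt * hA.sqrt = A := by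
  unfold Matrix.PosSemidef.sqrt
  conv_rhs => rw [hA.1.spectral_theorem, Unitary.conjStarAlgAut_apply]
  have hU : (star hA.1.eigenvectorUnitary : Matrix n n 𝕜) * hA.1.eigenvectorUnitary.1 = 1 :=
    Unitary.star_mul_self_of_mem hA.1.eigenvectorUnitary.2
  calc hA.1.eigenvectorUnitary.1 * diagonal ((↑) ∘ (√·) ∘ hA.1.eigenvalues) *
        (star hA.1.eigenvectorUnitary : Matrix n n 𝕜) *
        (hA.1.eigenvectorUnitary.1 * diagonal ((↑) ∘ (√·) ∘ hA.1.eigenvalues) *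
        (star hA.1.eigenvectorUnitary : Matrix n n 𝕜))
      = hA.1.eigenvectorUnitary.1 * (diagonal ((↑) ∘ (√·) ∘ hA.1.eigenvalues) *
        ((star hA.1.eigenvectorUnitary : Matrix n n 𝕜) * hA.1.eigenvectorUnitary.1) *
        diagonal ((↑) ∘ (√·) ∘ hA.1.eigenvalues)) *
        (star hA.1.eigenvectorUnitary : Matrix n n 𝕜) := by simp only [Matrix.mul_assoc]
    _ = _ := by
      rw [hU, Matrix.mul_one, diagonal_mul_diagonal]
      congr 3
      funext i
      simp only [Function.comp_apply]
      rw [← RCLike.ofReal_mul, Real.mul_self_sqrt (hA.eigenvalues_nonneg i)]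

private lemma sum_rot3 {α β γ M : Type*} [Fintype α] [Fintype β] [Fintype γ] [AddCommMonoid M]
    (f : α → β → γ → M) :
    ∑ a, ∑ b, ∑ c, f a b c = ∑ c, ∑ a, ∑ b, f a b c := by
  calc ∑ a, ∑ b, ∑ c, f a b c = ∑ a, ∑ c, ∑ b, f a b c :=
        Finset.sum_congr rfl fun a _ => Finset.sum_comm
    _ = ∑ c, ∑ a, ∑ b, f a b c := Finset.sum_comm

private lemma sum_swap4 {α β γ δ M : Type*} [Fintype α] [Fintype β] [Fintype γ] [Fintype δ]
    [AddCommMonoid M] (f : α → β → γ → δ → M) :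
    ∑ a, ∑ b, ∑ c, ∑ e, f a b c e = ∑ c, ∑ e, ∑ a, ∑ b, f a b c e := by
  calc ∑ a, ∑ b, ∑ c, ∑ e, f a b c e = ∑ c, ∑ a, ∑ b, ∑ e, f a b c e := by
        refine (Finset.sum_congr rfl fun a _ => Finset.sum_comm (γ := _)).trans Finset.sum_comm
    _ = _ := Finset.sum_congr rfl fun c _ => sum_rot3 _

private lemma sum_rot3' {α β γ M : Type*} [Fintype α] [Fintype β] [Fintype γ] [AddCommMonoid M]
    (f : α → β → γ → M) :
    ∑ a, ∑ b, ∑ c, f a b c = ∑ b, ∑ c, ∑ a, f a b c :=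
  (sum_rot3 fun b c a => f a b c).symm

private lemma cs_complex {ι : Type*} [Fintype ι] (a b : ι → ℂ) :
    ‖∑ i, a i * b i‖ ^ 2 ≤ (∑ i, ‖a i‖ ^ 2) * ∑ i, ‖b i‖ ^ 2 := by
  have h1 : ‖∑ i, a i * b i‖ ≤ ∑ i, ‖a i‖ * ‖b i‖ :=
    (norm_sum_le _ _).trans (le_of_eq (by simp [norm_mul]))
  calc ‖∑ i, a i * b i‖ ^ 2 ≤ (∑ i, ‖a i‖ * ‖b i‖) ^ 2 :=
        pow_le_pow_left₀ (norm_nonneg _) h1 2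
    _ ≤ _ := Finset.sum_mul_sq_le_sq_mul_sq _ _ _

private lemma cs_core {ι P : Type*} [Fintype ι] [Fintype P]
    (A : ι → P → ℂ) (ξ : P → ι → ℂ) (d : ι → ℝ)
    (hd : ∀ i, 0 ≤ d i) (hA : ∀ i, ∑ p, ‖A i p‖ ^ 2 = d i ^ 2) :
    ‖∑ i, ∑ p, A i p * ξ p i‖ ^ 2 ≤ (∑ i, d i) * ∑ i, d i * ∑ p, ‖ξ p i‖ ^ 2 := by
  set r : ι → ℝ := fun i => Real.sqrt (∑ p, ‖ξ p i‖ ^ 2) with hr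
  have hr0 : ∀ i, 0 ≤ r i := fun i => Real.sqrt_nonneg _
  have hr2 : ∀ i, r i ^ 2 = ∑ p, ‖ξ p i‖ ^ 2 := fun i =>
    Real.sq_sqrt (Finset.sum_nonneg fun p _ => sq_nonneg _)
  have h1 : ∀ i, ‖∑ p, A i p * ξ p i‖ ≤ d i * r i := by
    intro i
    have h := cs_complex (A i) (fun p => ξ p i)
    rw [hA i, ← hr2 i] at h
    have h2 : ‖∑ p, A i p * ξ p i‖ ^ 2 ≤ (d i * r i) ^ 2 := by rw [mul_pow]; exact h
    exact (pow_le_pow_iff_left₀ (norm_nonneg _) (mul_nonneg (hd i) (hr0 i))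
      (by norm_num)).mp h2
  calc ‖∑ i, ∑ p, A i p * ξ p i‖ ^ 2 ≤ (∑ i, d i * r i) ^ 2 := by
        apply pow_le_pow_left₀ (norm_nonneg _)
        exact (norm_sum_le _ _).trans (Finset.sum_le_sum fun i _ => h1 i)
    _ ≤ (∑ i, Real.sqrt (d i) ^ 2) * ∑ i, (Real.sqrt (d i) * r i) ^ 2 := by
        rw [show (∑ i, d i * r i) = ∑ i, Real.sqrt (d i) * (Real.sqrt (d i) * r i) from
          Finset.sum_congr rfl fun i _ => by rw [← mul_assoc, Real.mul_self_sqrt (hd i)]]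
        exact Finset.sum_mul_sq_le_sq_mul_sq _ _ _
    _ = _ := by
        congr 1
        · exact Finset.sum_congr rfl fun i _ => Real.sq_sqrt (hd i)
        · exact Finset.sum_congr rfl fun i _ => by
            rw [mul_pow, Real.sq_sqrt (hd i), hr2 i]

private lemma qf_expand {Q I : Type*} [Fintype Q] [Fintype I] (σ : Matrix Q Q ℂ)
    (u : I → Q → ℂ) (a b : I → ℂ) :
    ∑ q, ∑ q', star (∑ i, a i * u i q) * σ q q' * (∑ i, b i * u i q')
      = ∑ i, ∑ j, (star (a i) * b j) * (∑ q, ∑ q', star (u i q) * σ q q' * u j q') := by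
  calc ∑ q, ∑ q', star (∑ i, a i * u i q) * σ q q' * (∑ i, b i * u i q')
      = ∑ q, ∑ q', ∑ i, ∑ j, (star (a i) * b j) * (star (u i q) * σ q q' * u j q') := by
        refine Finset.sum_congr rfl fun q _ => Finset.sum_congr rfl fun q' _ => ?_
        rw [star_sum, Finset.sum_mul, Finset.sum_mul]
        refine Finset.sum_congr rfl fun i _ => ?_
        rw [Finset.mul_sum]
        refine Finset.sum_congr rfl fun j _ => ?_
        rw [star_mul']
        ring
    _ = ∑ i, ∑ j, ∑ q, ∑ q', (star (a i) * b j) * (star (u i q) * σ q q' * u j q') :=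
        sum_swap4 _
    _ = _ := by
        refine Finset.sum_congr rfl fun i _ => Finset.sum_congr rfl fun j _ => ?_
        conv_rhs => rw [Finset.mul_sum]
        refine Finset.sum_congr rfl fun q _ => ?_
        rw [Finset.mul_sum]

/-- **Conditional min-entropy of pure bipartite states** (Eq. (eq:pure-min)): for the rank-one
state `ψ = |M⟩⟨M|` built from a coefficient matrix `M : Matrix P Q ℂ`, the SDP value equals the
square of the sum of the singular values (Schmidt coefficients) of `M`, i.e. the square of the
trace of the positive semidefinite square root of `Mᴴ * M`; hence
`H_min(P|Q)_ψ = −2 log₂ (∑ singular values of M)`. -/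
theorem sdp_pure_state (P Q : Type*)
    [Fintype P] [Fintype Q] [DecidableEq P] [DecidableEq Q] [Nonempty P] [Nonempty Q]
    (M : Matrix P Q ℂ)
    (ψ : Matrix (P × Q) (P × Q) ℂ)
    (hψ : ∀ p q p' q', ψ (p, q) (p', q') = M p q * star (M p' q'))
    (hM : (Mᴴ * M).PosSemidef) :
    sdp ψ = ((hM.sqrt.trace).re) ^ 2 := by
  classical
  have hS : hM.sqrt.PosSemidef := hM.posSemidef_sqrt
  have hT : (hM.sqrt)ᵀ.PosSemidef := hS.transpose
  have hTH : (hM.sqrt)ᵀ.IsHermitian := hT.1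
  set T : Matrix Q Q ℂ := (hM.sqrt)ᵀ with hTdef
  set d : Q → ℝ := hTH.eigenvalues with hddef
  set u : Q → Q → ℂ := fun i q => hTH.eigenvectorBasis i q with hudef
  have hd : ∀ i, 0 ≤ d i := hT.eigenvalues_nonneg
  set t : ℝ := ∑ i, d i with htdef
  have ht0 : 0 ≤ t := Finset.sum_nonneg fun i _ => hd i
  have F1 : ∀ i j, ∑ q, star (u i q) * u j q = if i = j then 1 else 0 := by
    intro i j
    have h : (star (hTH.eigenvectorUnitary : Matrix Q Q ℂ) *
        (hTH.eigenvectorUnitary : Matrix Q Q ℂ)) i j = (1 : Matrix Q Q ℂ) i j := by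
      rw [Unitary.star_mul_self_of_mem hTH.eigenvectorUnitary.2]
    simpa [Matrix.mul_apply, Matrix.star_apply, Matrix.one_apply, hudef] using h
  have F2 : ∀ q q', ∑ i, u i q * star (u i q') = if q = q' then 1 else 0 := by
    intro q q'
    have h : ((hTH.eigenvectorUnitary : Matrix Q Q ℂ) *
        star (hTH.eigenvectorUnitary : Matrix Q Q ℂ)) q q' = (1 : Matrix Q Q ℂ) q q' := by
      rw [Unitary.mul_star_self_of_mem hTH.eigenvectorUnitary.2]
    simpa [Matrix.mul_apply, Matrix.star_apply, Matrix.one_apply, hudef] using h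
  have hTapp : ∀ q q', T q q' = ∑ i, (d i : ℂ) * u i q * star (u i q') := by
    intro q q'
    conv_lhs => rw [hTH.spectral_theorem, Unitary.conjStarAlgAut_apply]
    rw [Matrix.mul_apply]
    refine Finset.sum_congr rfl fun i _ => ?_
    rw [Matrix.mul_diagonal, Matrix.star_apply]
    simp only [Matrix.IsHermitian.eigenvectorUnitary_apply, Function.comp_apply, hudef, hddef, RCLike.ofReal, Complex.coe_algebraMap]
    ring
  have htrT : T.trace = ((t : ℝ) : ℂ) := by
    calc T.trace = ∑ q, ∑ i, (d i : ℂ) * (u i q * star (u i q)) := by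
          rw [Matrix.trace]
          refine Finset.sum_congr rfl fun q _ => ?_
          rw [Matrix.diag_apply, hTapp q q]
          exact Finset.sum_congr rfl fun i _ => by ring
      _ = ∑ i, (d i : ℂ) * ∑ q, star (u i q) * u i q := by
          rw [Finset.sum_comm]
          refine Finset.sum_congr rfl fun i _ => ?_
          rw [Finset.mul_sum]
          exact Finset.sum_congr rfl fun q _ => by ring
      _ = ∑ i, (d i : ℂ) := by
          refine Finset.sum_congr rfl fun i _ => ?_
          rw [F1 i i, if_pos rfl, mul_one]
      _ = ((t : ℝ) : ℂ) := by rw [htdef]; push_cast; ring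
  have htr : (hM.sqrt.trace).re = t := by
    have h : T.trace = hM.sqrt.trace := by rw [hTdef, Matrix.trace_transpose]
    rw [← h, htrT, Complex.ofReal_re]
  have hTT : T * T = (Mᴴ * M)ᵀ := by
    rw [hTdef, ← Matrix.transpose_mul, hM.sqrt_mul_self]
  have hTu : ∀ i, T *ᵥ u i = ((d i : ℂ) • u i) := by
    intro i
    have h := hTH.mulVec_eigenvectorBasis i
    funext q
    have h2 := congrFun h q
    simpa [hudef, hddef, Pi.smul_apply, Complex.real_smul] using h2
  have hNapp : ∀ i q, (∑ q', ((Mᴴ * M)ᵀ) q q' * u i q') = (d i : ℂ) ^ 2 * u i q := by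
    intro i q
    have h : ((Mᴴ * M)ᵀ *ᵥ u i) q = ((d i : ℂ) • ((d i : ℂ) • u i)) q := by
      rw [← hTT, ← Matrix.mulVec_mulVec, hTu i, Matrix.mulVec_smul, hTu i]
    simpa [Matrix.mulVec, dotProduct, pow_two, mul_assoc] using h
  have hNH : (Mᴴ * M)ᵀ.IsHermitian := hM.1.transpose
  have hNent : ∀ q q', ((Mᴴ * M)ᵀ) q q' = ∑ p, M p q * star (M p q') := by
    intro q q'
    simp [Matrix.transpose_apply, Matrix.mul_apply, Matrix.conjTranspose_apply, mul_comm]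
  have K2 : ∀ i j, ∑ p, (∑ q, star (M p q) * u i q) * star (∑ q, star (M p q) * u j q)
      = if i = j then ((d i : ℂ)) ^ 2 else 0 := by
    intro i j
    calc ∑ p, (∑ q, star (M p q) * u i q) * star (∑ q, star (M p q) * u j q)
        = ∑ p, ∑ q, ∑ q', (star (M p q) * u i q) * (M p q' * star (u j q')) := by
          refine Finset.sum_congr rfl fun p _ => ?_
          rw [star_sum, Finset.sum_mul_sum]
          refine Finset.sum_congr rfl fun q _ => Finset.sum_congr rfl fun q' _ => ?_
          rw [star_mul', star_star]
      _ = ∑ q, ∑ q', ∑ p, (star (M p q) * u i q) * (M p q' * star (u j q')) := sum_rot3' _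
      _ = ∑ q, ∑ q', (u i q * star (u j q')) * ∑ p, M p q' * star (M p q) := by
          refine Finset.sum_congr rfl fun q _ => Finset.sum_congr rfl fun q' _ => ?_
          rw [Finset.mul_sum]
          exact Finset.sum_congr rfl fun p _ => by ring
      _ = ∑ q', star (u j q') * ∑ q, ((Mᴴ * M)ᵀ) q' q * u i q := by
          rw [Finset.sum_comm]
          refine Finset.sum_congr rfl fun q' _ => ?_
          rw [Finset.mul_sum]
          refine Finset.sum_congr rfl fun q _ => ?_
          rw [hNent q' q]
          ring
      _ = ∑ q', star (u j q') * ((d i : ℂ) ^ 2 * u i q') :=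
          Finset.sum_congr rfl fun q' _ => by rw [hNapp i q']
      _ = (d i : ℂ) ^ 2 * ∑ q', star (u j q') * u i q' := by
          rw [Finset.mul_sum]
          exact Finset.sum_congr rfl fun q' _ => by ring
      _ = if i = j then (d i : ℂ) ^ 2 else 0 := by
          rw [F1 j i]
          by_cases h : i = j
          · subst h; simp
          · rw [if_neg (Ne.symm h), if_neg h, mul_zero]
  have K1 : ∀ i, ∑ p, ‖∑ q, star (M p q) * u i q‖ ^ 2 = d i ^ 2 := by
    intro i
    have h := K2 i i
    rw [if_pos rfl] at h
    have h2 : ((∑ p, ‖∑ q, star (M p q) * u i q‖ ^ 2 : ℝ) : ℂ) = ((d i : ℂ)) ^ 2 := by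
      rw [← h]
      push_cast
      refine Finset.sum_congr rfl fun p _ => ?_
      rw [Complex.star_def, Complex.mul_conj]
      norm_cast
      rw [← Complex.normSq_eq_norm_sq]
    exact_mod_cast h2
  have hcompl : ∀ (y : Q → ℂ) (q : Q), y q = ∑ i, (∑ q', star (u i q') * y q') * u i q := by
    intro y q
    symm
    calc ∑ i, (∑ q', star (u i q') * y q') * u i q
        = ∑ q', (∑ i, u i q * star (u i q')) * y q' := by
          calc ∑ i, (∑ q', star (u i q') * y q') * u i q
              = ∑ i, ∑ q', (star (u i q') * y q') * u i q :=
                Finset.sum_congr rfl fun i _ => Finset.sum_mul _ _ _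
            _ = ∑ q', ∑ i, (star (u i q') * y q') * u i q := Finset.sum_comm
            _ = ∑ q', (∑ i, u i q * star (u i q')) * y q' := by
                refine Finset.sum_congr rfl fun q' _ => ?_
                rw [Finset.sum_mul]
                exact Finset.sum_congr rfl fun i _ => by ring
      _ = ∑ q', (if q = q' then 1 else 0) * y q' := by
          refine Finset.sum_congr rfl fun q' _ => by rw [F2 q q']
      _ = y q := by simp
  have hC1 : ∀ x : P × Q → ℂ, (∑ p, ∑ q, star (M p q) * x (p, q))
      = ∑ i, ∑ p, (∑ q, star (M p q) * u i q) * (∑ q, star (u i q) * x (p, q)) := by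
    intro x
    refine Eq.trans (Finset.sum_congr rfl fun p _ => ?_) Finset.sum_comm
    calc ∑ q, star (M p q) * x (p, q)
        = ∑ q, star (M p q) * ∑ i, (∑ q', star (u i q') * x (p, q')) * u i q := by
          refine Finset.sum_congr rfl fun q _ => ?_
          rw [show x (p, q) = ∑ i, (∑ q', star (u i q') * x (p, q')) * u i q from
            hcompl (fun q' => x (p, q')) q]
      _ = ∑ q, ∑ i, star (M p q) * ((∑ q', star (u i q') * x (p, q')) * u i q) :=
          Finset.sum_congr rfl fun q _ => Finset.mul_sum _ _ _
      _ = ∑ i, ∑ q, star (M p q) * ((∑ q', star (u i q') * x (p, q')) * u i q) :=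
          Finset.sum_comm
      _ = ∑ i, (∑ q, star (M p q) * u i q) * (∑ q, star (u i q) * x (p, q)) := by
          refine Finset.sum_congr rfl fun i _ => ?_
          rw [Finset.sum_mul]
          exact Finset.sum_congr rfl fun q _ => by ring
  have hQF1 : ∀ (y : Q → ℂ), (∑ q, ∑ q', star (y q) * T q q' * y q')
      = (((∑ i, d i * Complex.normSq (∑ q, star (u i q) * y q)) : ℝ) : ℂ) := by
    intro y
    have main : (∑ q, ∑ q', star (y q) * T q q' * y q')
        = ∑ i, (d i : ℂ) * (star (∑ q, star (u i q) * y q) * (∑ q, star (u i q) * y q)) := by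
      calc ∑ q, ∑ q', star (y q) * T q q' * y q'
          = ∑ q, ∑ q', ∑ i, ((d i : ℂ) * (star (y q) * u i q)) * (star (u i q') * y q') := by
            refine Finset.sum_congr rfl fun q _ => Finset.sum_congr rfl fun q' _ => ?_
            rw [hTapp q q', Finset.mul_sum, Finset.sum_mul]
            exact Finset.sum_congr rfl fun i _ => by ring
        _ = ∑ i, ∑ q, ∑ q', ((d i : ℂ) * (star (y q) * u i q)) * (star (u i q') * y q') :=
            sum_rot3 _
        _ = ∑ i, (d i : ℂ) * ((∑ q, star (y q) * u i q) * (∑ q', star (u i q') * y q')) := by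
            refine Finset.sum_congr rfl fun i _ => ?_
            rw [Finset.sum_mul_sum, Finset.mul_sum]
            refine Finset.sum_congr rfl fun q _ => ?_
            rw [Finset.mul_sum]
            exact Finset.sum_congr rfl fun q' _ => by ring
        _ = ∑ i, (d i : ℂ) * (star (∑ q, star (u i q) * y q) * (∑ q, star (u i q) * y q)) := by
            refine Finset.sum_congr rfl fun i _ => ?_
            congr 1
            rw [star_sum]
            exact congrArg₂ _ (Finset.sum_congr rfl fun q _ => by
              rw [star_mul', star_star]; ring) rfl
    rw [main]
    push_cast
    refine Finset.sum_congr rfl fun i _ => ?_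
    rw [Complex.star_def, Complex.conj_mul']
    norm_cast
    rw [← Complex.normSq_eq_norm_sq]
  have hquad : ∀ (σ : Matrix Q Q ℂ) (x : P × Q → ℂ),
      star x ⬝ᵥ ((((1 : Matrix P P ℂ) ⊗ₖ σ) - ψ) *ᵥ x)
        = (∑ p, ∑ q, ∑ q', star (x (p, q)) * σ q q' * x (p, q'))
          - star (∑ p, ∑ q, star (M p q) * x (p, q)) *
            (∑ p, ∑ q, star (M p q) * x (p, q)) := by
    intro σ x
    rw [Matrix.sub_mulVec, dotProduct_sub]
    congr 1
    · -- Kronecker part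
      have hmv : ∀ p q, ((((1 : Matrix P P ℂ) ⊗ₖ σ)) *ᵥ x) (p, q) = ∑ q', σ q q' * x (p, q') := by
        intro p q
        simp [Matrix.mulVec, dotProduct, Fintype.sum_prod_type,
          Matrix.kroneckerMap_apply, Matrix.one_apply, ite_mul, Finset.sum_ite_irrel,
          Finset.sum_ite_eq]
      calc star x ⬝ᵥ (((1 : Matrix P P ℂ) ⊗ₖ σ) *ᵥ x)
          = ∑ p, ∑ q, star (x (p, q)) * ∑ q', σ q q' * x (p, q') := by
            simp only [dotProduct, Pi.star_apply, Fintype.sum_prod_type]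
            exact Finset.sum_congr rfl fun p _ => Finset.sum_congr rfl fun q _ => by
              rw [hmv p q]
        _ = ∑ p, ∑ q, ∑ q', star (x (p, q)) * σ q q' * x (p, q') := by
            refine Finset.sum_congr rfl fun p _ => Finset.sum_congr rfl fun q _ => ?_
            rw [Finset.mul_sum]
            exact Finset.sum_congr rfl fun q' _ => by ring
    · -- rank-one part
      have inner : ∀ p q, (∑ p', ∑ q', ψ (p, q) (p', q') * x (p', q'))
          = M p q * (∑ p', ∑ q', star (M p' q') * x (p', q')) := by
        intro p q
        rw [Finset.mul_sum]
        refine Finset.sum_congr rfl fun p' _ => ?_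
        rw [Finset.mul_sum]
        refine Finset.sum_congr rfl fun q' _ => ?_
        rw [hψ]
        ring
      calc star x ⬝ᵥ (ψ *ᵥ x)
          = ∑ p, ∑ q, star (x (p, q)) *
              (M p q * (∑ p', ∑ q', star (M p' q') * x (p', q'))) := by
            simp only [dotProduct, Matrix.mulVec, Pi.star_apply, Fintype.sum_prod_type]
            exact Finset.sum_congr rfl fun p _ => Finset.sum_congr rfl fun q _ => by
              rw [inner p q]
        _ = (∑ p, ∑ q, M p q * star (x (p, q))) * (∑ p', ∑ q', star (M p' q') * x (p', q')) := by
            rw [Finset.sum_mul]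
            refine Finset.sum_congr rfl fun p _ => ?_
            rw [Finset.sum_mul]
            exact Finset.sum_congr rfl fun q _ => by ring
        _ = star (∑ p, ∑ q, star (M p q) * x (p, q)) * (∑ p, ∑ q, star (M p q) * x (p, q)) := by
            congr 1
            rw [star_sum]
            refine Finset.sum_congr rfl fun p _ => ?_
            rw [star_sum]
            exact Finset.sum_congr rfl fun q _ => by rw [star_mul', star_star]
  -- the optimal sigma
  set σ₀ : Matrix Q Q ℂ := ((t : ℝ) : ℂ) • T with hs0def
  have hσ₀H : σ₀.IsHermitian := by
    rw [Matrix.IsHermitian, hs0def, Matrix.conjTranspose_smul, hTH.eq]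
    simp [Complex.star_def, Complex.conj_ofReal]
  have hσ₀ : σ₀.PosSemidef := by
    refine Matrix.PosSemidef.of_dotProduct_mulVec_nonneg hσ₀H fun x => ?_
    rw [hs0def, Matrix.smul_mulVec, dotProduct_smul, smul_eq_mul]
    exact mul_nonneg (Complex.zero_le_real.mpr ht0) (hT.dotProduct_mulVec_nonneg x)
  have hψH : ψ.IsHermitian := by
    ext ⟨p, q⟩ ⟨p', q'⟩
    rw [Matrix.conjTranspose_apply, hψ, hψ, star_mul', star_star]
    ring
  have hKH : (((1 : Matrix P P ℂ) ⊗ₖ σ₀)).IsHermitian := by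
    ext ⟨p, q⟩ ⟨p', q'⟩
    rw [Matrix.conjTranspose_apply, Matrix.kroneckerMap_apply, Matrix.kroneckerMap_apply,
      star_mul']
    congr 1
    · simp [Matrix.one_apply, eq_comm]
    · exact congrFun (congrFun hσ₀H q) q'
  have hfeas : (((1 : Matrix P P ℂ) ⊗ₖ σ₀) - ψ).PosSemidef := by
    refine Matrix.PosSemidef.of_dotProduct_mulVec_nonneg (hKH.sub hψH) fun x => ?_
    rw [hquad σ₀ x]
    have QFeq : (∑ p, ∑ q, ∑ q', star (x (p, q)) * σ₀ q q' * x (p, q'))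
        = ((t * ∑ p, ∑ i, d i * Complex.normSq (∑ q, star (u i q) * x (p, q)) : ℝ) : ℂ) := by
      calc ∑ p, ∑ q, ∑ q', star (x (p, q)) * σ₀ q q' * x (p, q')
          = ∑ p, ((t : ℝ) : ℂ) * ∑ q, ∑ q', star (x (p, q)) * T q q' * x (p, q') := by
            refine Finset.sum_congr rfl fun p _ => ?_
            rw [Finset.mul_sum]
            refine Finset.sum_congr rfl fun q _ => ?_
            rw [Finset.mul_sum]
            refine Finset.sum_congr rfl fun q' _ => ?_
            simp only [hs0def, Matrix.smul_apply, smul_eq_mul]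
            ring
        _ = ∑ p, ((t : ℝ) : ℂ) *
              (((∑ i, d i * Complex.normSq (∑ q, star (u i q) * x (p, q))) : ℝ) : ℂ) := by
            refine Finset.sum_congr rfl fun p _ => ?_
            congr 1
            exact hQF1 (fun q => x (p, q))
        _ = _ := by
            push_cast
            rw [Finset.mul_sum]
    have hceq : star (∑ p, ∑ q, star (M p q) * x (p, q)) * (∑ p, ∑ q, star (M p q) * x (p, q))
        = ((Complex.normSq (∑ p, ∑ q, star (M p q) * x (p, q)) : ℝ) : ℂ) := by
      rw [Complex.star_def, Complex.normSq_eq_conj_mul_self]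
    rw [QFeq, hceq, ← Complex.ofReal_sub]
    rw [Complex.zero_le_real, sub_nonneg]
    -- the Cauchy-Schwarz bound
    have h1 := cs_core (fun i p => ∑ q, star (M p q) * u i q)
      (fun p i => ∑ q, star (u i q) * x (p, q)) d hd K1
    rw [← hC1 x] at h1
    have hnc : Complex.normSq (∑ p, ∑ q, star (M p q) * x (p, q))
        = ‖∑ p, ∑ q, star (M p q) * x (p, q)‖ ^ 2 := by
      rw [Complex.sq_norm]
    have hswap : (∑ i, d i * ∑ p, ‖∑ q, star (u i q) * x (p, q)‖ ^ 2)
        = ∑ p, ∑ i, d i * Complex.normSq (∑ q, star (u i q) * x (p, q)) := by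
      calc ∑ i, d i * ∑ p, ‖∑ q, star (u i q) * x (p, q)‖ ^ 2
          = ∑ i, ∑ p, d i * ‖∑ q, star (u i q) * x (p, q)‖ ^ 2 :=
            Finset.sum_congr rfl fun i _ => Finset.mul_sum _ _ _
        _ = ∑ p, ∑ i, d i * ‖∑ q, star (u i q) * x (p, q)‖ ^ 2 := Finset.sum_comm
        _ = _ := by
            refine Finset.sum_congr rfl fun p _ => Finset.sum_congr rfl fun i _ => ?_
            rw [Complex.sq_norm]
    rw [hnc, ← hswap, htdef]
    exact h1
  have hmem : t ^ 2 ∈ {x : ℝ | ∃ σ : Matrix Q Q ℂ, σ.PosSemidef ∧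
      ((1 : Matrix P P ℂ) ⊗ₖ σ - ψ).PosSemidef ∧ x = σ.trace.re} := by
    refine ⟨σ₀, hσ₀, hfeas, ?_⟩
    rw [hs0def, Matrix.trace_smul, htrT, smul_eq_mul, ← Complex.ofReal_mul,
      Complex.ofReal_re, sq]
  have hlb : ∀ y ∈ {x : ℝ | ∃ σ : Matrix Q Q ℂ, σ.PosSemidef ∧
      ((1 : Matrix P P ℂ) ⊗ₖ σ - ψ).PosSemidef ∧ x = σ.trace.re}, t ^ 2 ≤ y := by
    rintro y ⟨σ, hσ, hfe, rfl⟩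
    set g : Q → ℝ := fun i => if d i = 0 then 0 else (d i)⁻¹ with hgdef
    set w : P × Q → ℂ := fun pq =>
      ∑ i, ((g i : ℂ) * star (∑ q, star (M pq.1 q) * u i q)) * u i pq.2 with hwdef
    have hw : ∀ p q, w (p, q)
        = ∑ i, ((g i : ℂ) * star (∑ q'', star (M p q'') * u i q'')) * u i q := by
      intro p q
      simp only [hwdef]
    -- the overlap equals t
    have hcw : (∑ p, ∑ q, star (M p q) * w (p, q)) = ((t : ℝ) : ℂ) := by
      calc ∑ p, ∑ q, star (M p q) * w (p, q)
          = ∑ p, ∑ i, ((g i : ℂ) * star (∑ q'', star (M p q'') * u i q'')) *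
              (∑ q, star (M p q) * u i q) := by
            refine Finset.sum_congr rfl fun p _ => ?_
            calc ∑ q, star (M p q) * w (p, q)
                = ∑ q, ∑ i, ((g i : ℂ) * star (∑ q'', star (M p q'') * u i q'')) *
                    (star (M p q) * u i q) := by
                  refine Finset.sum_congr rfl fun q _ => ?_
                  rw [hw p q, Finset.mul_sum]
                  exact Finset.sum_congr rfl fun i _ => by ring
              _ = ∑ i, ∑ q, ((g i : ℂ) * star (∑ q'', star (M p q'') * u i q'')) *
                    (star (M p q) * u i q) := Finset.sum_comm
              _ = ∑ i, ((g i : ℂ) * star (∑ q'', star (M p q'') * u i q'')) *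
                    (∑ q, star (M p q) * u i q) :=
                  Finset.sum_congr rfl fun i _ => (Finset.mul_sum _ _ _).symm
        _ = ∑ i, (g i : ℂ) * ∑ p, (∑ q, star (M p q) * u i q) *
              star (∑ q, star (M p q) * u i q) := by
            rw [Finset.sum_comm]
            refine Finset.sum_congr rfl fun i _ => ?_
            rw [Finset.mul_sum]
            exact Finset.sum_congr rfl fun p _ => by ring
        _ = ∑ i, (g i : ℂ) * ((d i : ℂ) ^ 2) := by
            refine Finset.sum_congr rfl fun i _ => ?_
            rw [K2 i i, if_pos rfl]
        _ = ((t : ℝ) : ℂ) := by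
            rw [htdef]
            push_cast
            refine Finset.sum_congr rfl fun i _ => ?_
            have hgr : g i * d i ^ 2 = d i := by
              simp only [hgdef]
              by_cases h : d i = 0
              · simp [h]
              · rw [if_neg h, sq, ← mul_assoc, inv_mul_cancel₀ h, one_mul]
            calc (g i : ℂ) * ((d i : ℂ)) ^ 2 = ((g i * d i ^ 2 : ℝ) : ℂ) := by push_cast; ring
              _ = ((d i : ℝ) : ℂ) := by rw [hgr]
    -- the quadratic form is bounded by the trace
    have hQFw : (∑ p, ∑ q, ∑ q', star (w (p, q)) * σ q q' * w (p, q'))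
        = ∑ i, (((if d i = 0 then (0 : ℝ) else 1) : ℂ)) *
            (∑ q, ∑ q', star (u i q) * σ q q' * u i q') := by
      calc ∑ p, ∑ q, ∑ q', star (w (p, q)) * σ q q' * w (p, q')
          = ∑ p, ∑ i, ∑ j, (star ((g i : ℂ) * star (∑ q'', star (M p q'') * u i q'')) *
              ((g j : ℂ) * star (∑ q'', star (M p q'') * u j q''))) *
              (∑ q, ∑ q', star (u i q) * σ q q' * u j q') := by
            refine Finset.sum_congr rfl fun p _ => ?_
            calc ∑ q, ∑ q', star (w (p, q)) * σ q q' * w (p, q')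
                = ∑ q, ∑ q', star (∑ i, ((g i : ℂ) *
                      star (∑ q'', star (M p q'') * u i q'')) * u i q) * σ q q' *
                    (∑ i, ((g i : ℂ) * star (∑ q'', star (M p q'') * u i q'')) * u i q') := by
                  refine Finset.sum_congr rfl fun q _ => Finset.sum_congr rfl fun q' _ => ?_
                  rw [hw p q, hw p q']
              _ = _ := qf_expand σ u _ _
        _ = ∑ i, ∑ j, (∑ p, star ((g i : ℂ) * star (∑ q'', star (M p q'') * u i q'')) *
              ((g j : ℂ) * star (∑ q'', star (M p q'') * u j q''))) *
              (∑ q, ∑ q', star (u i q) * σ q q' * u j q') := by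
            rw [sum_rot3']
            refine Finset.sum_congr rfl fun i _ => Finset.sum_congr rfl fun j _ => ?_
            rw [Finset.sum_mul]
        _ = ∑ i, ∑ j, (((g i : ℂ) * (g j : ℂ)) * (if i = j then ((d i : ℂ)) ^ 2 else 0)) *
              (∑ q, ∑ q', star (u i q) * σ q q' * u j q') := by
            refine Finset.sum_congr rfl fun i _ => Finset.sum_congr rfl fun j _ => ?_
            congr 1
            rw [← K2 i j, Finset.mul_sum]
            refine Finset.sum_congr rfl fun p _ => ?_
            rw [star_mul', star_star, Complex.star_def, Complex.conj_ofReal]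
            ring
        _ = ∑ i, (((g i : ℂ) * (g i : ℂ)) * ((d i : ℂ)) ^ 2) *
              (∑ q, ∑ q', star (u i q) * σ q q' * u i q') := by
            refine Finset.sum_congr rfl fun i _ => ?_
            rw [Finset.sum_eq_single i]
            · rw [if_pos rfl]
            · intro j _ hj
              rw [if_neg fun h => hj h.symm]
              ring
            · intro h
              exact absurd (Finset.mem_univ i) h
        _ = _ := by
            refine Finset.sum_congr rfl fun i _ => ?_
            congr 1
            have hgr : g i * g i * d i ^ 2 = (if d i = 0 then (0 : ℝ) else 1) := by
              simp only [hgdef]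
              by_cases h : d i = 0
              · simp [h]
              · rw [if_neg h, if_neg h, sq]
                field_simp
            calc (g i : ℂ) * (g i : ℂ) * ((d i : ℂ)) ^ 2
                = ((g i * g i * d i ^ 2 : ℝ) : ℂ) := by push_cast; ring
              _ = (((if d i = 0 then (0 : ℝ) else 1) : ℝ) : ℂ) := by rw [hgr]
              _ = ((if d i = 0 then (0 : ℝ) else 1 : ℝ) : ℂ) := rfl
              _ = _ := by by_cases h : d i = 0 <;> simp [h]
    -- each diagonal expectation is nonneg
    have hVpos : ∀ i, 0 ≤ (∑ q, ∑ q', star (u i q) * σ q q' * u i q') := by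
      intro i
      have h := hσ.dotProduct_mulVec_nonneg (u i)
      calc (0 : ℂ) ≤ star (u i) ⬝ᵥ σ *ᵥ u i := h
        _ = ∑ q, ∑ q', star (u i q) * σ q q' * u i q' := by
            simp only [dotProduct, Matrix.mulVec, Pi.star_apply]
            refine Finset.sum_congr rfl fun q _ => ?_
            rw [Finset.mul_sum]
            exact Finset.sum_congr rfl fun q' _ => by ring
    -- the sum of all diagonal expectations is the trace
    have htrσ : (∑ i, ∑ q, ∑ q', star (u i q) * σ q q' * u i q') = σ.trace := by
      calc ∑ i, ∑ q, ∑ q', star (u i q) * σ q q' * u i q'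
          = ∑ q, ∑ q', (∑ i, u i q' * star (u i q)) * σ q q' := by
            rw [sum_rot3']
            refine Finset.sum_congr rfl fun q _ => Finset.sum_congr rfl fun q' _ => ?_
            rw [Finset.sum_mul]
            exact Finset.sum_congr rfl fun i _ => by ring
        _ = ∑ q, ∑ q', (if q' = q then 1 else 0) * σ q q' := by
            refine Finset.sum_congr rfl fun q _ => Finset.sum_congr rfl fun q' _ => by
              rw [F2 q' q]
        _ = ∑ q, σ q q := by
            refine Finset.sum_congr rfl fun q _ => ?_
            simp [Finset.sum_ite_eq' Finset.univ q (fun q' => σ q q')]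
        _ = σ.trace := rfl
    -- put the pieces together
    have h0 := hfe.dotProduct_mulVec_nonneg w
    rw [hquad σ w, hcw, hQFw] at h0
    have h0re := (Complex.le_def.mp h0).1
    simp only [Complex.zero_re, Complex.sub_re, Complex.re_sum] at h0re
    have hstar : (star ((t : ℝ) : ℂ) * ((t : ℝ) : ℂ)).re = t ^ 2 := by
      rw [Complex.star_def, Complex.conj_ofReal, ← Complex.ofReal_mul, Complex.ofReal_re, sq]
    rw [hstar] at h0re
    have hsum_le : (∑ i, (((if d i = 0 then (0 : ℝ) else 1) : ℂ) *
        (∑ q, ∑ q', star (u i q) * σ q q' * u i q')).re) ≤ σ.trace.re := by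
      have hre : ∀ i, 0 ≤ (∑ q, ∑ q', star (u i q) * σ q q' * u i q').re := by
        intro i
        have h := (Complex.le_def.mp (hVpos i)).1
        simpa using h
      calc (∑ i, (((if d i = 0 then (0 : ℝ) else 1) : ℂ) *
            (∑ q, ∑ q', star (u i q) * σ q q' * u i q')).re)
          ≤ ∑ i, (∑ q, ∑ q', star (u i q) * σ q q' * u i q').re := by
            refine Finset.sum_le_sum fun i _ => ?_
            by_cases h : d i = 0
            · simpa [h] using hre i
            · simp [h]
        _ = σ.trace.re := by rw [← htrσ, Complex.re_sum]
    linarith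
  have hfin : sdp ψ = t ^ 2 := by
    unfold sdp
    exact le_antisymm (csInf_le ⟨t ^ 2, fun y hy => hlb y hy⟩ hmem) (le_csInf ⟨t ^ 2, hmem⟩ hlb)
  rw [hfin, htr]
end

section
/- Closed form for the average-state coefficients β_i (Appendix C.1): let n, t, k, α, i be natural numbers with t ≤ n, α + k ≤ n, i ≤ t and i ≤ α. Then, in ℚ, ∑_{j=0}^{k} 2^{−k} * (k.choose j) * ((n−t).choose (j+α−i)) / (n.choose (j+α)) = ((descPochhammer ℚ t).eval (n : ℚ))⁻¹ * ∑_{x=0}^{i} ∑_{y=0}^{t−i} 2^{−(x+y)} * (−1)^y * ((descPochhammer ℚ (x+y)).eval (k : ℚ)) * (i.choose x) * ((t−i).choose y) * ((descPochhammer ℚ (i−x)).eval (α : ℚ)) * ((descPochhammer ℚ (t−i−y)).eval ((n : ℚ) − α − x − y)). -/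
open Finset Polynomial
open scoped Nat

/-- Vandermonde identity for falling factorials. -/
lemma descPoch_add_eval : ∀ (r : ℕ) (a b : ℚ),
    (descPochhammer ℚ r).eval (a + b) =
      ∑ x ∈ Finset.range (r + 1), (r.choose x : ℚ) * (descPochhammer ℚ x).eval a *
        (descPochhammer ℚ (r - x)).eval b := by
  intro r
  induction r with
  | zero => intro a b; simp
  | succ r ih =>
    intro a b
    have split : ∀ z ∈ Finset.range (r + 1),
        ((r+1).choose (z+1) : ℚ) * (descPochhammer ℚ (z+1)).eval a *
          (descPochhammer ℚ (r + 1 - (z+1))).eval b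
        = (r.choose z : ℚ) * (descPochhammer ℚ (z+1)).eval a *
            (descPochhammer ℚ (r - z)).eval b
          + (r.choose (z+1) : ℚ) * (descPochhammer ℚ (z+1)).eval a *
            (descPochhammer ℚ (r - z)).eval b := by
      intro z hz
      have h1 : r + 1 - (z + 1) = r - z := by omega
      rw [h1, Nat.choose_succ_succ]
      push_cast
      ring
    have hB : (∑ z ∈ Finset.range (r + 1), (r.choose (z+1) : ℚ) *
          (descPochhammer ℚ (z+1)).eval a * (descPochhammer ℚ (r - z)).eval b)
          + ((r.choose 0 : ℚ) * (descPochhammer ℚ 0).eval a *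
            (descPochhammer ℚ (r + 1 - 0)).eval b)
        = ∑ x ∈ Finset.range (r + 1), (r.choose x : ℚ) * (descPochhammer ℚ x).eval a *
            (descPochhammer ℚ (r + 1 - x)).eval b := by
      have h0 := Finset.sum_range_succ' (fun x => (r.choose x : ℚ) *
        (descPochhammer ℚ x).eval a * (descPochhammer ℚ (r + 1 - x)).eval b) (r + 1)
      rw [Finset.sum_range_succ (fun x => (r.choose x : ℚ) *
        (descPochhammer ℚ x).eval a * (descPochhammer ℚ (r + 1 - x)).eval b) (r + 1)] at h0
      simp only [Nat.choose_succ_self, Nat.cast_zero, zero_mul] at h0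
      rw [add_zero] at h0
      rw [h0]
      congr 1
      apply Finset.sum_congr rfl
      intro z hz
      have h1 : r + 1 - (z + 1) = r - z := by omega
      rw [h1]
    rw [Finset.sum_range_succ' (fun x => ((r+1).choose x : ℚ) *
      (descPochhammer ℚ x).eval a * (descPochhammer ℚ (r + 1 - x)).eval b) (r + 1)]
    rw [Finset.sum_congr rfl split, Finset.sum_add_distrib]
    have hch0 : ((r+1).choose 0 : ℚ) = (r.choose 0 : ℚ) := by simp
    rw [add_assoc, hch0, hB]
    have key : ∀ z ∈ Finset.range (r + 1),
        (r.choose z : ℚ) * (descPochhammer ℚ (z+1)).eval a *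
            (descPochhammer ℚ (r - z)).eval b
          + (r.choose z : ℚ) * (descPochhammer ℚ z).eval a *
            (descPochhammer ℚ (r + 1 - z)).eval b
        = ((r.choose z : ℚ) * (descPochhammer ℚ z).eval a *
            (descPochhammer ℚ (r - z)).eval b) * (a + b - r) := by
      intro z hz
      have hz' : z ≤ r := by simpa [Nat.lt_succ_iff] using hz
      have h1 : r + 1 - z = (r - z) + 1 := by omega
      have h2 : (descPochhammer ℚ (z+1)).eval a =
          (descPochhammer ℚ z).eval a * (a - z) := descPochhammer_succ_eval z a
      have h3 : (descPochhammer ℚ ((r - z) + 1)).eval b =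
          (descPochhammer ℚ (r - z)).eval b * (b - (r - z : ℕ)) :=
        descPochhammer_succ_eval (r - z) b
      have h4 : ((r - z : ℕ) : ℚ) = (r : ℚ) - z := by
        push_cast [Nat.cast_sub hz']; ring
      rw [h1, h2, h3, h4]
      ring
    rw [← Finset.sum_add_distrib, Finset.sum_congr rfl key, ← Finset.sum_mul, ← ih a b,
      descPochhammer_succ_eval]

lemma descPoch_eval_succ_left (z : ℕ) (m : ℚ) :
    (descPochhammer ℚ (z+1)).eval m = m * (descPochhammer ℚ z).eval (m - 1) := by
  rw [descPochhammer_succ_left]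
  simp [eval_comp]

/-- Shifted alternating Vandermonde for falling factorials. -/
lemma descPoch_sub_eval : ∀ (r : ℕ) (a m : ℚ),
    (descPochhammer ℚ r).eval (a - m) =
      ∑ y ∈ Finset.range (r + 1), (r.choose y : ℚ) * (-1 : ℚ)^y *
        (descPochhammer ℚ y).eval m * (descPochhammer ℚ (r - y)).eval (a - y) := by
  intro r
  induction r with
  | zero => intro a m; simp
  | succ r ih =>
    intro a m
    have split : ∀ z ∈ Finset.range (r + 1),
        ((r+1).choose (z+1) : ℚ) * (-1 : ℚ)^(z+1) * (descPochhammer ℚ (z+1)).eval m *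
          (descPochhammer ℚ (r + 1 - (z+1))).eval (a - (z+1 : ℕ))
        = (r.choose z : ℚ) * (-1 : ℚ)^(z+1) * (descPochhammer ℚ (z+1)).eval m *
            (descPochhammer ℚ (r - z)).eval (a - (z+1 : ℕ))
          + (r.choose (z+1) : ℚ) * (-1 : ℚ)^(z+1) * (descPochhammer ℚ (z+1)).eval m *
            (descPochhammer ℚ (r - z)).eval (a - (z+1 : ℕ)) := by
      intro z hz
      have h1 : r + 1 - (z + 1) = r - z := by omega
      rw [h1, Nat.choose_succ_succ]
      push_cast
      ring
    have hB : (∑ z ∈ Finset.range (r + 1), (r.choose (z+1) : ℚ) * (-1 : ℚ)^(z+1) *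
          (descPochhammer ℚ (z+1)).eval m * (descPochhammer ℚ (r - z)).eval (a - (z+1 : ℕ)))
          + ((r.choose 0 : ℚ) * (-1 : ℚ)^(0:ℕ) * (descPochhammer ℚ 0).eval m *
            (descPochhammer ℚ (r + 1 - 0)).eval (a - (0 : ℕ)))
        = ∑ y ∈ Finset.range (r + 1), (r.choose y : ℚ) * (-1 : ℚ)^y *
            (descPochhammer ℚ y).eval m * (descPochhammer ℚ (r + 1 - y)).eval (a - y) := by
      have h0 := Finset.sum_range_succ' (fun y => (r.choose y : ℚ) * (-1 : ℚ)^y *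
        (descPochhammer ℚ y).eval m * (descPochhammer ℚ (r + 1 - y)).eval (a - y)) (r + 1)
      rw [Finset.sum_range_succ (fun y => (r.choose y : ℚ) * (-1 : ℚ)^y *
        (descPochhammer ℚ y).eval m * (descPochhammer ℚ (r + 1 - y)).eval (a - y)) (r + 1)] at h0
      simp only [Nat.choose_succ_self, Nat.cast_zero, zero_mul] at h0
      rw [add_zero] at h0
      rw [h0]
      congr 1
      apply Finset.sum_congr rfl
      intro z hz
      have h1 : r + 1 - (z + 1) = r - z := by omega
      rw [h1]
    rw [Finset.sum_range_succ' (fun y => ((r+1).choose y : ℚ) * (-1 : ℚ)^y *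
      (descPochhammer ℚ y).eval m * (descPochhammer ℚ (r + 1 - y)).eval (a - y)) (r + 1)]
    rw [Finset.sum_congr rfl split, Finset.sum_add_distrib]
    have hch0 : (((r+1).choose 0 : ℕ) : ℚ) * (-1 : ℚ)^(0:ℕ) * (descPochhammer ℚ 0).eval m *
          (descPochhammer ℚ (r + 1 - 0)).eval (a - (0 : ℕ))
        = ((r.choose 0 : ℕ) : ℚ) * (-1 : ℚ)^(0:ℕ) * (descPochhammer ℚ 0).eval m *
          (descPochhammer ℚ (r + 1 - 0)).eval (a - (0 : ℕ)) := by simp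
    rw [add_assoc, hch0, hB]
    have hA : ∑ z ∈ Finset.range (r + 1), (r.choose z : ℚ) * (-1 : ℚ)^(z+1) *
          (descPochhammer ℚ (z+1)).eval m * (descPochhammer ℚ (r - z)).eval (a - (z+1 : ℕ))
        = -m * ∑ z ∈ Finset.range (r + 1), (r.choose z : ℚ) * (-1 : ℚ)^z *
            (descPochhammer ℚ z).eval (m - 1) * (descPochhammer ℚ (r - z)).eval ((a-1) - z) := by
      rw [Finset.mul_sum]
      apply Finset.sum_congr rfl
      intro z hz
      rw [descPoch_eval_succ_left]
      have h2 : a - ((z+1 : ℕ) : ℚ) = (a - 1) - (z : ℕ) := by push_cast; ring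
      rw [h2]
      ring
    have hC : ∑ y ∈ Finset.range (r + 1), (r.choose y : ℚ) * (-1 : ℚ)^y *
          (descPochhammer ℚ y).eval m * (descPochhammer ℚ (r + 1 - y)).eval (a - y)
        = (∑ y ∈ Finset.range (r + 1), (r.choose y : ℚ) * (-1 : ℚ)^y *
            (descPochhammer ℚ y).eval m * (descPochhammer ℚ (r - y)).eval (a - y)) * (a - r) := by
      rw [Finset.sum_mul]
      apply Finset.sum_congr rfl
      intro y hy
      have hy' : y ≤ r := by simpa [Nat.lt_succ_iff] using hy
      have h1 : r + 1 - y = (r - y) + 1 := by omega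
      rw [h1, descPochhammer_succ_eval]
      have h4 : ((r - y : ℕ) : ℚ) = (r : ℚ) - y := by
        push_cast [Nat.cast_sub hy']; ring
      rw [h4]
      ring
    rw [hA, hC, ← ih, ← ih]
    have : a - 1 - (m - 1) = a - m := by ring
    rw [this, descPochhammer_succ_eval]
    ring

lemma absorb_nat (K x m : ℕ) (h : x + m ≤ K) :
    K.choose (x + m) * (x + m).descFactorial x = K.descFactorial x * (K - x).choose m := by
  have h2 : K.choose (x + m) * (x + m).choose x = K.choose x * (K - x).choose m := by
    have := Nat.choose_mul (n := K) (Nat.le_add_right x m)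
    simpa [Nat.add_sub_cancel_left] using this
  rw [Nat.descFactorial_eq_factorial_mul_choose, Nat.descFactorial_eq_factorial_mul_choose,
    mul_left_comm, h2, mul_assoc]

lemma reindex_sum (K x : ℕ) (hx : x ≤ K) (g : ℕ → ℚ) :
    ∑ j ∈ Finset.range (K + 1), (K.choose j : ℚ) * (j.descFactorial x : ℚ) * g j
      = (K.descFactorial x : ℚ) *
          ∑ m ∈ Finset.range (K - x + 1), ((K - x).choose m : ℚ) * g (x + m) := by
  have hsplit : K + 1 = x + (K - x + 1) := by omega
  rw [hsplit, Finset.sum_range_add]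
  have h1 : ∑ j ∈ Finset.range x, (K.choose j : ℚ) * (j.descFactorial x : ℚ) * g j = 0 := by
    apply Finset.sum_eq_zero
    intro j hj
    have : j.descFactorial x = 0 := Nat.descFactorial_eq_zero_iff_lt.mpr (Finset.mem_range.mp hj)
    rw [this]; simp
  rw [h1, zero_add, Finset.mul_sum]
  apply Finset.sum_congr rfl
  intro m hm
  have hm' : x + m ≤ K := by
    have := Finset.mem_range.mp hm; omega
  have := absorb_nat K x m hm'
  have hc : (K.choose (x + m) : ℚ) * ((x + m).descFactorial x : ℚ)
      = (K.descFactorial x : ℚ) * ((K - x).choose m : ℚ) := by exact_mod_cast congrArg Nat.cast this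
  calc (K.choose (x + m) : ℚ) * ((x + m).descFactorial x : ℚ) * g (x + m)
      = (K.descFactorial x : ℚ) * ((K - x).choose m : ℚ) * g (x + m) := by rw [hc]
    _ = (K.descFactorial x : ℚ) * (((K - x).choose m : ℚ) * g (x + m)) := by ring

lemma sum_choose_descFactorial (K y : ℕ) :
    ∑ m ∈ Finset.range (K + 1), (K.choose m : ℚ) * (m.descFactorial y : ℚ)
      = (K.descFactorial y : ℚ) * 2 ^ (K - y) := by
  by_cases hy : y ≤ K
  · have := reindex_sum K y hy (fun _ => 1)
    simp only [mul_one] at this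
    rw [this]
    congr 1
    have : ∑ m ∈ Finset.range (K - y + 1), ((K - y).choose m) = 2 ^ (K - y) :=
      Nat.sum_range_choose (K - y)
    exact_mod_cast congrArg Nat.cast this
  · have hz : (K.descFactorial y : ℚ) = 0 := by
      rw [Nat.descFactorial_eq_zero_iff_lt.mpr (by omega)]; simp
    rw [hz, zero_mul]
    apply Finset.sum_eq_zero
    intro m hm
    have : m.descFactorial y = 0 :=
      Nat.descFactorial_eq_zero_iff_lt.mpr (by have := Finset.mem_range.mp hm; omega)
    rw [this]; simp

lemma cast_descFactorial_div (J i : ℕ) (h : i ≤ J) :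
    (J.descFactorial i : ℚ) = (J ! : ℚ) / ((J - i)! : ℚ) := by
  rw [eq_div_iff (by exact_mod_cast (J - i).factorial_ne_zero)]
  exact_mod_cast congrArg Nat.cast ((mul_comm _ _).trans (Nat.factorial_mul_descFactorial h))

lemma choose_ratio (n t i J : ℕ) (ht : t ≤ n) (hJn : J ≤ n) (hiJ : i ≤ J) (hit : i ≤ t) :
    ((n - t).choose (J - i) : ℚ) / (n.choose J : ℚ)
      = (J.descFactorial i : ℚ) * ((n - J).descFactorial (t - i) : ℚ) /
          (n.descFactorial t : ℚ) := by
  by_cases hc : J - i ≤ n - t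
  · have h1 : t - i ≤ n - J := by omega
    rw [Nat.cast_choose ℚ hc, Nat.cast_choose ℚ hJn,
      cast_descFactorial_div J i hiJ, cast_descFactorial_div (n - J) (t - i) h1,
      cast_descFactorial_div n t ht]
    have harg : n - t - (J - i) = n - J - (t - i) := by omega
    rw [harg]
    have f0 : ((n)! : ℚ) ≠ 0 := by exact_mod_cast n.factorial_ne_zero
    have f1 : ((n - t)! : ℚ) ≠ 0 := by exact_mod_cast (n - t).factorial_ne_zero
    have f2 : ((J - i)! : ℚ) ≠ 0 := by exact_mod_cast (J - i).factorial_ne_zero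
    have f3 : ((n - J - (t - i))! : ℚ) ≠ 0 := by
      exact_mod_cast (n - J - (t - i)).factorial_ne_zero
    have f4 : ((J)! : ℚ) ≠ 0 := by exact_mod_cast J.factorial_ne_zero
    have f5 : ((n - J)! : ℚ) ≠ 0 := by exact_mod_cast (n - J).factorial_ne_zero
    field_simp
  · have h1 : (n - t).choose (J - i) = 0 := Nat.choose_eq_zero_of_lt (by omega)
    have h2 : (n - J).descFactorial (t - i) = 0 :=
      Nat.descFactorial_eq_zero_iff_lt.mpr (by omega)
    rw [h1, h2]
    simp


/-- **Closed form for the average-state coefficients β_i** (Appendix C.1): the eigenvalue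
`β_i = 2^{-k} ∑_{j=0}^{k} C(k,j) C(n−t, j+α−i)/C(n, j+α)` of the marginal of the average encoded
state of the `(n,k;α)`-`U(1)` random code rewrites as a finite double sum of falling factorials. -/
theorem beta_closed_form (n t k α i : ℕ)
    (ht : t ≤ n) (hαk : α + k ≤ n) (hit : i ≤ t) (hiα : i ≤ α) :
    ∑ j ∈ Finset.range (k + 1),
        (2 : ℚ) ^ (-(k : ℤ)) * (k.choose j : ℚ) * ((n - t).choose (j + α - i) : ℚ) /
          ((n.choose (j + α) : ℕ) : ℚ) =
      ((descPochhammer ℚ t).eval (n : ℚ))⁻¹ *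
        ∑ x ∈ Finset.range (i + 1), ∑ y ∈ Finset.range (t - i + 1),
          (2 : ℚ) ^ (-((x + y : ℕ) : ℤ)) * (-1 : ℚ) ^ y *
            ((descPochhammer ℚ (x + y)).eval (k : ℚ)) *
            (i.choose x : ℚ) * ((t - i).choose y : ℚ) *
            ((descPochhammer ℚ (i - x)).eval (α : ℚ)) *
            ((descPochhammer ℚ (t - i - y)).eval ((n : ℚ) - (α : ℚ) - (x : ℚ) - (y : ℚ))) := by
  have hnt : (descPochhammer ℚ t).eval (n : ℚ) = ((n.descFactorial t : ℕ) : ℚ) :=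
    descPochhammer_eval_eq_descFactorial ℚ n t
  set E : ℕ → ℚ := fun j => (descPochhammer ℚ (t - i)).eval ((n : ℚ) - α - j) with hE
  -- Step 1: rewrite each term of the LHS using the choose ratio
  have step1 : ∀ j ∈ Finset.range (k + 1),
      (2 : ℚ) ^ (-(k : ℤ)) * (k.choose j : ℚ) * ((n - t).choose (j + α - i) : ℚ) /
          ((n.choose (j + α) : ℕ) : ℚ)
      = ((n.descFactorial t : ℚ))⁻¹ *
          ((2 : ℚ) ^ (-(k : ℤ)) * (k.choose j : ℚ) * (((j + α).descFactorial i : ℕ) : ℚ) * E j) := by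
    intro j hj
    have hj' : j ≤ k := by have := Finset.mem_range.mp hj; omega
    have hJn : j + α ≤ n := by omega
    have hiJ : i ≤ j + α := by omega
    have hr := choose_ratio n t i (j + α) ht hJn hiJ hit
    have hiJ' : j + α - i = j + α - i := rfl
    have hEj : E j = (((n - (j + α)).descFactorial (t - i) : ℕ) : ℚ) := by
      show (descPochhammer ℚ (t - i)).eval ((n : ℚ) - α - j) = _
      have hcast : ((n : ℚ) - α - j) = (((n - (j + α)) : ℕ) : ℚ) := by
        push_cast [Nat.cast_sub hJn]; ring
      rw [hcast, descPochhammer_eval_eq_descFactorial]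
    rw [hEj, mul_div_assoc, hr]
    ring
  rw [Finset.sum_congr rfl step1, ← Finset.mul_sum, hnt]
  congr 1
  -- Step 2: expand (j+α) descFactorial i by Vandermonde and swap sums
  have expand : ∀ j : ℕ, (((j + α).descFactorial i : ℕ) : ℚ)
      = ∑ x ∈ Finset.range (i + 1),
          (i.choose x : ℚ) * (j.descFactorial x : ℚ) * (α.descFactorial (i - x) : ℚ) := by
    intro j
    have h := descPoch_add_eval i (j : ℚ) (α : ℚ)
    rw [show ((j : ℚ) + (α : ℚ)) = (((j + α : ℕ)) : ℚ) by push_cast; ring,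
      descPochhammer_eval_eq_descFactorial] at h
    rw [h]
    apply Finset.sum_congr rfl
    intro x hx
    rw [descPochhammer_eval_eq_descFactorial, descPochhammer_eval_eq_descFactorial]
  have step2 : ∑ j ∈ Finset.range (k + 1),
        (2 : ℚ) ^ (-(k : ℤ)) * (k.choose j : ℚ) * (((j + α).descFactorial i : ℕ) : ℚ) * E j
      = ∑ x ∈ Finset.range (i + 1), (i.choose x : ℚ) * (α.descFactorial (i - x) : ℚ) *
          ((2 : ℚ) ^ (-(k : ℤ)) *
            ∑ j ∈ Finset.range (k + 1), (k.choose j : ℚ) * (j.descFactorial x : ℚ) * E j) := by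
    calc ∑ j ∈ Finset.range (k + 1),
          (2 : ℚ) ^ (-(k : ℤ)) * (k.choose j : ℚ) * (((j + α).descFactorial i : ℕ) : ℚ) * E j
        = ∑ j ∈ Finset.range (k + 1), ∑ x ∈ Finset.range (i + 1),
            (i.choose x : ℚ) * (α.descFactorial (i - x) : ℚ) *
              ((2 : ℚ) ^ (-(k : ℤ)) *
                ((k.choose j : ℚ) * (j.descFactorial x : ℚ) * E j)) := by
          apply Finset.sum_congr rfl
          intro j hj
          rw [expand j, Finset.mul_sum, Finset.sum_mul]
          apply Finset.sum_congr rfl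
          intro x hx
          ring
      _ = ∑ x ∈ Finset.range (i + 1), ∑ j ∈ Finset.range (k + 1),
            (i.choose x : ℚ) * (α.descFactorial (i - x) : ℚ) *
              ((2 : ℚ) ^ (-(k : ℤ)) *
                ((k.choose j : ℚ) * (j.descFactorial x : ℚ) * E j)) := Finset.sum_comm
      _ = ∑ x ∈ Finset.range (i + 1), (i.choose x : ℚ) * (α.descFactorial (i - x) : ℚ) *
            ((2 : ℚ) ^ (-(k : ℤ)) *
              ∑ j ∈ Finset.range (k + 1), (k.choose j : ℚ) * (j.descFactorial x : ℚ) * E j) := by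
          apply Finset.sum_congr rfl
          intro x hx
          rw [Finset.mul_sum, Finset.mul_sum]
  rw [step2]
  -- Step 3: the key identity for each x
  have key : ∀ x, x ≤ i → (2 : ℚ) ^ (-(k : ℤ)) *
        ∑ j ∈ Finset.range (k + 1), (k.choose j : ℚ) * (j.descFactorial x : ℚ) * E j
      = ∑ y ∈ Finset.range (t - i + 1),
          (2 : ℚ) ^ (-((x + y : ℕ) : ℤ)) * (-1 : ℚ) ^ y * (k.descFactorial (x + y) : ℚ) *
            ((t - i).choose y : ℚ) *
            (descPochhammer ℚ (t - i - y)).eval ((n : ℚ) - (α : ℚ) - (x : ℚ) - (y : ℚ)) := by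
    intro x hxi
    by_cases hxk : x ≤ k
    · rw [reindex_sum k x hxk E]
      have hswap : ∑ m ∈ Finset.range (k - x + 1), ((k - x).choose m : ℚ) * E (x + m)
          = ∑ y ∈ Finset.range (t - i + 1), ((t - i).choose y : ℚ) * (-1 : ℚ) ^ y *
              (descPochhammer ℚ (t - i - y)).eval (((n : ℚ) - (α : ℚ) - (x : ℚ)) - (y : ℚ)) *
              (((k - x).descFactorial y : ℚ) * 2 ^ (k - x - y)) := by
        calc ∑ m ∈ Finset.range (k - x + 1), ((k - x).choose m : ℚ) * E (x + m)
            = ∑ m ∈ Finset.range (k - x + 1), ∑ y ∈ Finset.range (t - i + 1),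
                ((k - x).choose m : ℚ) * (m.descFactorial y : ℚ) *
                  (((t - i).choose y : ℚ) * (-1 : ℚ) ^ y *
                    (descPochhammer ℚ (t - i - y)).eval
                      (((n : ℚ) - (α : ℚ) - (x : ℚ)) - (y : ℚ))) := by
              apply Finset.sum_congr rfl
              intro m hm
              have hcast : (n : ℚ) - (α : ℚ) - ((x + m : ℕ) : ℚ)
                  = ((n : ℚ) - (α : ℚ) - (x : ℚ)) - (m : ℚ) := by push_cast; ring
              have hEm : E (x + m) = ∑ y ∈ Finset.range (t - i + 1),
                  ((t - i).choose y : ℚ) * (-1 : ℚ) ^ y * (descPochhammer ℚ y).eval (m : ℚ) *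
                    (descPochhammer ℚ (t - i - y)).eval
                      (((n : ℚ) - (α : ℚ) - (x : ℚ)) - (y : ℚ)) := by
                show (descPochhammer ℚ (t - i)).eval ((n : ℚ) - (α : ℚ) - ((x + m : ℕ) : ℚ)) = _
                rw [hcast, descPoch_sub_eval (t - i) ((n : ℚ) - (α : ℚ) - (x : ℚ)) (m : ℚ)]
              rw [hEm, Finset.mul_sum]
              apply Finset.sum_congr rfl
              intro y hy
              rw [descPochhammer_eval_eq_descFactorial]
              ring
          _ = ∑ y ∈ Finset.range (t - i + 1), ∑ m ∈ Finset.range (k - x + 1),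
                ((k - x).choose m : ℚ) * (m.descFactorial y : ℚ) *
                  (((t - i).choose y : ℚ) * (-1 : ℚ) ^ y *
                    (descPochhammer ℚ (t - i - y)).eval
                      (((n : ℚ) - (α : ℚ) - (x : ℚ)) - (y : ℚ))) := Finset.sum_comm
          _ = ∑ y ∈ Finset.range (t - i + 1), ((t - i).choose y : ℚ) * (-1 : ℚ) ^ y *
                (descPochhammer ℚ (t - i - y)).eval
                  (((n : ℚ) - (α : ℚ) - (x : ℚ)) - (y : ℚ)) *
                (((k - x).descFactorial y : ℚ) * 2 ^ (k - x - y)) := by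
              apply Finset.sum_congr rfl
              intro y hy
              rw [← Finset.sum_mul, sum_choose_descFactorial (k - x) y]
              ring
      rw [hswap, Finset.mul_sum, Finset.mul_sum]
      apply Finset.sum_congr rfl
      intro y hy
      by_cases hyk : y ≤ k - x
      · have hd : (k.descFactorial x : ℚ) * ((k - x).descFactorial y : ℚ)
            = (k.descFactorial (x + y) : ℚ) := by
          have := Nat.descFactorial_mul_descFactorial (Nat.le_add_right x y) (n := k)
          rw [Nat.add_sub_cancel_left] at this
          exact_mod_cast congrArg Nat.cast ((mul_comm _ _).trans this)
        have hp : (2 : ℚ) ^ (-(k : ℤ)) * (2 : ℚ) ^ ((k - x - y : ℕ))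
            = (2 : ℚ) ^ (-((x + y : ℕ) : ℤ)) := by
          rw [show ((2 : ℚ) ^ ((k - x - y : ℕ))) = (2 : ℚ) ^ (((k - x - y : ℕ)) : ℤ) from
            (zpow_natCast 2 _).symm, ← zpow_add₀ (by norm_num : (2 : ℚ) ≠ 0)]
          congr 1
          omega
        rw [← hd, ← hp]
        ring
      · have h1 : ((k - x).descFactorial y : ℚ) = 0 := by
          exact_mod_cast congrArg Nat.cast (Nat.descFactorial_eq_zero_iff_lt.mpr (by omega))
        have h2 : (k.descFactorial (x + y) : ℚ) = 0 := by
          exact_mod_cast congrArg Nat.cast (Nat.descFactorial_eq_zero_iff_lt.mpr (by omega))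
        rw [h1, h2]
        ring
    · have hL : ∑ j ∈ Finset.range (k + 1), (k.choose j : ℚ) * (j.descFactorial x : ℚ) * E j
          = 0 := by
        apply Finset.sum_eq_zero
        intro j hj
        have : j.descFactorial x = 0 := Nat.descFactorial_eq_zero_iff_lt.mpr
          (by have := Finset.mem_range.mp hj; omega)
        rw [this]; simp
      rw [hL, mul_zero]
      symm
      apply Finset.sum_eq_zero
      intro y hy
      have : (k.descFactorial (x + y) : ℚ) = 0 := by
        exact_mod_cast congrArg Nat.cast (Nat.descFactorial_eq_zero_iff_lt.mpr (by omega))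
      rw [this]
      ring
  apply Finset.sum_congr rfl
  intro x hx
  rw [key x (by have := Finset.mem_range.mp hx; omega), Finset.mul_sum]
  apply Finset.sum_congr rfl
  intro y hy
  rw [descPochhammer_eval_eq_descFactorial ℚ k (x + y),
    descPochhammer_eval_eq_descFactorial ℚ α (i - x)]
  ring
end
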